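/- arXiv:1603.02497 — 7 statements merged into one kernel-verified Lean document; each statement's English description precedes it below -/
import Mathlib

section
/- Let τ ∈ {-∞} ∪ ℝ, let I = (τ,∞), and let B : I → ℝ^{d×d} be a bounded continuous matrix-valued function. Suppose there exists δ > 0 such that for all t ∈ I and all i: B(t)_{ii} < 0, B(t)_{ij} ≥ 0 for all j ≠ i, and Σ_{j=1}^{d} B(t)_{ij} ≤ -δ (strict row diagonal dominance). Then the system ẋ = B(t)x is exponentially stable: there exist constants K ≥ 1 and γ > 0 such that every differentiable function x : I → ℝ^d satisfying ẋ(t) = B(t)x(t) for all t ∈ I obeys ‖x(t)‖ ≤ K e^{-γ(t-t₀)} ‖x(t₀)‖ for all t ≥ t₀ > τ. -/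
open Set Filter Real

section
variable {d : ℕ}

open Finset in
lemma key_step' {d : ℕ} (A : Matrix (Fin d) (Fin d) ℝ) (w : Fin d → ℝ) {δ C h : ℝ}
    (hC : ∀ i j, |A i j| ≤ C)
    (hoff : ∀ i j, i ≠ j → 0 ≤ A i j) (hrow : ∀ i, ∑ j, A i j ≤ -δ)
    (hh : 0 ≤ h) (hhC : h * C ≤ 1) (hhδ : h * δ ≤ 1) :
    ‖w + h • A.mulVec w‖ ≤ (1 - h * δ) * ‖w‖ := by
  have hM : ∀ j, |w j| ≤ ‖w‖ := fun j => by
    simpa [Real.norm_eq_abs] using norm_le_pi_norm w j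
  have hMn : (0:ℝ) ≤ ‖w‖ := norm_nonneg _
  rw [pi_norm_le_iff_of_nonneg (mul_nonneg (by linarith) hMn)]
  intro i
  have hAii : -C ≤ A i i := neg_le_of_abs_le (hC i i)
  have h1 : (0:ℝ) ≤ 1 + h * A i i := by nlinarith [mul_le_mul_of_nonneg_left hAii hh]
  have hsplit : ∑ j, A i j * w j
      = A i i * w i + ∑ j ∈ Finset.univ.erase i, A i j * w j :=
    (Finset.add_sum_erase Finset.univ (fun j => A i j * w j) (Finset.mem_univ i)).symm
  have hrow' : A i i + ∑ j ∈ Finset.univ.erase i, A i j ≤ -δ := by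
    rw [Finset.add_sum_erase Finset.univ (fun j => A i j) (Finset.mem_univ i)]
    exact hrow i
  have hS : |∑ j ∈ Finset.univ.erase i, A i j * w j|
      ≤ (∑ j ∈ Finset.univ.erase i, A i j) * ‖w‖ := by
    calc |∑ j ∈ Finset.univ.erase i, A i j * w j|
        ≤ ∑ j ∈ Finset.univ.erase i, |A i j * w j| := Finset.abs_sum_le_sum_abs _ _
      _ ≤ ∑ j ∈ Finset.univ.erase i, A i j * ‖w‖ := by
          refine Finset.sum_le_sum fun j hj => ?_
          have hji : j ≠ i := Finset.ne_of_mem_erase hj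
          have h0 : 0 ≤ A i j := hoff i j (Ne.symm hji)
          rw [abs_mul, abs_of_nonneg h0]
          exact mul_le_mul_of_nonneg_left (hM j) h0
      _ = (∑ j ∈ Finset.univ.erase i, A i j) * ‖w‖ := by rw [Finset.sum_mul]
  have hSnn : 0 ≤ ∑ j ∈ Finset.univ.erase i, A i j :=
    Finset.sum_nonneg fun j hj => hoff i j (Ne.symm (Finset.ne_of_mem_erase hj))
  have : ‖(w + h • A.mulVec w) i‖
      = |(1 + h * A i i) * w i + h * ∑ j ∈ Finset.univ.erase i, A i j * w j| := by
    simp only [Pi.add_apply, Pi.smul_apply, Matrix.mulVec, dotProduct,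
      smul_eq_mul, Real.norm_eq_abs]
    rw [hsplit]; ring_nf
  rw [this]
  calc |(1 + h * A i i) * w i + h * ∑ j ∈ Finset.univ.erase i, A i j * w j|
      ≤ |(1 + h * A i i) * w i| + |h * ∑ j ∈ Finset.univ.erase i, A i j * w j| :=
        abs_add_le _ _
    _ ≤ (1 + h * A i i) * ‖w‖ + h * ((∑ j ∈ Finset.univ.erase i, A i j) * ‖w‖) := by
        rw [abs_mul, abs_mul, abs_of_nonneg h1, abs_of_nonneg hh]
        exact add_le_add (mul_le_mul_of_nonneg_left (hM i) h1)
          (mul_le_mul_of_nonneg_left hS hh)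
    _ ≤ (1 - h * δ) * ‖w‖ := by nlinarith [mul_le_mul_of_nonneg_left hrow' hh]

/-- Dini-type slope estimate. -/
lemma slope_est (A : Matrix (Fin d) (Fin d) ℝ) {x : ℝ → Fin d → ℝ} {t δ C r : ℝ}
    (hx : HasDerivAt x (A.mulVec (x t)) t)
    (hδ : 0 < δ) (hC0 : 0 < C)
    (hC : ∀ i j, |A i j| ≤ C)
    (hoff : ∀ i j, i ≠ j → 0 ≤ A i j) (hrow : ∀ i, ∑ j, A i j ≤ -δ)
    (hr : -δ * ‖x t‖ < r) :
    ∀ᶠ z in nhdsWithin t (Ioi t), slope (fun s => ‖x s‖) t z < r := by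
  set M := ‖x t‖ with hM
  set ε : ℝ := (r + δ * M) / 2 with hε
  have hε0 : 0 < ε := by simp only [hε]; linarith
  have hlo := (hasDerivAt_iff_isLittleO.mp hx).def hε0
  have h1 : ∀ᶠ z in nhdsWithin t (Ioi t),
      ‖x z - x t - (z - t) • A.mulVec (x t)‖ ≤ ε * ‖z - t‖ :=
    nhdsWithin_le_nhds hlo
  have h0 : 0 < max C δ := lt_max_of_lt_left hC0
  have h2 : Ioo t (t + (max C δ)⁻¹) ∈ nhdsWithin t (Ioi t) :=
    Ioo_mem_nhdsGT_of_mem ⟨le_rfl, by linarith [inv_pos.mpr h0]⟩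
  filter_upwards [h1, h2] with z hz1 hz2
  obtain ⟨hzt, hzu⟩ := hz2
  set h := z - t with hh
  have hhpos : 0 < h := by simp [hh]; linarith
  have hinvC : (max C δ)⁻¹ ≤ C⁻¹ := inv_anti₀ hC0 (le_max_left _ _)
  have hinvδ : (max C δ)⁻¹ ≤ δ⁻¹ := inv_anti₀ hδ (le_max_right _ _)
  have hlt : h < (max C δ)⁻¹ := by simp [hh]; linarith
  have hhC : h * C ≤ 1 :=
    calc h * C ≤ C⁻¹ * C :=
          mul_le_mul_of_nonneg_right (hlt.le.trans hinvC) hC0.le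
      _ = 1 := inv_mul_cancel₀ (ne_of_gt hC0)
  have hhδ : h * δ ≤ 1 :=
    calc h * δ ≤ δ⁻¹ * δ :=
          mul_le_mul_of_nonneg_right (hlt.le.trans hinvδ) hδ.le
      _ = 1 := inv_mul_cancel₀ (ne_of_gt hδ)
  have hkey := key_step' A (x t) hC hoff hrow (le_of_lt hhpos) hhC hhδ
  have hxz : ‖x z‖ ≤ (1 - h * δ) * M + ε * h := by
    have : ‖x z‖ ≤ ‖x t + h • A.mulVec (x t)‖ + ‖x z - x t - (z - t) • A.mulVec (x t)‖ := by
      have := norm_add_le (x t + h • A.mulVec (x t)) (x z - x t - (z - t) • A.mulVec (x t))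
      simpa [hh] using this.trans_eq' (by congr 1; abel)
    calc ‖x z‖ ≤ ‖x t + h • A.mulVec (x t)‖ + ‖x z - x t - (z - t) • A.mulVec (x t)‖ := this
      _ ≤ (1 - h * δ) * M + ε * ‖z - t‖ := add_le_add hkey hz1
      _ = (1 - h * δ) * M + ε * h := by
          rw [Real.norm_eq_abs, abs_of_pos (by simpa [hh] using hhpos)]
  rw [slope_def_field, div_lt_iff₀ hhpos]
  have hMn : (0:ℝ) ≤ M := norm_nonneg _
  calc ‖x z‖ - ‖x t‖ ≤ (1 - h * δ) * M + ε * h - M := by linarith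
    _ = h * (ε - δ * M) := by ring
    _ < r * h := by
        rw [mul_comm r h]
        apply mul_lt_mul_of_pos_left _ hhpos
        simp only [hε]; linarith

end

/-- Let `τ ∈ {-∞} ∪ ℝ` (modeled as `τ : EReal` with `τ ≠ ⊤`), let `I = (τ,∞)`, and let
`B : I → ℝ^{d×d}` be a bounded continuous matrix-valued function.  Suppose there exists
`δ > 0` such that for all `t ∈ I` and all `i`: `B(t)_{ii} < 0`, `B(t)_{ij} ≥ 0` for `j ≠ i`,
and `∑ j, B(t)_{ij} ≤ -δ`.  Then `ẋ = B(t)x` is exponentially stable: there exist `K ≥ 1`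
and `γ > 0` such that every solution `x` satisfies
`‖x t‖ ≤ K e^{-γ(t-t₀)} ‖x t₀‖` for all `t ≥ t₀ > τ`. -/
theorem stmt_0 (d : ℕ) (τ : EReal) (hτ : τ ≠ ⊤)
    (B : ℝ → Matrix (Fin d) (Fin d) ℝ)
    (hBcont : ContinuousOn B {t : ℝ | τ < (t : EReal)})
    (hBbdd : ∃ C : ℝ, ∀ t : ℝ, τ < (t : EReal) → ∀ i j : Fin d, |B t i j| ≤ C)
    (δ : ℝ) (hδ : 0 < δ)
    (hdiag : ∀ t : ℝ, τ < (t : EReal) → ∀ i : Fin d, B t i i < 0)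
    (hoff : ∀ t : ℝ, τ < (t : EReal) → ∀ i j : Fin d, i ≠ j → 0 ≤ B t i j)
    (hrow : ∀ t : ℝ, τ < (t : EReal) → ∀ i : Fin d, ∑ j, B t i j ≤ -δ) :
    ∃ K γ : ℝ, 1 ≤ K ∧ 0 < γ ∧
      ∀ x : ℝ → (Fin d → ℝ),
        (∀ t : ℝ, τ < (t : EReal) → HasDerivAt x ((B t).mulVec (x t)) t) →
        ∀ t₀ t : ℝ, τ < (t₀ : EReal) → t₀ ≤ t →
          ‖x t‖ ≤ K * Real.exp (-γ * (t - t₀)) * ‖x t₀‖ := by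
  obtain ⟨C, hC⟩ := hBbdd
  set C' : ℝ := max C 1 with hC'def
  have hC'0 : (0:ℝ) < C' := lt_of_lt_of_le one_pos (le_max_right _ _)
  have hC' : ∀ t : ℝ, τ < (t : EReal) → ∀ i j : Fin d, |B t i j| ≤ C' :=
    fun t ht i j => (hC t ht i j).trans (le_max_left _ _)
  refine ⟨1, δ/2, le_rfl, by linarith, ?_⟩
  intro x hx t₀ t ht₀ ht
  have hmem : ∀ s : ℝ, t₀ ≤ s → τ < (s : EReal) :=
    fun s hs => lt_of_lt_of_le ht₀ (EReal.coe_le_coe_iff.mpr hs)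
  have key : ∀ ε : ℝ, 0 < ε →
      ‖x t‖ ≤ (‖x t₀‖ + ε) * Real.exp (-(δ/2) * (t - t₀)) := by
    intro ε hε
    set Bf : ℝ → ℝ := fun z => (‖x t₀‖ + ε) * Real.exp (-(δ/2) * (z - t₀)) with hBf
    have hcoef : (0:ℝ) < ‖x t₀‖ + ε := by positivity
    have hBfpos : ∀ z, 0 < Bf z := fun z => mul_pos hcoef (Real.exp_pos _)
    have hBd : ∀ z, HasDerivAt Bf (-(δ/2) * Bf z) z := by
      intro z
      have h1 : HasDerivAt (fun z : ℝ => -(δ/2) * (z - t₀)) (-(δ/2)) z := by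
        simpa using ((hasDerivAt_id z).sub_const t₀).const_mul (-(δ/2))
      have h2 := (h1.exp).const_mul (‖x t₀‖ + ε)
      convert h2 using 1
      case e'_9 => simp only [Bf]; ring
      all_goals rfl
    have := image_le_of_liminf_slope_right_lt_deriv_boundary
      (f := fun s => ‖x s‖) (f' := fun s => -δ * ‖x s‖) (a := t₀) (b := t)
      (fun s hs => ((hx s (hmem s hs.1)).continuousAt.norm).continuousWithinAt)
      (fun s hs r hr =>
        (slope_est (B s) (hx s (hmem s hs.1)) hδ hC'0 (hC' s (hmem s hs.1))
          (hoff s (hmem s hs.1)) (hrow s (hmem s hs.1)) hr).frequently)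
      (B := Bf) (B' := fun z => -(δ/2) * Bf z)
      (by simp [hBf]; linarith)
      hBd
      (fun s hs heq => by
        have h1 := hBfpos s
        have h2 : ‖x s‖ = Bf s := heq
        show -δ * ‖x s‖ < -(δ/2) * Bf s
        rw [h2]; nlinarith)
    exact this ⟨ht, le_rfl⟩
  have hE1 : Real.exp (-(δ/2) * (t - t₀)) ≤ 1 :=
    Real.exp_le_one_iff.mpr (by nlinarith)
  have hfin : ‖x t‖ ≤ Real.exp (-(δ/2) * (t - t₀)) * ‖x t₀‖ := by
    refine le_of_forall_pos_le_add fun ε hε => ?_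
    have := key ε hε
    nlinarith [Real.exp_pos (-(δ/2) * (t - t₀))]
  calc ‖x t‖ ≤ Real.exp (-(δ/2) * (t - t₀)) * ‖x t₀‖ := hfin
    _ = 1 * Real.exp (-(δ/2) * (t - t₀)) * ‖x t₀‖ := by ring
end

section
/- Let τ ∈ {-∞} ∪ ℝ, let I = (τ,∞), and let B : I → ℝ^{d×d} be a bounded continuous matrix-valued function. Suppose the index set {1,…,d} is partitioned into m consecutive blocks J₁,…,J_m (of sizes d₁,…,d_m with d₁+⋯+d_m = d) such that B(t)_{ij} = 0 whenever i ∈ J_p and j ∈ J_q with p < q (lower block triangular form), and suppose there exists δ > 0 such that for every block J_n, every t ∈ I, and every i ∈ J_n: B(t)_{ii} < 0, B(t)_{ij} ≥ 0 for all j ∈ J_n with j ≠ i, and Σ_{j ∈ J_n} B(t)_{ij} ≤ -δ. Then the system ẋ = B(t)x is exponentially stable: there exist K ≥ 1 and γ > 0 such that every differentiable x : I → ℝ^d with ẋ(t) = B(t)x(t) for all t ∈ I satisfies ‖x(t)‖ ≤ K e^{-γ(t-t₀)} ‖x(t₀)‖ for all t ≥ t₀ > τ. -/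
open Set Filter Topology

lemma pi_exists_norm_eq {d : ℕ} (hd : 0 < d) (f : Fin d → ℝ) : ∃ i, ‖f‖ = |f i| := by
  have hne : (Finset.univ : Finset (Fin d)).Nonempty := ⟨⟨0, hd⟩, Finset.mem_univ _⟩
  obtain ⟨i, -, hi⟩ := Finset.exists_mem_eq_sup Finset.univ hne (fun i => ‖f i‖₊)
  refine ⟨i, ?_⟩
  rw [Pi.norm_def, hi]
  simp [Real.norm_eq_abs]

lemma sup_norm_decay {d : ℕ} (hd : 0 < d) (y v : ℝ → Fin d → ℝ) {a b : ℝ}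
    {γ γ' : ℝ} (hγ0 : 0 ≤ γ) (hγγ' : γ < γ')
    (hy : ∀ t ∈ Set.Icc a b, HasDerivAt y (v t) t)
    (hv : ∀ t ∈ Set.Icc a b, ∀ i, |y t i| = ‖y t‖ → y t i ≠ 0 →
      (SignType.sign (y t i) : ℝ) * v t i ≤ -γ' * ‖y t‖)
    {ε : ℝ} (hε : 0 < ε) :
    ∀ t ∈ Set.Icc a b, ‖y t‖ ≤ (‖y a‖ + ε) * Real.exp (-γ * (t - a)) := by
  set c : ℝ := ‖y a‖ + ε with hc
  have hcpos : 0 < c := by positivity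
  set Bnd : ℝ → ℝ := fun t => c * Real.exp (-γ * (t - a)) with hBnd
  have hBnd' : ∀ t, HasDerivAt Bnd (-γ * Bnd t) t := by
    intro t
    have h1 : HasDerivAt (fun s : ℝ => -γ * (s - a)) (-γ) t := by
      simpa using ((hasDerivAt_id t).sub_const a).const_mul (-γ)
    have h2 := (h1.exp).const_mul c
    refine h2.congr_deriv ?_
    show _ = -γ * (c * Real.exp (-γ * (t - a))); ring
  set f : ℝ → ℝ := fun t => ‖y t‖ with hf
  set f' : ℝ → ℝ := fun t => if ‖y t‖ = 0 then ‖v t‖ else -γ' * ‖y t‖ with hf'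
  have hcont : ContinuousOn f (Icc a b) := fun t ht =>
    ((hy t ht).continuousAt.norm).continuousWithinAt
  have key : ∀ x ∈ Ico a b, ∀ r, f' x < r → ∃ᶠ z in 𝓝[>] x, slope f x z < r := by
    intro x hx r hr
    have hxI : x ∈ Icc a b := Ico_subset_Icc_self hx
    by_cases h0 : ‖y x‖ = 0
    · -- zero case
      have hy0 : y x = 0 := norm_eq_zero.mp h0
      have hfr : f' x = ‖v x‖ := by simp only [f']; rw [if_pos h0]
      rw [hfr] at hr
      have hslope : Tendsto (slope y x) (𝓝[≠] x) (𝓝 (v x)) :=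
        hasDerivAt_iff_tendsto_slope.mp (hy x hxI)
      have hnorm : Tendsto (fun z => ‖slope y x z‖) (𝓝[>] x) (𝓝 ‖v x‖) :=
        (hslope.norm).mono_left (nhdsWithin_mono x (fun z hz => ne_of_gt hz))
      have hev : ∀ᶠ z in 𝓝[>] x, ‖slope y x z‖ < r :=
        hnorm.eventually_lt_const hr
      have heq : ∀ᶠ z in 𝓝[>] x, slope f x z = ‖slope y x z‖ := by
        filter_upwards [self_mem_nhdsWithin] with z hz
        have hzx : (0:ℝ) < z - x := sub_pos.mpr hz
        rw [slope_def_field]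
        show (‖y z‖ - ‖y x‖) / (z - x) = ‖(z - x)⁻¹ • (y z - y x)‖
        rw [h0, hy0, sub_zero, sub_zero, norm_smul]
        simp [abs_of_pos (inv_pos.mpr hzx), Real.norm_eq_abs, div_eq_inv_mul,
          abs_of_pos hzx]
      exact ((hev.and heq).mono (fun z hz => hz.2 ▸ hz.1)).frequently
    · -- nonzero case
      have hfr : f' x = -γ' * ‖y x‖ := by simp only [f']; rw [if_neg h0]
      rw [hfr] at hr
      -- find a frequently-maximizing index
      have hexists : ∃ i, ∃ᶠ z in 𝓝[>] x, ‖y z‖ = |y z i| := by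
        by_contra hcon
        push_neg at hcon
        have hall : ∀ᶠ z in 𝓝[>] x, ∀ i, ‖y z‖ ≠ |y z i| := by
          rw [eventually_all]
          intro i
          exact hcon i
        obtain ⟨z, hz⟩ := hall.exists
        obtain ⟨i, hi⟩ := pi_exists_norm_eq hd (y z)
        exact hz i hi
      obtain ⟨i, hfreq⟩ := hexists
      have hyc : ContinuousAt y x := (hy x hxI).continuousAt
      have hyi : HasDerivAt (fun z => y z i) (v x i) x := hasDerivAt_pi.mp (hy x hxI) i
      have hix : ‖y x‖ = |y x i| := by
        refine tendsto_nhds_unique_of_frequently_eq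
          (hyc.norm.tendsto.mono_left nhdsWithin_le_nhds)
          ((hyi.continuousAt.abs).tendsto.mono_left nhdsWithin_le_nhds) hfreq
      have hne : y x i ≠ 0 := by
        intro h
        rw [h, abs_zero] at hix
        exact h0 hix
      set s : ℝ := (SignType.sign (y x i) : ℝ) with hs
      have habs : HasDerivAt (fun z => |y z i|) (s * v x i) x := by
        exact ((hasDerivAt_abs hne).comp x hyi)
      have hD : s * v x i ≤ -γ' * ‖y x‖ := hv x hxI i hix.symm hne
      have hslope : Tendsto (slope (fun z => |y z i|) x) (𝓝[>] x) (𝓝 (s * v x i)) :=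
        (hasDerivAt_iff_tendsto_slope.mp habs).mono_left
          (nhdsWithin_mono x (fun z hz => ne_of_gt hz))
      have hev : ∀ᶠ z in 𝓝[>] x, slope (fun z => |y z i|) x z < r :=
        hslope.eventually_lt_const (lt_of_le_of_lt hD hr)
      refine (hfreq.and_eventually hev).mono ?_
      rintro z ⟨hz1, hz2⟩
      rw [slope_def_field] at hz2 ⊢
      show (‖y z‖ - ‖y x‖) / (z - x) < r
      rw [hz1, hix]
      exact hz2
  have := image_le_of_liminf_slope_right_lt_deriv_boundary hcont key
    (B := Bnd) (B' := fun t => -γ * Bnd t)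
    (by simp [f, Bnd]; nlinarith [hε]) (fun t => hBnd' t)
    (by
      intro x hx hfx
      have hBpos : 0 < Bnd x := by positivity
      have h0 : ‖y x‖ ≠ 0 := by
        intro h
        rw [show f x = ‖y x‖ from rfl, h] at hfx
        exact absurd hfx.symm (ne_of_gt hBpos)
      have : f' x = -γ' * ‖y x‖ := by simp only [f']; rw [if_neg h0]
      rw [this]
      have hpos : 0 < ‖y x‖ := lt_of_le_of_ne (norm_nonneg _) (Ne.symm h0)
      have : -γ' * ‖y x‖ < -γ * ‖y x‖ := by nlinarith
      calc -γ' * ‖y x‖ < -γ * ‖y x‖ := this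
        _ = -γ * Bnd x := by rw [show f x = ‖y x‖ from rfl] at hfx; rw [hfx]
      )
  exact fun t ht => this ht
/-- Block lower triangular nonautonomous system with strictly row diagonally dominant
diagonal blocks is exponentially stable.  The partition of `{1,…,d}` into `m` consecutive
blocks `J₁,…,J_m` is modeled by a monotone surjective map `π : Fin d → Fin m`; the block
of an index `i` is `π ⁻¹' {π i}`. -/
theorem stmt_1 (d m : ℕ) (τ : EReal) (hτ : τ ≠ ⊤)
    (B : ℝ → Matrix (Fin d) (Fin d) ℝ)
    (hBcont : ContinuousOn B {t : ℝ | τ < (t : EReal)})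
    (hBbdd : ∃ C : ℝ, ∀ t : ℝ, τ < (t : EReal) → ∀ i j : Fin d, |B t i j| ≤ C)
    (π : Fin d → Fin m) (hπmono : Monotone π) (hπsurj : Function.Surjective π)
    (htri : ∀ t : ℝ, τ < (t : EReal) → ∀ i j : Fin d, π i < π j → B t i j = 0)
    (δ : ℝ) (hδ : 0 < δ)
    (hdiag : ∀ t : ℝ, τ < (t : EReal) → ∀ i : Fin d, B t i i < 0)
    (hoff : ∀ t : ℝ, τ < (t : EReal) → ∀ i j : Fin d, i ≠ j → π i = π j → 0 ≤ B t i j)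
    (hrow : ∀ t : ℝ, τ < (t : EReal) → ∀ i : Fin d,
      ∑ j ∈ Finset.univ.filter (fun j => π j = π i), B t i j ≤ -δ) :
    ∃ K γ : ℝ, 1 ≤ K ∧ 0 < γ ∧
      ∀ x : ℝ → (Fin d → ℝ),
        (∀ t : ℝ, τ < (t : EReal) → HasDerivAt x ((B t).mulVec (x t)) t) →
        ∀ t₀ t : ℝ, τ < (t₀ : EReal) → t₀ ≤ t →
          ‖x t‖ ≤ K * Real.exp (-γ * (t - t₀)) * ‖x t₀‖ := by
  rcases Nat.eq_zero_or_pos d with hd | hd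
  · subst hd
    refine ⟨1, 1, le_rfl, one_pos, ?_⟩
    intro x _ t₀ t _ _
    have hx0 : x t = 0 := funext fun i => i.elim0
    rw [hx0, norm_zero]
    positivity
  obtain ⟨C₀, hC₀⟩ := hBbdd
  set C : ℝ := max C₀ 0 with hCdef
  have hC0 : 0 ≤ C := le_max_right _ _
  have hCB : ∀ t : ℝ, τ < (t : EReal) → ∀ i j, |B t i j| ≤ C :=
    fun t ht i j => (hC₀ t ht i j).trans (le_max_left _ _)
  set M : ℝ := 2 * d * C / δ + 1 with hMdef
  have hM1 : 1 ≤ M := by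
    rw [hMdef]
    have : 0 ≤ 2 * d * C / δ := by positivity
    linarith
  have hM0 : 0 < M := lt_of_lt_of_le one_pos hM1
  have hMkey : (d : ℝ) * C / M ≤ δ / 2 := by
    rw [div_le_div_iff₀ hM0 two_pos]
    have hδM : δ * M = 2 * d * C + δ := by
      rw [hMdef, mul_add, mul_one, mul_div_assoc', mul_comm δ, mul_div_assoc, div_self hδ.ne', mul_one]
    nlinarith
  set w : Fin d → ℝ := fun i => M ^ (π i : ℕ) with hwdef
  have hw1 : ∀ i, 1 ≤ w i := fun i => one_le_pow₀ hM1
  have hwpos : ∀ i, 0 < w i := fun i => lt_of_lt_of_le one_pos (hw1 i)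
  have hwle : ∀ i, w i ≤ M ^ m := fun i => pow_le_pow_right₀ hM1 (π i).isLt.le
  have hweq : ∀ i j : Fin d, π j = π i → w j = w i := by
    intro i j h; simp [hwdef, h]
  have hwlt : ∀ i j : Fin d, π j < π i → w j * M ≤ w i := by
    intro i j h
    have h1 : ((π j : ℕ) + 1) ≤ (π i : ℕ) := h
    have : M ^ ((π j : ℕ) + 1) ≤ M ^ (π i : ℕ) := pow_le_pow_right₀ hM1 h1
    simpa [pow_succ] using this
  refine ⟨M ^ m, δ / 4, one_le_pow₀ hM1, by positivity, ?_⟩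
  intro x hx t₀ t ht₀ ht
  have hEpos : 0 < Real.exp (-(δ/4) * (t - t₀)) := Real.exp_pos _
  have hKE : 0 < M ^ m * Real.exp (-(δ/4) * (t - t₀)) := by positivity
  refine le_of_forall_pos_le_add ?_
  intro ε hε
  set ε' : ℝ := ε / (M ^ m * Real.exp (-(δ/4) * (t - t₀))) with hε'def
  have hε'pos : 0 < ε' := by positivity
  set y : ℝ → Fin d → ℝ := fun s i => (w i)⁻¹ * x s i with hydef
  set v : ℝ → Fin d → ℝ := fun s i => (w i)⁻¹ * (B s).mulVec (x s) i with hvdef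
  have hI : ∀ s ∈ Set.Icc t₀ t, τ < (s : EReal) := fun s hs =>
    lt_of_lt_of_le ht₀ (EReal.coe_le_coe_iff.mpr hs.1)
  have hyd : ∀ s ∈ Set.Icc t₀ t, HasDerivAt y (v s) s := by
    intro s hs
    exact hasDerivAt_pi.mpr fun i => (hasDerivAt_pi.mp (hx s (hI s hs)) i).const_mul _
  have hxy : ∀ s (j : Fin d), x s j = w j * y s j := by
    intro s j
    simp only [hydef]
    field_simp
    exact (mul_div_cancel_right₀ _ (hwpos j).ne').symm
  have hyle : ∀ s (j : Fin d), |y s j| ≤ ‖y s‖ := fun s j => by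
    simpa [Real.norm_eq_abs] using norm_le_pi_norm (y s) j
  have hvkey : ∀ s ∈ Set.Icc t₀ t, ∀ i, |y s i| = ‖y s‖ → y s i ≠ 0 →
      (SignType.sign (y s i) : ℝ) * v s i ≤ -(δ/2) * ‖y s‖ := by
    intro s hs i hmax hne
    have hsτ := hI s hs
    set g : ℝ := ‖y s‖ with hgdef
    have hg0 : 0 ≤ g := norm_nonneg _
    set sg : ℝ := (SignType.sign (y s i) : ℝ) with hsgdef
    have hsg1 : |sg| = 1 := by
      rcases lt_or_gt_of_ne hne with h | h
      · simp [hsgdef, sign_neg h]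
      · simp [hsgdef, sign_pos h]
    have hsgy : sg * y s i = |y s i| := by
      rcases lt_or_gt_of_ne hne with h | h
      · simp [hsgdef, sign_neg h, abs_of_neg h]
      · simp [hsgdef, sign_pos h, abs_of_pos h]
    set term : Fin d → ℝ := fun j => sg * ((w i)⁻¹ * (B s i j * x s j)) with htermdef
    have hexp : sg * v s i = ∑ j, term j := by
      simp only [hvdef, Matrix.mulVec, dotProduct]
      rw [Finset.mul_sum, Finset.mul_sum]
    set S : Finset (Fin d) := Finset.univ.filter (fun j => π j = π i) with hSdef
    have hiS : i ∈ S := by simp [hSdef]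
    -- same-block bound
    have hsame : ∀ j ∈ S, term j ≤ B s i j * g := by
      intro j hj
      have hπj : π j = π i := by simpa [hSdef] using hj
      have hwji : w j = w i := hweq i j hπj
      have htj : term j = B s i j * (sg * y s j) := by
        rw [htermdef]
        simp only
        rw [hxy s j, hwji]
        field_simp
        rw [show sg * w i * B s i j * y s j / w i = sg * B s i j * y s j * (w i / w i) by ring, div_self (hwpos i).ne', mul_one]
      rw [htj]
      rcases eq_or_ne j i with rfl | hji
      · rw [hsgy, hmax]
      · have hB0 : 0 ≤ B s i j := hoff s hsτ i j (Ne.symm hji) hπj.symm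
        have : sg * y s j ≤ g := by
          calc sg * y s j ≤ |sg * y s j| := le_abs_self _
            _ = |y s j| := by rw [abs_mul, hsg1, one_mul]
            _ ≤ g := hyle s j
        exact mul_le_mul_of_nonneg_left this hB0
    have hsum1 : ∑ j ∈ S, term j ≤ -δ * g := by
      calc ∑ j ∈ S, term j ≤ ∑ j ∈ S, B s i j * g := Finset.sum_le_sum hsame
        _ = (∑ j ∈ S, B s i j) * g := by rw [Finset.sum_mul]
        _ ≤ -δ * g := mul_le_mul_of_nonneg_right (hrow s hsτ i) hg0
    -- off-block bound
    have hoffb : ∀ j ∈ Sᶜ, term j ≤ C / M * g := by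
      intro j hj
      have hπj : π j ≠ π i := by simpa [hSdef] using hj
      rcases lt_or_gt_of_ne hπj with hlt | hgt
      · -- π j < π i
        have hratio : w j * (w i)⁻¹ ≤ M⁻¹ := by
          rw [← div_eq_mul_inv, ← one_div, div_le_div_iff₀ (hwpos i) hM0]
          linarith [hwlt i j hlt]
        have habs : |term j| = |B s i j| * (w j * (w i)⁻¹) * |y s j| := by
          rw [htermdef]
          simp only
          rw [hxy s j, abs_mul, hsg1, one_mul, abs_mul, abs_mul, abs_mul,
            abs_of_pos (inv_pos.mpr (hwpos i)), abs_of_pos (hwpos j)]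
          ring
        calc term j ≤ |term j| := le_abs_self _
          _ = |B s i j| * (w j * (w i)⁻¹) * |y s j| := habs
          _ ≤ C * M⁻¹ * g := by
              apply mul_le_mul _ (hyle s j) (abs_nonneg _) (by positivity)
              exact mul_le_mul (hCB s hsτ i j) hratio (by positivity) hC0
          _ = C / M * g := by rw [div_eq_mul_inv]
      · -- π i < π j
        have : B s i j = 0 := htri s hsτ i j hgt
        rw [htermdef]
        simp only [this]
        simp
        positivity
    have hsum2 : ∑ j ∈ Sᶜ, term j ≤ δ / 2 * g := by
      calc ∑ j ∈ Sᶜ, term j ≤ (Sᶜ.card : ℝ) * (C / M * g) := by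
            simpa using Finset.sum_le_card_nsmul Sᶜ term (C / M * g) hoffb
        _ ≤ (d : ℝ) * (C / M * g) := by
            apply mul_le_mul_of_nonneg_right _ (by positivity)
            have hcard : Sᶜ.card ≤ d := by simpa using Finset.card_le_univ Sᶜ
            exact_mod_cast hcard
        _ = ((d : ℝ) * C / M) * g := by ring
        _ ≤ δ / 2 * g := mul_le_mul_of_nonneg_right hMkey hg0
    have hsplit : ∑ j, term j = ∑ j ∈ S, term j + ∑ j ∈ Sᶜ, term j :=
      (Finset.sum_add_sum_compl S term).symm
    rw [hexp, hsplit]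
    have : -δ * g + δ / 2 * g = -(δ/2) * g := by ring
    linarith [hsum1, hsum2]
  have hdecay := sup_norm_decay hd y v (γ := δ/4) (γ' := δ/2)
    (by positivity) (by linarith) hyd hvkey hε'pos t ⟨ht, le_rfl⟩
  have hxt : ‖x t‖ ≤ M ^ m * ‖y t‖ := by
    refine (pi_norm_le_iff_of_nonneg (by positivity)).mpr fun i => ?_
    rw [Real.norm_eq_abs, hxy t i, abs_mul, abs_of_pos (hwpos i)]
    exact mul_le_mul (hwle i) (hyle t i) (abs_nonneg _) (by positivity)
  have hyt₀ : ‖y t₀‖ ≤ ‖x t₀‖ := by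
    refine (pi_norm_le_iff_of_nonneg (norm_nonneg _)).mpr fun i => ?_
    rw [Real.norm_eq_abs]
    have h1 : |y t₀ i| = (w i)⁻¹ * |x t₀ i| := by
      simp [hydef, abs_mul, abs_of_pos (inv_pos.mpr (hwpos i))]
    rw [h1]
    calc (w i)⁻¹ * |x t₀ i| ≤ 1 * |x t₀ i| :=
          mul_le_mul_of_nonneg_right (inv_le_one_of_one_le₀ (hw1 i)) (abs_nonneg _)
      _ = |x t₀ i| := one_mul _
      _ ≤ ‖x t₀‖ := by simpa [Real.norm_eq_abs] using norm_le_pi_norm (x t₀) i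
  have hE0 : Real.exp (-(δ/4) * (t - t₀)) ≠ 0 := ne_of_gt hEpos
  calc ‖x t‖ ≤ M ^ m * ‖y t‖ := hxt
    _ ≤ M ^ m * ((‖y t₀‖ + ε') * Real.exp (-(δ/4) * (t - t₀))) := by
        apply mul_le_mul_of_nonneg_left _ (by positivity)
        exact hdecay
    _ ≤ M ^ m * ((‖x t₀‖ + ε') * Real.exp (-(δ/4) * (t - t₀))) := by
        apply mul_le_mul_of_nonneg_left _ (by positivity)
        exact mul_le_mul_of_nonneg_right (by linarith [hyt₀]) (le_of_lt hEpos)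
    _ = M ^ m * Real.exp (-(δ/4) * (t - t₀)) * ‖x t₀‖ + ε := by
        rw [hε'def]
        field_simp
end

section
/- Let I ⊆ ℝ be an open interval, let B : I → ℝ^{d×d} and s : I → ℝ^d be continuous, let t₀ ∈ I and x₀ ∈ ℝ^d, and let Φ : I × I → ℝ^{d×d} be the transition operator of ẋ = B(t)x, i.e., for each u ∈ I the function t ↦ Φ(t,u) is differentiable with ∂_t Φ(t,u) = B(t)Φ(t,u) and Φ(u,u) = Id. Then the function φ(t) := Φ(t,t₀)x₀ + ∫_{t₀}^{t} Φ(t,u)s(u) du is differentiable on I, satisfies φ(t₀) = x₀, and solves the inhomogeneous equation φ'(t) = B(t)φ(t) + s(t) for all t ∈ I. -/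
open Set


section
variable {d : ℕ} {I : Set ℝ} {B : ℝ → Matrix (Fin d) (Fin d) ℝ}
  {Φ : ℝ → ℝ → Matrix (Fin d) (Fin d) ℝ}

lemma mulVec_coord (A : Matrix (Fin d) (Fin d) ℝ) (c : Fin d → ℝ) (i : Fin d) :
    A.mulVec c i = ∑ j, A i j * c j := by
  simp [Matrix.mulVec, dotProduct]

lemma col_deriv
    (hΦderiv : ∀ u ∈ I, ∀ t ∈ I, ∀ i j : Fin d,
      HasDerivAt (fun t' => Φ t' u i j) ((B t * Φ t u) i j) t)
    {u : ℝ} (hu : u ∈ I) {t : ℝ} (ht : t ∈ I) (c : Fin d → ℝ) :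
    HasDerivAt (fun t' => (Φ t' u).mulVec c) ((B t).mulVec ((Φ t u).mulVec c)) t := by
  rw [Matrix.mulVec_mulVec]
  refine hasDerivAt_pi.2 fun i => ?_
  simp only [mulVec_coord]
  exact HasDerivAt.fun_sum fun j _ => (hΦderiv u hu t ht i j).mul_const (c j)

lemma lin_ODE_unique (hIconn : I.OrdConnected) (hBcont : ContinuousOn B I)
    {f g : ℝ → Fin d → ℝ} {a : ℝ} (ha : a ∈ I)
    (hf : ∀ t ∈ I, HasDerivAt f ((B t).mulVec (f t)) t)
    (hg : ∀ t ∈ I, HasDerivAt g ((B t).mulVec (g t)) t)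
    (hfg : f a = g a) : ∀ t ∈ I, f t = g t := by
  intro t ht
  have hJI : uIcc a t ⊆ I := hIconn.uIcc_subset ha ht
  set L : Matrix (Fin d) (Fin d) ℝ ≃ₗ[ℝ] ((Fin d → ℝ) →L[ℝ] (Fin d → ℝ)) :=
    Matrix.toLin'.trans LinearMap.toContinuousLinearMap with hL
  have hLcont : Continuous L := LinearMap.continuous_of_finiteDimensional L.toLinearMap
  have hLapp : ∀ (M : Matrix (Fin d) (Fin d) ℝ) (x : Fin d → ℝ), L M x = M.mulVec x := by
    intro M x
    simp [hL, Matrix.toLin'_apply]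
  obtain ⟨u₀, hu₀, hmax⟩ := isCompact_uIcc.exists_isMaxOn nonempty_uIcc
    ((hLcont.comp_continuousOn (hBcont.mono hJI)).norm)
  set K : NNReal := ‖L (B u₀)‖₊ with hK
  set p : ℝ → ℝ := fun u => min (max u (min a t)) (max a t) with hp
  have hpmem : ∀ u, p u ∈ uIcc a t := by
    intro u
    constructor
    · exact le_min (le_max_right _ _) min_le_max
    · exact min_le_right _ _
  have hpid : ∀ u ∈ uIcc a t, p u = u := by
    intro u hu
    have h1 : max u (min a t) = u := max_eq_left hu.1
    rw [hp]; simp only [h1]; exact min_eq_left hu.2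
  set v : ℝ → (Fin d → ℝ) → (Fin d → ℝ) := fun u x => L (B (p u)) x with hv
  have hvlip : ∀ u, LipschitzOnWith K (v u) univ := by
    intro u
    refine ((L (B (p u))).lipschitz.weaken ?_).lipschitzOnWith
    have := hmax (hpmem u)
    rwa [← NNReal.coe_le_coe, coe_nnnorm, coe_nnnorm]
  have hveq : ∀ u ∈ uIcc a t, ∀ x, v u x = (B u).mulVec x := by
    intro u hu x
    rw [hv]; simp only [hpid u hu, hLapp]
  have hcontf : ContinuousOn f (uIcc a t) :=
    fun x hx => ((hf x (hJI hx)).continuousAt).continuousWithinAt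
  have hcontg : ContinuousOn g (uIcc a t) :=
    fun x hx => ((hg x (hJI hx)).continuousAt).continuousWithinAt
  rcases le_total a t with hle | hle
  · rw [uIcc_of_le hle] at hJI hveq hcontf hcontg
    refine ODE_solution_unique_of_mem_Icc_right (s := fun _ => univ) (fun u _ => hvlip u)
      hcontf ?_ (fun _ _ => mem_univ _) hcontg ?_ (fun _ _ => mem_univ _) hfg
      (right_mem_Icc.2 hle)
    · intro u hu
      rw [hveq u (Ico_subset_Icc_self hu)]
      exact (hf u (hJI (Ico_subset_Icc_self hu))).hasDerivWithinAt
    · intro u hu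
      rw [hveq u (Ico_subset_Icc_self hu)]
      exact (hg u (hJI (Ico_subset_Icc_self hu))).hasDerivWithinAt
  · rw [uIcc_of_ge hle] at hJI hveq hcontf hcontg
    refine ODE_solution_unique_of_mem_Icc_left (s := fun _ => univ) (fun u _ => hvlip u)
      hcontf ?_ (fun _ _ => mem_univ _) hcontg ?_ (fun _ _ => mem_univ _) hfg
      (left_mem_Icc.2 hle)
    · intro u hu
      rw [hveq u (Ioc_subset_Icc_self hu)]
      exact (hf u (hJI (Ioc_subset_Icc_self hu))).hasDerivWithinAt
    · intro u hu
      rw [hveq u (Ioc_subset_Icc_self hu)]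
      exact (hg u (hJI (Ioc_subset_Icc_self hu))).hasDerivWithinAt

lemma grp (hIconn : I.OrdConnected) (hBcont : ContinuousOn B I)
    (hΦderiv : ∀ u ∈ I, ∀ t ∈ I, ∀ i j : Fin d,
      HasDerivAt (fun t' => Φ t' u i j) ((B t * Φ t u) i j) t)
    (hΦid : ∀ u ∈ I, Φ u u = 1)
    {w : ℝ} (hw : w ∈ I) {u : ℝ} (hu : u ∈ I) {t : ℝ} (ht : t ∈ I) :
    Φ t u = Φ t w * Φ w u := by
  ext i j
  have key : ∀ t' ∈ I, (fun i => Φ t' u i j) =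
      (fun t'' => (Φ t'' w).mulVec (fun i => Φ w u i j)) t' := by
    refine lin_ODE_unique hIconn hBcont hw ?_ ?_ ?_
    · intro t' ht'
      refine hasDerivAt_pi.2 fun i => ?_
      have := hΦderiv u hu t' ht' i j
      exact this
    · intro t' ht'
      exact col_deriv hΦderiv hw ht' _
    · simp [hΦid w hw, Matrix.one_mulVec]
  have := congrFun (key t ht) i
  simpa [mulVec_coord, Matrix.mul_apply] using this

end
section
variable {d : ℕ} {I : Set ℝ} {B : ℝ → Matrix (Fin d) (Fin d) ℝ}
  {Φ : ℝ → ℝ → Matrix (Fin d) (Fin d) ℝ}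

lemma phi_cont_snd
    (hIopen : IsOpen I)
    (hΦderiv : ∀ u ∈ I, ∀ t ∈ I, ∀ i j : Fin d,
      HasDerivAt (fun t' => Φ t' u i j) ((B t * Φ t u) i j) t)
    (hinv : ∀ u ∈ I, Φ u t₀ * Φ t₀ u = 1)
    (ht₀ : t₀ ∈ I) {u : ℝ} (hu : u ∈ I) :
    ContinuousAt (fun u' => Φ t₀ u') u := by
  have hA_at : ContinuousAt (fun u' => Φ u' t₀) u := by
    refine continuousAt_pi.2 fun i => continuousAt_pi.2 fun j => ?_
    exact (hΦderiv t₀ ht₀ u hu i j).continuousAt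
  have hdet : ContinuousAt (fun u' => (Φ u' t₀).det) u :=
    ((continuous_id.matrix_det).continuousAt).comp hA_at
  have hadj : ContinuousAt (fun u' => (Φ u' t₀).adjugate) u :=
    ((continuous_id.matrix_adjugate).continuousAt).comp hA_at
  have hdetne : (Φ u t₀).det ≠ 0 :=
    (Matrix.isUnit_det_of_right_inverse (hinv u hu)).ne_zero
  have hi : ContinuousAt (fun u' => (Φ u' t₀)⁻¹) u := by
    have h2 : ContinuousAt (fun u' => ((Φ u' t₀).det)⁻¹ • (Φ u' t₀).adjugate) u :=
      (hdet.inv₀ hdetne).smul hadj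
    simp only [Matrix.inv_def, Ring.inverse_eq_inv']
    exact h2
  refine hi.congr ?_
  filter_upwards [hIopen.mem_nhds hu] with u' hu'
  exact Matrix.inv_eq_right_inv (hinv u' hu')
end



/-- variation of constants.
Let `I ⊆ ℝ` be an open interval, `B`, `s` continuous on `I`, `t₀ ∈ I`, `x₀ ∈ ℝ^d`, and let
`Φ` be the transition operator of `ẋ = B(t)x`, i.e. `∂_t Φ(t,u) = B(t)Φ(t,u)` (entrywise)
and `Φ(u,u) = Id` for `u ∈ I`.  Then `φ(t) = Φ(t,t₀)x₀ + ∫_{t₀}^t Φ(t,u)s(u) du` satisfies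
`φ(t₀) = x₀` and is differentiable with `φ'(t) = B(t)φ(t) + s(t)` on `I`. -/
theorem stmt_3 (d : ℕ) (I : Set ℝ) (hIopen : IsOpen I) (hIconn : I.OrdConnected)
    (B : ℝ → Matrix (Fin d) (Fin d) ℝ) (s : ℝ → (Fin d → ℝ))
    (hBcont : ContinuousOn B I) (hscont : ContinuousOn s I)
    (t₀ : ℝ) (ht₀ : t₀ ∈ I) (x₀ : Fin d → ℝ)
    (Φ : ℝ → ℝ → Matrix (Fin d) (Fin d) ℝ)
    (hΦderiv : ∀ u ∈ I, ∀ t ∈ I, ∀ i j : Fin d,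
      HasDerivAt (fun t' => Φ t' u i j) ((B t * Φ t u) i j) t)
    (hΦid : ∀ u ∈ I, Φ u u = 1)
    (φ : ℝ → (Fin d → ℝ))
    (hφdef : ∀ t : ℝ,
      φ t = (Φ t t₀).mulVec x₀ + ∫ u in t₀..t, (Φ t u).mulVec (s u)) :
    φ t₀ = x₀ ∧ ∀ t ∈ I, HasDerivAt φ ((B t).mulVec (φ t) + s t) t := by
  have hgrp : ∀ u ∈ I, ∀ t ∈ I, Φ t u = Φ t t₀ * Φ t₀ u := fun u hu t ht =>
    grp hIconn hBcont hΦderiv hΦid ht₀ hu ht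
  have hinv : ∀ u ∈ I, Φ u t₀ * Φ t₀ u = 1 := by
    intro u hu
    rw [← hgrp u hu u hu, hΦid u hu]
  -- the integrand with frozen first slot
  set h : ℝ → (Fin d → ℝ) := fun u => (Φ t₀ u).mulVec (s u) with hh
  have hhcontAt : ∀ u ∈ I, ContinuousAt h u := by
    intro u hu
    have h1 : ContinuousAt (fun u' => Φ t₀ u') u :=
      phi_cont_snd hIopen hΦderiv hinv ht₀ hu
    have h2 : ContinuousAt s u := (hscont u hu).continuousAt (hIopen.mem_nhds hu)
    have h3 : Continuous fun p : Matrix (Fin d) (Fin d) ℝ × (Fin d → ℝ) =>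
        p.1.mulVec p.2 := by
      exact continuous_fst.matrix_mulVec continuous_snd
    exact h3.continuousAt.comp (h1.prodMk h2)
  have hhint : ∀ t ∈ I, IntervalIntegrable h MeasureTheory.volume t₀ t := by
    intro t ht
    refine ContinuousOn.intervalIntegrable fun u hu => ?_
    exact (hhcontAt u (hIconn.uIcc_subset ht₀ ht hu)).continuousWithinAt
  set g : ℝ → (Fin d → ℝ) := fun t => x₀ + ∫ u in t₀..t, h u with hg
  have hgderiv : ∀ t ∈ I, HasDerivAt g (h t) t := by
    intro t ht
    have hd : HasDerivAt (fun t' => ∫ u in t₀..t', h u) (h t) t := by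
      refine intervalIntegral.integral_hasDerivAt_right (hhint t ht) ?_ (hhcontAt t ht)
      exact ContinuousAt.stronglyMeasurableAtFilter hIopen
        (fun u hu => hhcontAt u hu) t ht
    exact (hd.const_add x₀)
  -- φ = Φ(·,t₀) ⬝ g on I
  have hψ : ∀ t ∈ I, φ t = (Φ t t₀).mulVec (g t) := by
    intro t ht
    rw [hφdef t, hg]
    have hcongr : ∫ u in t₀..t, (Φ t u).mulVec (s u) = ∫ u in t₀..t, (Φ t t₀).mulVec (h u) := by
      refine intervalIntegral.integral_congr fun u hu => ?_
      have huI : u ∈ I := hIconn.uIcc_subset ht₀ ht hu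
      rw [hh]
      simp only [Matrix.mulVec_mulVec, ← hgrp u huI t ht]
    set L : Matrix (Fin d) (Fin d) ℝ ≃ₗ[ℝ] ((Fin d → ℝ) →L[ℝ] (Fin d → ℝ)) :=
      Matrix.toLin'.trans LinearMap.toContinuousLinearMap with hL
    have hLapp : ∀ (M : Matrix (Fin d) (Fin d) ℝ) (x : Fin d → ℝ), L M x = M.mulVec x := by
      intro M x
      simp [hL, Matrix.toLin'_apply]
    have hpull : ∫ u in t₀..t, (Φ t t₀).mulVec (h u)
        = (Φ t t₀).mulVec (∫ u in t₀..t, h u) := by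
      have := (L (Φ t t₀)).intervalIntegral_comp_comm (hhint t ht)
      simpa only [hLapp] using this
    rw [hcongr, hpull, Matrix.mulVec_add]
  -- the candidate derivative function
  have hmain : ∀ t ∈ I,
      HasDerivAt (fun t' => (Φ t' t₀).mulVec (g t'))
        ((B t).mulVec ((Φ t t₀).mulVec (g t)) + s t) t := by
    intro t ht
    have hgd := hasDerivAt_pi.1 (hgderiv t ht)
    refine hasDerivAt_pi.2 fun i => ?_
    have hsum : HasDerivAt (fun t' => ∑ j, Φ t' t₀ i j * g t' j)
        (∑ j, ((B t * Φ t t₀) i j * g t j + Φ t t₀ i j * h t j)) t :=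
      HasDerivAt.fun_sum fun j _ => (hΦderiv t₀ ht₀ t ht i j).mul (hgd j)
    have heq : (∑ j, ((B t * Φ t t₀) i j * g t j + Φ t t₀ i j * h t j))
        = ((B t).mulVec ((Φ t t₀).mulVec (g t)) + s t) i := by
      rw [Finset.sum_add_distrib]
      have e1 : ∑ j, (B t * Φ t t₀) i j * g t j = (B t).mulVec ((Φ t t₀).mulVec (g t)) i := by
        rw [Matrix.mulVec_mulVec]; simp [mulVec_coord]
      have e2 : ∑ j, Φ t t₀ i j * h t j = s t i := by
        have : (Φ t t₀).mulVec (h t) = s t := by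
          rw [hh, Matrix.mulVec_mulVec, hinv t ht, Matrix.one_mulVec]
        rw [← this]; simp [mulVec_coord]
      rw [e1, e2]; rfl
    rw [← heq]
    exact hsum
  constructor
  · rw [hφdef t₀]
    simp [hΦid t₀ ht₀, Matrix.one_mulVec]
  · intro t ht
    have hd := hmain t ht
    have hev : φ =ᶠ[nhds t] fun t' => (Φ t' t₀).mulVec (g t') := by
      filter_upwards [hIopen.mem_nhds ht] with t' ht'
      exact hψ t' ht'
    have := hd.congr_of_eventuallyEq hev
    rwa [← hψ t ht] at this
end

section
/- Let B : ℝ → ℝ^{d×d} and s : ℝ → ℝ^d be bounded continuous functions, and suppose there exist K ≥ 1 and γ > 0 such that every solution x of ẋ = B(t)x satisfies ‖x(t)‖ ≤ K e^{-γ(t-t₀)} ‖x(t₀)‖ for all t ≥ t₀. Then the inhomogeneous system ẋ = B(t)x + s(t) has exactly one bounded solution ν : ℝ → ℝ^d, i.e., there exists a differentiable bounded ν with ν'(t) = B(t)ν(t) + s(t) for all t ∈ ℝ, and any other bounded solution coincides with ν. -/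
open Set MeasureTheory

section LinearODE
variable {E : Type*} [NormedAddCommGroup E] [NormedSpace ℝ E] [CompleteSpace E]

lemma linODE_local (f : ℝ → E → E) (L S : ℝ) (hL : 0 < L) (hS : 0 ≤ S)
    (hlip : ∀ t, LipschitzWith (Real.toNNReal L) (f t))
    (hcont : ∀ x, Continuous fun t => f t x)
    (hb0 : ∀ t, ‖f t 0‖ ≤ S)
    (t₀ : ℝ) (v : E) :
    ∃ x : ℝ → E, x t₀ = v ∧ ∀ t ∈ Icc (t₀ - (2*L)⁻¹) (t₀ + (2*L)⁻¹),
      HasDerivWithinAt x (f t (x t)) (Icc (t₀ - (2*L)⁻¹) (t₀ + (2*L)⁻¹)) t := by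
  have hLc : (Real.toNNReal L : ℝ) = L := Real.coe_toNNReal _ hL.le
  have h2Lp : (0:ℝ) < (2*L)⁻¹ := inv_pos.mpr (by linarith)
  have ht₀ : t₀ ∈ Icc (t₀ - (2*L)⁻¹) (t₀ + (2*L)⁻¹) := ⟨by linarith, by linarith⟩
  have hR : ((Real.toNNReal (‖v‖ + S/L) : NNReal) : ℝ) = ‖v‖ + S/L :=
    Real.coe_toNNReal _ (by positivity)
  have hC : ((Real.toNNReal (2*L*‖v‖ + 2*S) : NNReal) : ℝ) = 2*L*‖v‖ + 2*S :=
    Real.coe_toNNReal _ (by positivity)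
  have hpl : IsPicardLindelof f (⟨t₀, ht₀⟩ : Icc (t₀ - (2*L)⁻¹) (t₀ + (2*L)⁻¹)) v
      (Real.toNNReal (‖v‖ + S/L)) 0 (Real.toNNReal (2*L*‖v‖ + 2*S)) (Real.toNNReal L) := by
    constructor
    · exact fun t _ => (hlip t).lipschitzOnWith
    · exact fun x _ => (hcont x).continuousOn
    · intro t _ x hx
      rw [hR] at hx
      rw [hC]
      have h1 : ‖x - v‖ ≤ ‖v‖ + S/L := by
        simpa [dist_eq_norm] using Metric.mem_closedBall.mp hx
      have h2 : ‖x‖ ≤ 2*‖v‖ + S/L := by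
        have := norm_sub_norm_le x v
        linarith
      have h3 : dist (f t x) (f t 0) ≤ L * dist x 0 := by
        simpa [hLc] using (hlip t).dist_le_mul x 0
      have h4 : ‖f t x‖ ≤ ‖f t x - f t 0‖ + ‖f t 0‖ := by
        simpa using norm_add_le (f t x - f t 0) (f t 0)
      rw [dist_eq_norm, dist_eq_norm, sub_zero] at h3
      have h5 : L * ‖x‖ ≤ L * (2*‖v‖ + S/L) := by nlinarith
      have h6 : L * (S/L) = S := by field_simp
      have := hb0 t
      nlinarith
    · rw [hR, hC]
      have : max ((t₀ + (2*L)⁻¹) - t₀) (t₀ - (t₀ - (2*L)⁻¹)) = (2*L)⁻¹ := by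
        simp
      simp only [NNReal.coe_zero, sub_zero]
      rw [this]
      have h2L : (2*L) ≠ 0 := by positivity
      field_simp
      ring_nf
      nlinarith [mul_pos hL hL]
  obtain ⟨x, hx0, hx⟩ := hpl.exists_eq_forall_mem_Icc_hasDerivWithinAt₀
  exact ⟨x, hx0, hx⟩

lemma glue_sol (f : ℝ → E → E) {a b c : ℝ} (hab : a ≤ b) (hbc : b ≤ c)
    (x y : ℝ → E) (hxy : x b = y b)
    (hx : ∀ t ∈ Icc a b, HasDerivWithinAt x (f t (x t)) (Icc a b) t)
    (hy : ∀ t ∈ Icc b c, HasDerivWithinAt y (f t (y t)) (Icc b c) t) :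
    ∃ w : ℝ → E, (∀ t ∈ Icc a b, w t = x t) ∧ (∀ t ∈ Icc b c, w t = y t) ∧
      ∀ t ∈ Icc a c, HasDerivWithinAt w (f t (w t)) (Icc a c) t := by
  classical
  set w : ℝ → E := fun t => if t ≤ b then x t else y t with hw
  have hwx : ∀ t ∈ Icc a b, w t = x t := fun t ht => if_pos ht.2
  have hwy : ∀ t ∈ Icc b c, w t = y t := by
    intro t ht
    by_cases h : t ≤ b
    · have : t = b := le_antisymm h ht.1
      simp [w, h, this, hxy]
    · simp [w, h]
  refine ⟨w, hwx, hwy, ?_⟩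
  intro t ht
  have h1 : HasDerivWithinAt w (f t (w t)) (Icc a b) t := by
    by_cases htb : t ∈ Icc a b
    · rw [hwx t htb]
      exact (hx t htb).congr (fun u hu => hwx u hu) (hwx t htb)
    · exact HasFDerivWithinAt.of_notMem_closure (by rwa [closure_Icc])
  have h2 : HasDerivWithinAt w (f t (w t)) (Icc b c) t := by
    by_cases htb : t ∈ Icc b c
    · rw [hwy t htb]
      exact (hy t htb).congr (fun u hu => hwy u hu) (hwy t htb)
    · exact HasFDerivWithinAt.of_notMem_closure (by rwa [closure_Icc])
  have := h1.union h2
  rwa [Icc_union_Icc_eq_Icc hab hbc] at this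

lemma linODE_Icc (f : ℝ → E → E) (L S : ℝ) (hL : 0 < L) (hS : 0 ≤ S)
    (hlip : ∀ t, LipschitzWith (Real.toNNReal L) (f t))
    (hcont : ∀ x, Continuous fun t => f t x)
    (hb0 : ∀ t, ‖f t 0‖ ≤ S)
    (t₀ : ℝ) (v : E) (n : ℕ) :
    ∃ x : ℝ → E, x t₀ = v ∧ ∀ t ∈ Icc (t₀ - n*(2*L)⁻¹) (t₀ + n*(2*L)⁻¹),
      HasDerivWithinAt x (f t (x t)) (Icc (t₀ - n*(2*L)⁻¹) (t₀ + n*(2*L)⁻¹)) t := by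
  set h : ℝ := (2*L)⁻¹ with hh
  have hhpos : 0 < h := by positivity
  induction n with
  | zero =>
    refine ⟨fun _ => v, rfl, ?_⟩
    intro t ht
    simp only [Nat.cast_zero, zero_mul, sub_zero, add_zero] at ht ⊢
    rw [Icc_self] at ht ⊢
    refine HasFDerivWithinAt.of_not_accPt ?_; rw [accPt_principal_iff_nhdsWithin, Filter.not_neBot]
    have : ({t₀} : Set ℝ) \ {t} = ∅ := by
      rcases ht with rfl
      simp
    rw [this, nhdsWithin_empty]
  | succ n ih =>
    obtain ⟨x, hx0, hx⟩ := ih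
    set a : ℝ := t₀ - n*h with ha
    set b : ℝ := t₀ + n*h with hb
    have hnh : 0 ≤ n*h := by positivity
    have hab : a ≤ b := by simp only [ha, hb]; linarith
    obtain ⟨y, hy0, hy⟩ := linODE_local f L S hL hS hlip hcont hb0 b (x b)
    obtain ⟨z, hz0, hz⟩ := linODE_local f L S hL hS hlip hcont hb0 a (x a)
    rw [← hh] at hy hz
    have hy' : ∀ t ∈ Icc b (b+h), HasDerivWithinAt y (f t (y t)) (Icc b (b+h)) t :=
      fun t ht => (hy t ⟨by linarith [ht.1], ht.2⟩).mono (Icc_subset_Icc (by linarith) le_rfl)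
    have hz' : ∀ t ∈ Icc (a-h) a, HasDerivWithinAt z (f t (z t)) (Icc (a-h) a) t :=
      fun t ht => (hz t ⟨ht.1, by linarith [ht.2]⟩).mono (Icc_subset_Icc le_rfl (by linarith))
    obtain ⟨w1, hw1z, hw1x, hw1⟩ := glue_sol f (by linarith : a - h ≤ a) hab z x hz0 hz' hx
    have hw1b : w1 b = y b := by rw [hw1x b ⟨hab, le_rfl⟩, hy0]
    obtain ⟨w, hwl, hwr, hwd⟩ := glue_sol f (by linarith : a - h ≤ b) (by linarith : b ≤ b + h)
      w1 y hw1b hw1 hy'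
    have hcast : (↑(n+1) : ℝ) * h = n*h + h := by push_cast; ring
    have he1 : t₀ - ↑(n+1)*h = a - h := by rw [hcast]; simp [ha]; ring
    have he2 : t₀ + ↑(n+1)*h = b + h := by rw [hcast]; simp [hb]; ring
    refine ⟨w, ?_, ?_⟩
    · have ht₀m : t₀ ∈ Icc (a-h) b := ⟨by simp [ha]; linarith, by simp [hb]; linarith⟩
      rw [hwl t₀ ht₀m, hw1x t₀ ⟨by simp [ha]; linarith, by simp [hb]; linarith⟩, hx0]
    · rw [he1, he2]; exact hwd

/-- uniqueness of two Icc-solutions agreeing at interior point t₀ -/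
lemma linODE_unique_Icc (f : ℝ → E → E) (L : ℝ) (hL : 0 < L)
    (hlip : ∀ t, LipschitzWith (Real.toNNReal L) (f t))
    {a b t₀ : ℝ} (ha : a ≤ t₀) (hb : t₀ ≤ b)
    {x y : ℝ → E}
    (hx : ∀ t ∈ Icc a b, HasDerivWithinAt x (f t (x t)) (Icc a b) t)
    (hy : ∀ t ∈ Icc a b, HasDerivWithinAt y (f t (y t)) (Icc a b) t)
    (heq : x t₀ = y t₀) : EqOn x y (Icc a b) := by
  have hmemIci : ∀ t ∈ Ico t₀ b, Icc a b ∈ nhdsWithin t (Ici t) := by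
    intro t ht
    refine mem_nhdsWithin.mpr ⟨Iio b, isOpen_Iio, ht.2, ?_⟩
    rintro u ⟨hu1, hu2⟩
    exact ⟨le_trans ha (le_trans ht.1 hu2), le_of_lt hu1⟩
  have hmemIic : ∀ t ∈ Ioc a t₀, Icc a b ∈ nhdsWithin t (Iic t) := by
    intro t ht
    refine mem_nhdsWithin.mpr ⟨Ioi a, isOpen_Ioi, ht.1, ?_⟩
    rintro u ⟨hu1, hu2⟩
    exact ⟨le_of_lt hu1, le_trans hu2 (le_trans ht.2 hb)⟩
  have hcx : ContinuousOn x (Icc a b) := fun t ht => (hx t ht).continuousWithinAt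
  have hcy : ContinuousOn y (Icc a b) := fun t ht => (hy t ht).continuousWithinAt
  have hsub1 : Icc t₀ b ⊆ Icc a b := Icc_subset_Icc ha le_rfl
  have hsub2 : Icc a t₀ ⊆ Icc a b := Icc_subset_Icc le_rfl hb
  have hright : EqOn x y (Icc t₀ b) := by
    apply ODE_solution_unique (K := Real.toNNReal L) hlip (hcx.mono hsub1)
      (fun t ht => (hx t (hsub1 (Ico_subset_Icc_self ht))).mono_of_mem_nhdsWithin
        (hmemIci t ht))
      (hcy.mono hsub1)
      (fun t ht => (hy t (hsub1 (Ico_subset_Icc_self ht))).mono_of_mem_nhdsWithin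
        (hmemIci t ht)) heq
  have hleft : EqOn x y (Icc a t₀) := by
    apply ODE_solution_unique_of_mem_Icc_left (K := Real.toNNReal L) (s := fun _ => univ)
      (fun t _ => (hlip t).lipschitzOnWith) (hcx.mono hsub2)
      (fun t ht => (hx t (hsub2 (Ioc_subset_Icc_self ht))).mono_of_mem_nhdsWithin
        (hmemIic t ht))
      (fun _ _ => trivial)
      (hcy.mono hsub2)
      (fun t ht => (hy t (hsub2 (Ioc_subset_Icc_self ht))).mono_of_mem_nhdsWithin
        (hmemIic t ht))
      (fun _ _ => trivial) heq
  intro t ht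
  rcases le_total t t₀ with h | h
  · exact hleft ⟨ht.1, h⟩
  · exact hright ⟨h, ht.2⟩

lemma linODE_global (f : ℝ → E → E) (L S : ℝ) (hL : 0 < L) (hS : 0 ≤ S)
    (hlip : ∀ t, LipschitzWith (Real.toNNReal L) (f t))
    (hcont : ∀ x, Continuous fun t => f t x)
    (hb0 : ∀ t, ‖f t 0‖ ≤ S)
    (t₀ : ℝ) (v : E) :
    ∃ x : ℝ → E, x t₀ = v ∧ ∀ t, HasDerivAt x (f t (x t)) t := by
  classical
  set h : ℝ := (2*L)⁻¹ with hh
  have hhpos : 0 < h := by positivity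
  choose X hX0 hX using fun n => linODE_Icc f L S hL hS hlip hcont hb0 t₀ v n
  have agree : ∀ m n : ℕ, m ≤ n → EqOn (X m) (X n) (Icc (t₀ - m*h) (t₀ + m*h)) := by
    intro m n hmn
    have hc : (m:ℝ) ≤ n := Nat.cast_le.mpr hmn
    have hsub : Icc (t₀ - m*h) (t₀ + m*h) ⊆ Icc (t₀ - n*h) (t₀ + n*h) := by
      apply Icc_subset_Icc <;> nlinarith [hhpos.le, (Nat.cast_nonneg m : (0:ℝ) ≤ m)]
    have hmh : (0:ℝ) ≤ m*h := by positivity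
    simp only [← hh] at hX
    exact linODE_unique_Icc f L hL hlip (a := t₀ - m*h) (b := t₀ + m*h) (t₀ := t₀)
      (by linarith) (by linarith)
      (hX m) (fun t ht => (hX n t (hsub ht)).mono hsub) (by rw [hX0 m, hX0 n])
  have agree2 : ∀ m n : ℕ, ∀ t : ℝ, t ∈ Icc (t₀ - m*h) (t₀ + m*h) →
      t ∈ Icc (t₀ - n*h) (t₀ + n*h) → X m t = X n t := by
    intro m n t htm htn
    rcases le_total m n with hmn | hnm
    · exact agree m n hmn htm
    · exact (agree n m hnm htn).symm
  set N : ℝ → ℕ := fun t => Nat.ceil (|t - t₀| / h) + 1 with hN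
  have hmemself : ∀ t : ℝ, t ∈ Icc (t₀ - (N t)*h) (t₀ + (N t)*h) := by
    intro t
    have h1 : |t - t₀| / h ≤ Nat.ceil (|t - t₀| / h) := Nat.le_ceil _
    have h2 : |t - t₀| ≤ (N t) * h := by
      rw [hN]
      push_cast
      rw [div_le_iff₀ hhpos] at h1
      nlinarith
    rw [abs_sub_le_iff] at h2
    constructor <;> linarith [h2.1, h2.2]
  refine ⟨fun t => X (N t) t, ?_, ?_⟩
  · have := hmemself t₀
    exact hX0 (N t₀)
  · intro t
    obtain ⟨M, hM⟩ := exists_nat_gt ((|t - t₀| + 1) / h)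
    have hMh : |t - t₀| + 1 < M * h := by
      rw [div_lt_iff₀ hhpos] at hM
      linarith
    have hmem : ∀ u ∈ Ioo (t-1) (t+1), u ∈ Icc (t₀ - M*h) (t₀ + M*h) := by
      intro u hu
      have : |u - t₀| ≤ |t - t₀| + 1 := by
        have := abs_sub_abs_le_abs_sub (u - t₀) (t - t₀)
        have h2 : |u - t| ≤ 1 := by
          rw [abs_sub_le_iff]; constructor <;> [linarith [hu.2]; linarith [hu.1]]
        have h3 : |(u - t₀) - (t - t₀)| = |u - t| := by ring_nf
        calc |u - t₀| ≤ |t - t₀| + |(u - t₀) - (t - t₀)| := by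
              linarith [abs_sub_le (u - t₀) (t - t₀) 0, abs_sub_comm (u - t₀) (t - t₀)]
          _ ≤ |t - t₀| + 1 := by rw [h3]; linarith
      rw [abs_sub_le_iff] at this
      constructor <;> linarith [this.1, this.2, hMh]
    have heqM : ∀ u ∈ Ioo (t-1) (t+1), X (N u) u = X M u := by
      intro u hu
      exact agree2 (N u) M u (hmemself u) (hmem u hu)
    have htmem : t ∈ Ioo (t-1) (t+1) := by constructor <;> linarith
    have hdM : HasDerivAt (X M) (f t (X M t)) t := by
      refine (hX M t (hmem t htmem)).hasDerivAt (Icc_mem_nhds ?_ ?_)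
      · have := (abs_lt.mp (by linarith [abs_nonneg (t - t₀)] : |t - t₀| < M*h)).1; linarith
      · have := (abs_lt.mp (by linarith [abs_nonneg (t - t₀)] : |t - t₀| < M*h)).2; linarith
    have hev : (fun u => X (N u) u) =ᶠ[nhds t] X M := by
      filter_upwards [Ioo_mem_nhds htmem.1 htmem.2] with u hu using heqM u hu
    have := hdM.congr_of_eventuallyEq hev
    have h3 : X (N t) t = X M t := heqM t htmem
    simpa [h3] using this

lemma linODE_unique_global (f : ℝ → E → E) (L : ℝ) (hL : 0 < L)
    (hlip : ∀ t, LipschitzWith (Real.toNNReal L) (f t))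
    {x y : ℝ → E} (hx : ∀ t, HasDerivAt x (f t (x t)) t)
    (hy : ∀ t, HasDerivAt y (f t (y t)) t) {t₀ : ℝ} (heq : x t₀ = y t₀) (t : ℝ) :
    x t = y t := by
  have ht₀ : t₀ ∈ Ioo (min t t₀ - 1) (max t t₀ + 1) :=
    ⟨by have := min_le_right t t₀; linarith, by have := le_max_right t t₀; linarith⟩
  have := ODE_solution_unique_of_mem_Icc (K := Real.toNNReal L) (s := fun _ => univ)
    (fun u _ => (hlip u).lipschitzOnWith) ht₀
    (fun u _ => (hx u).continuousAt.continuousWithinAt)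
    (fun u _ => hx u) (fun _ _ => trivial)
    (fun u _ => (hy u).continuousAt.continuousWithinAt)
    (fun u _ => hy u) (fun _ _ => trivial) heq
  exact this ⟨by have := min_le_left t t₀; linarith, by have := le_max_left t t₀; linarith⟩

end LinearODE

lemma pipi_entry_le {d : ℕ} (A : Fin d → Fin d → ℝ) (i j : Fin d) : |A i j| ≤ ‖A‖ :=
  le_trans (by simpa using norm_le_pi_norm (A i) j) (norm_le_pi_norm A i)

lemma vec_entry_le {d : ℕ} (w : Fin d → ℝ) (i : Fin d) : |w i| ≤ ‖w‖ := by
  simpa using norm_le_pi_norm w i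

lemma mulVec_norm_le {d : ℕ} (M : Matrix (Fin d) (Fin d) ℝ) (c : ℝ) (hc : 0 ≤ c)
    (hM : ∀ i j, |M i j| ≤ c) (w : Fin d → ℝ) :
    ‖M.mulVec w‖ ≤ (d * c) * ‖w‖ := by
  rw [pi_norm_le_iff_of_nonneg (by positivity)]
  intro i
  show ‖∑ j, M i j * w j‖ ≤ _
  calc ‖∑ j, M i j * w j‖ ≤ ∑ j, ‖M i j * w j‖ := norm_sum_le _ _
    _ ≤ ∑ _j : Fin d, c * ‖w‖ := by
        refine Finset.sum_le_sum fun j _ => ?_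
        rw [Real.norm_eq_abs, abs_mul]
        exact mul_le_mul (hM i j) (vec_entry_le w j) (abs_nonneg _) hc
    _ = d * c * ‖w‖ := by simp [Finset.sum_const]; ring

lemma integrableOn_exp_mul_Iic' (γ c : ℝ) (hγ : 0 < γ) :
    IntegrableOn (fun τ => Real.exp (γ*τ)) (Set.Iic c) := by
  have h1 : IntegrableOn (fun x => Real.exp (-γ*x)) (Set.Ioi (-c)) :=
    exp_neg_integrableOn_Ioi (-c) hγ
  have h2 := (MeasurePreserving.integrableOn_comp_preimage
    (Measure.measurePreserving_neg (volume : Measure ℝ))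
    (Homeomorph.neg ℝ).measurableEmbedding).2 h1
  have h3 : ((fun x => Real.exp (-γ*x)) ∘ Neg.neg) = fun τ => Real.exp (γ*τ) := by
    funext τ; simp [Function.comp]
  have h4 : (Neg.neg ⁻¹' (Set.Ioi (-c)) : Set ℝ) = Set.Iio c := by
    ext τ; simp [neg_lt, lt_neg]
  rw [h3, h4] at h2
  rw [integrableOn_Iic_iff_integrableOn_Iio]
  exact h2

lemma integral_exp_mul_Iic' (γ c : ℝ) (hγ : 0 < γ) :
    ∫ τ in Set.Iic c, Real.exp (γ*τ) = Real.exp (γ*c)/γ := by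
  have e1 : ∫ τ in Set.Iic c, Real.exp (γ*τ)
      = ∫ τ in Set.Iic c, (fun x => Real.exp (-(γ*x))) (-τ) := by
    congr 1; funext τ; simp
  rw [e1, integral_comp_neg_Iic c (fun x => Real.exp (-(γ*x)))]
  have h5 := integral_comp_mul_left_Ioi (fun u => Real.exp (-u)) (-c) hγ
  beta_reduce at h5
  rw [h5, integral_exp_neg_Ioi, smul_eq_mul, show -(γ*(-c)) = γ*c by ring]
  ring


/-- If `B`, `s` are bounded continuous on `ℝ` and `ẋ = B(t)x` is exponentially stable, then
`ẋ = B(t)x + s(t)` has exactly one bounded solution `ν : ℝ → ℝ^d`. -/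
theorem stmt_4 (d : ℕ)
    (B : ℝ → Matrix (Fin d) (Fin d) ℝ) (s : ℝ → (Fin d → ℝ))
    (hBcont : Continuous B)
    (hBbdd : ∃ C : ℝ, ∀ t : ℝ, ∀ i j : Fin d, |B t i j| ≤ C)
    (hscont : Continuous s)
    (hsbdd : ∃ C : ℝ, ∀ t : ℝ, ‖s t‖ ≤ C)
    (K γ : ℝ) (hK : 1 ≤ K) (hγ : 0 < γ)
    (hstab : ∀ x : ℝ → (Fin d → ℝ),
      (∀ t : ℝ, HasDerivAt x ((B t).mulVec (x t)) t) →
      ∀ t₀ t : ℝ, t₀ ≤ t → ‖x t‖ ≤ K * Real.exp (-γ * (t - t₀)) * ‖x t₀‖) :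
    ∃! ν : ℝ → (Fin d → ℝ),
      (∀ t : ℝ, HasDerivAt ν ((B t).mulVec (ν t) + s t) t) ∧
        Bornology.IsBounded (Set.range ν) := by
  classical
  obtain ⟨CB0, hCB0⟩ := hBbdd
  obtain ⟨Ss0, hSs0⟩ := hsbdd
  set CB : ℝ := max CB0 0 with hCBdef
  have hCB : ∀ t i j, |B t i j| ≤ CB := fun t i j => le_trans (hCB0 t i j) (le_max_left _ _)
  have hCBnn : (0:ℝ) ≤ CB := le_max_right _ _
  set Ss : ℝ := max Ss0 0 with hSsdef
  have hSs : ∀ t, ‖s t‖ ≤ Ss := fun t => le_trans (hSs0 t) (le_max_left _ _)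
  have hSsnn : (0:ℝ) ≤ Ss := le_max_right _ _
  set L : ℝ := d * CB + 1 with hLdef
  have hL : (0:ℝ) < L := by positivity
  have hLc : (Real.toNNReal L : ℝ) = L := Real.coe_toNNReal _ hL.le
  have hBe : ∀ (i j : Fin d), Continuous fun t => B t i j := fun i j =>
    (continuous_apply j).comp ((continuous_apply i).comp hBcont)
  have hmv : ∀ (t : ℝ) (w : Fin d → ℝ), ‖(B t).mulVec w‖ ≤ L * ‖w‖ := by
    intro t w
    refine le_trans (mulVec_norm_le (B t) CB hCBnn (hCB t) w) ?_
    have : (0:ℝ) ≤ ‖w‖ := norm_nonneg w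
    nlinarith
  have hlipH : ∀ t, LipschitzWith (Real.toNNReal L) (fun x => (B t).mulVec x) := by
    intro t
    apply LipschitzWith.of_dist_le_mul
    intro x y
    rw [dist_eq_norm, dist_eq_norm, hLc, ← Matrix.mulVec_sub]
    exact hmv t (x - y)
  have hcontH : ∀ x : Fin d → ℝ, Continuous fun t => (B t).mulVec x := by
    intro x
    apply continuous_pi; intro i
    show Continuous fun t => ∑ j, B t i j * x j
    exact continuous_finset_sum _ fun j _ => (hBe i j).mul continuous_const
  have hom : ∀ (t₁ : ℝ) (w : Fin d → ℝ), ∃ x : ℝ → Fin d → ℝ, x t₁ = w ∧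
      ∀ t, HasDerivAt x ((B t).mulVec (x t)) t := by
    intro t₁ w
    exact linODE_global _ L 0 hL le_rfl hlipH hcontH
      (fun t => by simp [Matrix.mulVec_zero]) t₁ w
  -- fundamental matrix Φ
  choose sol hsol0 hsolD using fun j : Fin d => hom 0 (Pi.single j 1)
  set Φ : ℝ → Matrix (Fin d) (Fin d) ℝ := fun t => Matrix.of fun i j => sol j t i with hΦdef
  have hΦ0 : ∀ w, (Φ 0).mulVec w = w := by
    intro w; funext i
    show ∑ j, sol j 0 i * w j = w i
    simp only [hsol0]
    simp [Pi.single_apply]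
  have hΦe : ∀ (i j : Fin d) (t : ℝ),
      HasDerivAt (fun t => Φ t i j) (((B t).mulVec (sol j t)) i) t := by
    intro i j t
    exact hasDerivAt_pi.mp (hsolD j t) i
  have hΦmul : ∀ (w : Fin d → ℝ) (t : ℝ),
      HasDerivAt (fun r => (Φ r).mulVec w) ((B t).mulVec ((Φ t).mulVec w)) t := by
    intro w t
    rw [hasDerivAt_pi]
    intro i
    have hsum : HasDerivAt (fun r => ∑ j, Φ r i j * w j)
        (∑ j, ((B t).mulVec (sol j t)) i * w j) t :=
      HasDerivAt.fun_sum fun j _ => (hΦe i j t).mul_const (w j)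
    have heq : (∑ j, ((B t).mulVec (sol j t)) i * w j)
        = ((B t).mulVec ((Φ t).mulVec w)) i := by
      show ∑ j, (∑ k, B t i k * sol j t k) * w j = ∑ k, B t i k * ∑ j, Φ t k j * w j
      simp only [Finset.sum_mul, Finset.mul_sum]
      rw [Finset.sum_comm]
      refine Finset.sum_congr rfl fun k _ => Finset.sum_congr rfl fun j _ => ?_
      show B t i k * sol j t k * w j = B t i k * (Φ t k j * w j)
      have h : Φ t k j = sol j t k := rfl
      rw [h]; ring
    rw [heq] at hsum
    exact hsum
  -- the inverse fundamental matrix Ψ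
  set fΨ : ℝ → (Fin d → Fin d → ℝ) → (Fin d → Fin d → ℝ) :=
    fun t M => fun i k => -∑ j, M i j * B t j k with hfΨdef
  have hlipΨ : ∀ t, LipschitzWith (Real.toNNReal L) (fΨ t) := by
    intro t
    apply LipschitzWith.of_dist_le_mul
    intro M M'
    rw [dist_eq_norm, dist_eq_norm, hLc]
    have hnn : (0:ℝ) ≤ L * ‖M - M'‖ := by positivity
    rw [pi_norm_le_iff_of_nonneg hnn]
    intro i
    rw [pi_norm_le_iff_of_nonneg hnn]
    intro k
    show ‖(-∑ j, M i j * B t j k) - (-∑ j, M' i j * B t j k)‖ ≤ L * ‖M - M'‖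
    have h1 : (-∑ j, M i j * B t j k) - (-∑ j, M' i j * B t j k)
        = ∑ j, (M' i j - M i j) * B t j k := by
      rw [neg_sub_neg, ← Finset.sum_sub_distrib]
      refine Finset.sum_congr rfl fun j _ => ?_
      ring
    rw [h1]
    calc ‖∑ j, (M' i j - M i j) * B t j k‖ ≤ ∑ j, ‖(M' i j - M i j) * B t j k‖ :=
          norm_sum_le _ _
      _ ≤ ∑ _j : Fin d, ‖M - M'‖ * CB := by
          refine Finset.sum_le_sum fun j _ => ?_
          rw [Real.norm_eq_abs, abs_mul]
          refine mul_le_mul ?_ (hCB t j k) (abs_nonneg _) (norm_nonneg _)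
          have h2 : M' i j - M i j = -((M - M') i j) := by simp
          rw [h2, abs_neg]
          exact pipi_entry_le (M - M') i j
      _ = (d * CB) * ‖M - M'‖ := by simp [Finset.sum_const]; ring
      _ ≤ L * ‖M - M'‖ := by nlinarith [norm_nonneg (M - M')]
  have hcontΨf : ∀ M : Fin d → Fin d → ℝ, Continuous fun t => fΨ t M := by
    intro M
    apply continuous_pi; intro i
    apply continuous_pi; intro k
    show Continuous fun t => -∑ j, M i j * B t j k
    exact (continuous_finset_sum _ fun j _ => continuous_const.mul (hBe j k)).neg
  have hΨ0b : ∀ t, ‖fΨ t 0‖ ≤ 0 := by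
    intro t
    have : fΨ t 0 = 0 := by
      funext i k
      show -∑ j, (0:ℝ) * B t j k = 0
      simp
    rw [this, norm_zero]
  obtain ⟨Ψ, hΨinit, hΨD⟩ := linODE_global fΨ L 0 hL le_rfl hlipΨ hcontΨf hΨ0b 0
    (fun i j => if i = j then (1:ℝ) else 0)
  have hΨe : ∀ (i k : Fin d) (t : ℝ),
      HasDerivAt (fun t => Ψ t i k) (-∑ j, Ψ t i j * B t j k) t := by
    intro i k t
    exact hasDerivAt_pi.mp (hasDerivAt_pi.mp (hΨD t) i) k
  have hΨ0 : ∀ w, (Matrix.of (Ψ 0)).mulVec w = w := by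
    intro w; funext i
    show ∑ j, Ψ 0 i j * w j = w i
    rw [hΨinit]
    simp
  -- Ψ t ∘ Φ t = id
  have hΨΦ : ∀ (w : Fin d → ℝ) (t : ℝ), (Matrix.of (Ψ t)).mulVec ((Φ t).mulVec w) = w := by
    intro w
    set g : ℝ → (Fin d → ℝ) := fun t => (Matrix.of (Ψ t)).mulVec ((Φ t).mulVec w) with hgdef
    have hgD : ∀ t, HasDerivAt g 0 t := by
      intro t
      rw [hasDerivAt_pi]
      intro i
      have hv : ∀ k, HasDerivAt (fun t => ((Φ t).mulVec w) k)
          (((B t).mulVec ((Φ t).mulVec w)) k) t := fun k =>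
        hasDerivAt_pi.mp (hΦmul w t) k
      have hsum : HasDerivAt (fun t => ∑ k, Ψ t i k * ((Φ t).mulVec w) k)
          (∑ k, ((-∑ j, Ψ t i j * B t j k) * ((Φ t).mulVec w) k
            + Ψ t i k * (((B t).mulVec ((Φ t).mulVec w)) k))) t :=
        HasDerivAt.fun_sum fun k _ => (hΨe i k t).mul (hv k)
      have hzero : (∑ k, ((-∑ j, Ψ t i j * B t j k) * ((Φ t).mulVec w) k
            + Ψ t i k * (((B t).mulVec ((Φ t).mulVec w)) k))) = 0 := by
        set v : Fin d → ℝ := (Φ t).mulVec w with hvdef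
        have hBv : ∀ k, ((B t).mulVec v) k = ∑ j, B t k j * v j := fun k => rfl
        simp only [hBv]
        rw [Finset.sum_add_distrib]
        have e1 : ∑ k, (-∑ j, Ψ t i j * B t j k) * v k
            = -∑ k, ∑ j, Ψ t i j * B t j k * v k := by
          rw [← Finset.sum_neg_distrib]
          refine Finset.sum_congr rfl fun k _ => ?_
          rw [neg_mul, Finset.sum_mul]
        have e2 : ∑ k, Ψ t i k * ∑ j, B t k j * v j
            = ∑ k, ∑ j, Ψ t i j * B t j k * v k := by
          rw [Finset.sum_comm]
          refine Finset.sum_congr rfl fun j _ => ?_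
          rw [Finset.mul_sum]
          refine Finset.sum_congr rfl fun k _ => ?_
          ring
        rw [e1, e2]
        ring
      rw [hzero] at hsum
      exact hsum
    have hgdiff : Differentiable ℝ g := fun t => (hgD t).differentiableAt
    have hgderiv : ∀ t, deriv g t = 0 := fun t => (hgD t).deriv
    intro t
    have hconst : g t = g 0 := is_const_of_deriv_eq_zero hgdiff hgderiv t 0
    rw [hgdef] at hconst
    simp only at hconst
    rw [hconst, hΦ0, hΨ0]
  -- Φ t ∘ Ψ t = id
  have hΦΨ : ∀ (w : Fin d → ℝ) (t : ℝ), (Φ t).mulVec ((Matrix.of (Ψ t)).mulVec w) = w := by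
    intro w t
    have hinj : Function.Injective ((Φ t).mulVecLin) := by
      intro u u' huv
      simp only [Matrix.mulVecLin_apply] at huv
      have := congrArg (fun z => (Matrix.of (Ψ t)).mulVec z) huv
      simpa only [hΨΦ] using this
    have hsurj : Function.Surjective ((Φ t).mulVecLin) :=
      (LinearMap.injective_iff_surjective).mp hinj
    obtain ⟨u, hu⟩ := hsurj w
    simp only [Matrix.mulVecLin_apply] at hu
    rw [← hu, hΨΦ u t]
  -- the function G
  have hΨcont : Continuous Ψ := by
    rw [continuous_iff_continuousAt]
    exact fun t => (hΨD t).continuousAt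
  set G : ℝ → (Fin d → ℝ) := fun τ => (Matrix.of (Ψ τ)).mulVec (s τ) with hGdef
  have hGcont : Continuous G := by
    apply continuous_pi; intro i
    show Continuous fun τ => ∑ j, Ψ τ i j * s τ j
    refine continuous_finset_sum _ fun j _ => Continuous.mul ?_ ?_
    · exact (continuous_apply j).comp ((continuous_apply i).comp hΨcont)
    · exact (continuous_apply j).comp hscont
  -- decay estimates
  have hdecay : ∀ (τ t : ℝ), τ ≤ t → ‖(Φ t).mulVec (G τ)‖ ≤ K * Ss * Real.exp (γ*(τ - t)) := by
    intro τ t hτ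
    have hx := hstab (fun r => (Φ r).mulVec (G τ)) (fun r => hΦmul (G τ) r) τ t hτ
    beta_reduce at hx
    have hval : (Φ τ).mulVec (G τ) = s τ := hΦΨ (s τ) τ
    rw [hval] at hx
    have h1 : K * Real.exp (-γ * (t - τ)) * ‖s τ‖ ≤ K * Ss * Real.exp (γ*(τ - t)) := by
      have he : -γ * (t - τ) = γ * (τ - t) := by ring
      rw [he]
      have h2 : (0:ℝ) < K := lt_of_lt_of_le one_pos hK
      have h3 : (0:ℝ) < Real.exp (γ*(τ - t)) := Real.exp_pos _
      calc K * Real.exp (γ*(τ - t)) * ‖s τ‖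
          = (K * Real.exp (γ*(τ - t))) * ‖s τ‖ := by ring
        _ ≤ (K * Real.exp (γ*(τ - t))) * Ss :=
            mul_le_mul_of_nonneg_left (hSs τ) (le_of_lt (mul_pos h2 h3))
        _ = K * Ss * Real.exp (γ*(τ - t)) := by ring
    exact le_trans hx h1
  have hG : ∀ τ : ℝ, τ ≤ 0 → ‖G τ‖ ≤ K * Ss * Real.exp (γ*τ) := by
    intro τ hτ
    have := hdecay τ 0 hτ
    rw [hΦ0 (G τ)] at this
    simpa using this
  -- integrability
  have hGint : ∀ t : ℝ, MeasureTheory.IntegrableOn G (Iic t) := by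
    intro t
    have h1 : MeasureTheory.IntegrableOn G (Iic 0) := by
      refine MeasureTheory.Integrable.mono'
        (((integrableOn_exp_mul_Iic' γ 0 hγ).const_mul (K*Ss))) ?_ ?_
      · exact hGcont.aestronglyMeasurable.restrict
      · refine (MeasureTheory.ae_restrict_iff' measurableSet_Iic).mpr ?_
        exact Filter.Eventually.of_forall fun τ hτ => by
          simpa [mul_assoc] using hG τ hτ
    have h2 : MeasureTheory.IntegrableOn G (Icc 0 t) := hGcont.integrableOn_Icc
    refine (h1.union h2).mono_set ?_
    intro u hu
    rcases le_total u 0 with h | h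
    · exact Or.inl h
    · exact Or.inr ⟨h, hu⟩
  -- the bounded solution
  set c : Fin d → ℝ := ∫ τ in Iic 0, G τ with hcdef
  set w : ℝ → (Fin d → ℝ) := fun t => ∫ τ in (0:ℝ)..t, G τ with hwdef
  have hwD : ∀ t, HasDerivAt w (G t) t := by
    intro t
    exact intervalIntegral.integral_hasDerivAt_right (hGcont.intervalIntegrable 0 t)
      (hGcont.stronglyMeasurableAtFilter _ _) hGcont.continuousAt
  have hsplit : ∀ t, c + w t = ∫ τ in Iic t, G τ := by
    intro t
    rcases le_total 0 t with h | h
    · rw [hwdef]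
      simp only
      rw [intervalIntegral.integral_of_le h, hcdef]
      rw [← MeasureTheory.setIntegral_union (Iic_disjoint_Ioc le_rfl) measurableSet_Ioc
        ((hGint 0)) (hGcont.integrableOn_Icc.mono_set Ioc_subset_Icc_self)]
      rw [Iic_union_Ioc_eq_Iic h]
    · rw [hwdef]
      simp only
      rw [intervalIntegral.integral_of_ge h, hcdef]
      have hc2 : (∫ τ in Iic 0, G τ) = (∫ τ in Iic t, G τ) + ∫ τ in Ioc t 0, G τ := by
        rw [← MeasureTheory.setIntegral_union (Iic_disjoint_Ioc le_rfl) measurableSet_Ioc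
          ((hGint t)) (hGcont.integrableOn_Icc.mono_set Ioc_subset_Icc_self)]
        rw [Iic_union_Ioc_eq_Iic h]
      rw [hc2]
      abel
  set ν : ℝ → (Fin d → ℝ) := fun t => (Φ t).mulVec (c + w t) with hνdef
  have hνD : ∀ t, HasDerivAt ν ((B t).mulVec (ν t) + s t) t := by
    intro t
    rw [hasDerivAt_pi]
    intro i
    have hcw : ∀ j, HasDerivAt (fun t => (c + w t) j) (G t j) t := by
      intro j
      have := hasDerivAt_pi.mp (hwD t) j
      simpa using this.const_add (c j)
    have hsum : HasDerivAt (fun t => ∑ j, Φ t i j * (c + w t) j)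
        (∑ j, (((B t).mulVec (sol j t)) i * (c + w t) j + Φ t i j * G t j)) t :=
      HasDerivAt.fun_sum fun j _ => (hΦe i j t).mul (hcw j)
    have hval : (∑ j, (((B t).mulVec (sol j t)) i * (c + w t) j + Φ t i j * G t j))
        = ((B t).mulVec (ν t) + s t) i := by
      rw [Finset.sum_add_distrib]
      have e1 : ∑ j, ((B t).mulVec (sol j t)) i * (c + w t) j
          = ((B t).mulVec (ν t)) i := by
        show ∑ j, (∑ k, B t i k * sol j t k) * (c + w t) j
            = ∑ k, B t i k * (ν t) k
        simp only [Finset.sum_mul]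
        rw [Finset.sum_comm]
        refine Finset.sum_congr rfl fun k _ => ?_
        have : (ν t) k = ∑ j, Φ t k j * (c + w t) j := rfl
        rw [this, Finset.mul_sum]
        refine Finset.sum_congr rfl fun j _ => ?_
        have h : Φ t k j = sol j t k := rfl
        rw [h]; ring
      have e2 : ∑ j, Φ t i j * G t j = s t i := by
        have : ∑ j, Φ t i j * G t j = ((Φ t).mulVec (G t)) i := rfl
        rw [this, hGdef]
        simp only
        rw [hΦΨ (s t) t]
      rw [e1, e2]
      rfl
    rw [hval] at hsum
    exact hsum
  have hνb : ∀ t, ‖ν t‖ ≤ K * Ss / γ := by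
    intro t
    have h1 : ν t = ∫ τ in Iic t, (Φ t).mulVec (G τ) := by
      rw [hνdef]
      simp only
      rw [hsplit t]
      have := ContinuousLinearMap.integral_comp_comm
        (LinearMap.toContinuousLinearMap ((Φ t).mulVecLin)) (hGint t)
      simpa [Matrix.mulVecLin_apply] using this.symm
    rw [h1]
    have hbint : MeasureTheory.IntegrableOn (fun τ => K * Ss * Real.exp (γ*(τ - t))) (Iic t) := by
      refine MeasureTheory.IntegrableOn.congr_fun
        ((integrableOn_exp_mul_Iic' γ t hγ).const_mul (K*Ss*Real.exp (-(γ*t))))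
        ?_ measurableSet_Iic
      intro τ _
      show K*Ss*Real.exp (-(γ*t)) * Real.exp (γ*τ) = K * Ss * Real.exp (γ*(τ - t))
      rw [show γ*(τ-t) = -(γ*t) + γ*τ by ring, Real.exp_add]
      ring
    have h2 : ‖∫ τ in Iic t, (Φ t).mulVec (G τ)‖
        ≤ ∫ τ in Iic t, K * Ss * Real.exp (γ*(τ - t)) := by
      refine MeasureTheory.norm_integral_le_of_norm_le hbint ?_
      refine (MeasureTheory.ae_restrict_iff' measurableSet_Iic).mpr ?_
      exact Filter.Eventually.of_forall fun τ hτ => hdecay τ t hτ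
    refine le_trans h2 ?_
    have h3 : (∫ τ in Iic t, K * Ss * Real.exp (γ*(τ - t)))
        = K * Ss * Real.exp (-(γ*t)) * ∫ τ in Iic t, Real.exp (γ*τ) := by
      rw [← MeasureTheory.integral_const_mul]
      refine MeasureTheory.setIntegral_congr_fun measurableSet_Iic fun τ _ => ?_
      show K * Ss * Real.exp (γ*(τ - t)) = K*Ss*Real.exp (-(γ*t)) * Real.exp (γ*τ)
      rw [show γ*(τ-t) = -(γ*t) + γ*τ by ring, Real.exp_add]
      ring
    rw [h3, integral_exp_mul_Iic' γ t hγ]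
    have he2 : Real.exp (-(γ*t)) * Real.exp (γ*t) = 1 := by
      rw [← Real.exp_add]; simp
    refine le_of_eq ?_
    calc K * Ss * Real.exp (-(γ*t)) * (Real.exp (γ*t)/γ)
        = K * Ss * (Real.exp (-(γ*t)) * Real.exp (γ*t)) / γ := by ring
      _ = K * Ss / γ := by rw [he2]; ring
  refine ⟨ν, ⟨hνD, ?_⟩, ?_⟩
  · rw [isBounded_iff_forall_norm_le]
    exact ⟨K * Ss / γ, by rintro x ⟨t, rfl⟩; exact hνb t⟩
  · rintro ν' ⟨hν'D, hν'b⟩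
    funext t
    obtain ⟨M1, hM1⟩ := isBounded_iff_forall_norm_le.mp hν'b
    set D : ℝ → (Fin d → ℝ) := fun t => ν' t - ν t with hDdef
    have hDD : ∀ t, HasDerivAt D ((B t).mulVec (D t)) t := by
      intro t
      have := (hν'D t).sub (hνD t)
      have he : ((B t).mulVec (ν' t) + s t) - ((B t).mulVec (ν t) + s t)
          = (B t).mulVec (D t) := by
        rw [hDdef]
        simp only
        rw [Matrix.mulVec_sub]
        abel
      rwa [he] at this
    have hDb : ∀ u, ‖D u‖ ≤ M1 + K * Ss / γ := by
      intro u
      have h1 : ‖ν' u‖ ≤ M1 := hM1 _ ⟨u, rfl⟩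
      have h2 : ‖D u‖ = ‖ν' u - ν u‖ := rfl
      rw [h2]
      linarith [norm_sub_le (ν' u) (ν u), hνb u]
    set M : ℝ := M1 + K * Ss / γ with hMdef
    have hKpos : (0:ℝ) < K := lt_of_lt_of_le one_pos hK
    have hMnn : (0:ℝ) ≤ M := le_trans (norm_nonneg (D 0)) (hDb 0)
    have hkey : ∀ t₀ : ℝ, t₀ ≤ t → ‖D t‖ ≤ K * M * Real.exp (γ*t₀ - γ*t) := by
      intro t₀ ht₀
      have := hstab D hDD t₀ t ht₀
      have he : -γ * (t - t₀) = γ*t₀ - γ*t := by ring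
      rw [he] at this
      have h3 : (0:ℝ) < Real.exp (γ*t₀ - γ*t) := Real.exp_pos _
      calc ‖D t‖ ≤ K * Real.exp (γ*t₀ - γ*t) * ‖D t₀‖ := this
        _ = (K * Real.exp (γ*t₀ - γ*t)) * ‖D t₀‖ := by ring
        _ ≤ (K * Real.exp (γ*t₀ - γ*t)) * M :=
            mul_le_mul_of_nonneg_left (hDb t₀) (le_of_lt (mul_pos hKpos h3))
        _ = K * M * Real.exp (γ*t₀ - γ*t) := by ring
    have htend : Filter.Tendsto (fun t₀ : ℝ => K * M * Real.exp (γ*t₀ - γ*t))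
        Filter.atBot (nhds 0) := by
      have h1 : Filter.Tendsto (fun t₀ : ℝ => γ*t₀ - γ*t) Filter.atBot Filter.atBot := by
        apply Filter.tendsto_atBot_add_const_right
        exact (Filter.tendsto_id.const_mul_atBot hγ)
      have h2 := Real.tendsto_exp_atBot.comp h1
      have h3 := h2.const_mul (K*M)
      simpa using h3
    have hDt : ‖D t‖ ≤ 0 := by
      refine ge_of_tendsto htend ?_
      filter_upwards [Filter.Iic_mem_atBot t] with t₀ ht₀ using hkey t₀ ht₀
    have : D t = 0 := by
      have := norm_le_zero_iff.mp hDt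
      exact this
    have : ν' t - ν t = 0 := this
    have := sub_eq_zero.mp this
    exact this
end

section
/- Let I ⊆ ℝ be an open interval, let B : I → ℝ^{d×d} with entries b_{ij} and s : I → [0,∞)^d be continuous, and let p : [0,∞) × I → ℝ^d be continuously differentiable with p_i(a,t) ≥ 0, satisfying the McKendrick–von Förster equation ∂_t p_i(a,t) + ∂_a p_i(a,t) = Σ_{j=1}^{d} b_{ij}(t) p_j(a,t) for all a ≥ 0, t ∈ I, and the boundary condition p_i(0,t) = s_i(t). Assume for every t ∈ I and i: the functions a ↦ p_i(a,t) and a ↦ a·p_i(a,t) are integrable on [0,∞), a·p_i(a,t) → 0 as a → ∞, x_i(t) := ∫_0^∞ p_i(a,t) da > 0, the function x is differentiable with ẋ_i(t) = ∫_0^∞ ∂_t p_i(a,t) da, and t ↦ ∫_0^∞ a·p_i(a,t) da is differentiable with derivative ∫_0^∞ a·∂_t p_i(a,t) da. Then x solves ẋ = B(t)x + s(t), and the mean ages ā_i(t) := (∫_0^∞ a·p_i(a,t) da)/x_i(t) are differentiable and satisfy the mean age system: ā_i'(t) = 1 + (Σ_{j=1}^{d} (ā_j(t) − ā_i(t)) b_{ij}(t)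 x_j(t) − ā_i(t) s_i(t)) / x_i(t) for all i ∈ {1,…,d} and t ∈ I. -/
open MeasureTheory Set Filter intervalIntegral Metric Topology

section AuxStmt7

lemma diag_deriv {I : Set ℝ} (hIopen : IsOpen I)
    (f fa ft : ℝ → ℝ → ℝ)
    (hfa_cont : ContinuousOn (fun q : ℝ × ℝ => fa q.1 q.2) (Set.Ici 0 ×ˢ I))
    (hft : ∀ a : ℝ, 0 ≤ a → ∀ t ∈ I, HasDerivAt (fun t' => f a t') (ft a t) t)
    (hfa : ∀ a : ℝ, 0 ≤ a → ∀ t ∈ I, HasDerivAt (fun a' => f a' t) (fa a t) a)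
    (c σ₀ : ℝ) (hσ₀ : σ₀ ∈ I) (hc : 0 < c + σ₀) :
    HasDerivAt (fun σ => f (c + σ) σ) (fa (c + σ₀) σ₀ + ft (c + σ₀) σ₀) σ₀ := by
  set a₀ := c + σ₀ with ha₀
  -- a neighborhood of σ₀ inside I with c + σ > 0
  have hnhds : {σ : ℝ | σ ∈ I ∧ 0 < c + σ} ∈ 𝓝 σ₀ := by
    have h1 : I ∈ 𝓝 σ₀ := hIopen.mem_nhds hσ₀
    have h2 : {σ : ℝ | 0 < c + σ} ∈ 𝓝 σ₀ := by
      have : Continuous fun σ : ℝ => c + σ := by continuity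
      exact this.continuousAt.preimage_mem_nhds (Ioi_mem_nhds hc)
    exact Filter.inter_mem h1 h2
  -- FTC identity on the neighborhood
  have hFTC : ∀ σ ∈ I, 0 < c + σ →
      f (c + σ) σ = f a₀ σ + ∫ u in a₀..(c + σ), fa u σ := by
    intro σ hσ hcσ
    have hsub : uIcc a₀ (c + σ) ⊆ Ici (0 : ℝ) := fun u hu =>
      le_trans (le_min hc.le hcσ.le) hu.1
    have hint : IntervalIntegrable (fun u => fa u σ) volume a₀ (c + σ) := by
      apply ContinuousOn.intervalIntegrable
      have : ContinuousOn (fun u : ℝ => fa u σ) (Ici 0) := by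
        refine hfa_cont.comp ((continuous_id.prodMk continuous_const).continuousOn) ?_
        intro u hu; exact ⟨hu, hσ⟩
      exact this.mono hsub
    have := intervalIntegral.integral_eq_sub_of_hasDerivAt
      (f := fun u => f u σ) (f' := fun u => fa u σ)
      (fun u hu => hfa u (hsub hu) σ hσ) hint
    rw [this]; ring
  -- derivative of the correction integral
  have hG : HasDerivAt (fun σ => ∫ u in a₀..(c + σ), fa u σ) (fa a₀ σ₀) σ₀ := by
    rw [hasDerivAt_iff_isLittleO]
    rw [Asymptotics.isLittleO_iff]
    intro ε hε
    -- continuity of fa at (a₀, σ₀)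
    have hca : ContinuousAt (fun q : ℝ × ℝ => fa q.1 q.2) (a₀, σ₀) := by
      have hmem : (Ici (0:ℝ) ×ˢ I) ∈ 𝓝 ((a₀, σ₀) : ℝ × ℝ) := by
        refine prod_mem_nhds ?_ (hIopen.mem_nhds hσ₀)
        exact mem_of_superset (Ioi_mem_nhds hc) Ioi_subset_Ici_self
      exact (hfa_cont (a₀, σ₀) ⟨hc.le, hσ₀⟩).continuousAt hmem
    rw [Metric.continuousAt_iff] at hca
    obtain ⟨δ, hδpos, hδ⟩ := hca ε hε
    have hball : Metric.ball σ₀ δ ∈ 𝓝 σ₀ := Metric.ball_mem_nhds σ₀ hδpos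
    filter_upwards [hnhds, hball] with σ ⟨hσI, hcσ⟩ hσδ
    have hdist : |σ - σ₀| < δ := by rwa [Metric.mem_ball, Real.dist_eq] at hσδ
    -- the value at σ₀ is 0
    have h0 : (∫ u in a₀..(c + σ₀), fa u σ₀) = 0 := by
      simp [ha₀]
    rw [h0]
    have hsub : uIcc a₀ (c + σ) ⊆ Ici (0 : ℝ) := fun u hu =>
      le_trans (le_min hc.le hcσ.le) hu.1
    have hint : IntervalIntegrable (fun u => fa u σ) volume a₀ (c + σ) := by
      apply ContinuousOn.intervalIntegrable
      have : ContinuousOn (fun u : ℝ => fa u σ) (Ici 0) := by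
        refine hfa_cont.comp ((continuous_id.prodMk continuous_const).continuousOn) ?_
        intro u hu; exact ⟨hu, hσI⟩
      exact this.mono hsub
    have hconst : (σ - σ₀) • fa a₀ σ₀ = ∫ _u in a₀..(c + σ), fa a₀ σ₀ := by
      rw [intervalIntegral.integral_const]
      have : c + σ - a₀ = σ - σ₀ := by rw [ha₀]; ring
      rw [this]
    have hrw : (∫ u in a₀..(c + σ), fa u σ) - 0 - (σ - σ₀) • fa a₀ σ₀
        = ∫ u in a₀..(c + σ), (fa u σ - fa a₀ σ₀) := by
      rw [intervalIntegral.integral_sub hint (intervalIntegrable_const), sub_zero, hconst]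
    rw [hrw]
    have hbd : ∀ u ∈ uIoc a₀ (c + σ), ‖fa u σ - fa a₀ σ₀‖ ≤ ε := by
      intro u hu
      have hu' : |u - a₀| ≤ |σ - σ₀| := by
        have h1 : |u - a₀| ≤ |c + σ - a₀| := by
          rcases Set.mem_uIoc.mp hu with ⟨h1, h2⟩ | ⟨h1, h2⟩
          · rw [abs_of_pos (by linarith), abs_of_nonneg (by linarith)]; linarith
          · rw [abs_of_nonpos (by linarith), abs_of_neg (by linarith)]; linarith
        have h2 : |c + σ - a₀| = |σ - σ₀| := by rw [ha₀]; congr 1; ring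
        rw [h2] at h1; exact h1
      have hd : dist ((u, σ) : ℝ × ℝ) (a₀, σ₀) < δ := by
        rw [Prod.dist_eq]
        apply max_lt <;> rw [Real.dist_eq]
        · exact lt_of_le_of_lt hu' hdist
        · exact hdist
      exact (hδ hd).le
    calc ‖∫ u in a₀..(c + σ), (fa u σ - fa a₀ σ₀)‖ ≤ ε * |c + σ - a₀| :=
          intervalIntegral.norm_integral_le_of_norm_le_const hbd
      _ = ε * ‖σ - σ₀‖ := by rw [ha₀]; congr 1; rw [Real.norm_eq_abs]; congr 1; ring
  -- assemble
  have hF : HasDerivAt (fun σ => f a₀ σ + ∫ u in a₀..(c + σ), fa u σ)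
      (ft a₀ σ₀ + fa a₀ σ₀) σ₀ := (hft a₀ hc.le σ₀ hσ₀).add hG
  have heq : (fun σ => f (c + σ) σ) =ᶠ[𝓝 σ₀] (fun σ => f a₀ σ + ∫ u in a₀..(c + σ), fa u σ) := by
    filter_upwards [hnhds] with σ ⟨h1, h2⟩
    exact hFTC σ h1 h2
  have := hF.congr_of_eventuallyEq heq
  rw [add_comm] at this
  exact this

lemma param_deriv {I : Set ℝ} (hIopen : IsOpen I)
    (f ft : ℝ → ℝ → ℝ)
    (hf_cont : ContinuousOn (fun q : ℝ × ℝ => f q.1 q.2) (Set.Ici 0 ×ˢ I))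
    (hft_cont : ContinuousOn (fun q : ℝ × ℝ => ft q.1 q.2) (Set.Ici 0 ×ˢ I))
    (hft : ∀ a : ℝ, 0 ≤ a → ∀ t ∈ I, HasDerivAt (fun t' => f a t') (ft a t) t)
    (A : ℝ) (hA : 0 ≤ A) (t : ℝ) (ht : t ∈ I) :
    HasDerivAt (fun τ => ∫ a in (0:ℝ)..A, f a τ) (∫ a in (0:ℝ)..A, ft a t) t := by
  obtain ⟨ε', hε'pos, hball⟩ := Metric.isOpen_iff.mp hIopen t ht
  set ε := ε' / 2 with hε
  have hεpos : 0 < ε := by positivity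
  have hcb : closedBall t ε ⊆ I :=
    subset_trans (Metric.closedBall_subset_ball (by linarith)) hball
  have hIoc : uIoc (0:ℝ) A = Ioc 0 A := uIoc_of_le hA
  have huIcc : uIcc (0:ℝ) A = Icc 0 A := uIcc_of_le hA
  have hKsub : (Icc (0:ℝ) A ×ˢ closedBall t ε) ⊆ (Set.Ici 0 ×ˢ I) := by
    intro q hq; exact ⟨hq.1.1, hcb hq.2⟩
  have hK : IsCompact (Icc (0:ℝ) A ×ˢ closedBall t ε) :=
    isCompact_Icc.prod (isCompact_closedBall t ε)
  obtain ⟨C, hC⟩ := hK.exists_bound_of_continuousOn (hft_cont.mono hKsub)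
  have slicef : ∀ τ ∈ I, ContinuousOn (fun a : ℝ => f a τ) (Ici 0) := fun τ hτ =>
    hf_cont.comp ((continuous_id.prodMk continuous_const).continuousOn)
      (fun a ha => ⟨ha, hτ⟩)
  have sliceft : ∀ τ ∈ I, ContinuousOn (fun a : ℝ => ft a τ) (Ici 0) := fun τ hτ =>
    hft_cont.comp ((continuous_id.prodMk continuous_const).continuousOn)
      (fun a ha => ⟨ha, hτ⟩)
  have meas : ∀ τ ∈ I, AEStronglyMeasurable (fun a : ℝ => f a τ)
      (volume.restrict (uIoc (0:ℝ) A)) := by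
    intro τ hτ
    rw [hIoc]
    exact ((slicef τ hτ).mono (Ioc_subset_Icc_self.trans Icc_subset_Ici_self)).aestronglyMeasurable measurableSet_Ioc
  have key := intervalIntegral.hasDerivAt_integral_of_dominated_loc_of_deriv_le
    (F := fun τ a => f a τ) (F' := fun τ a => ft a τ) (x₀ := t)
    (bound := fun _ => C) (a := 0) (b := A) (s := ball t ε) (Metric.ball_mem_nhds t hεpos)
    (by filter_upwards [hIopen.mem_nhds ht] with τ hτ using meas τ hτ)
    (((slicef t ht).mono (by rw [huIcc]; exact Icc_subset_Ici_self)).intervalIntegrable)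
    (by rw [hIoc]
        exact ((sliceft t ht).mono (Ioc_subset_Icc_self.trans Icc_subset_Ici_self)).aestronglyMeasurable measurableSet_Ioc)
    (by refine Filter.Eventually.of_forall (fun a => fun ha τ hτ => ?_)
        rw [hIoc] at ha
        exact hC (a, τ) ⟨⟨ha.1.le, ha.2⟩, Metric.ball_subset_closedBall hτ⟩)
    intervalIntegrable_const
    (by refine Filter.Eventually.of_forall (fun a => fun ha τ hτ => ?_)
        rw [hIoc] at ha
        exact hft a ha.1.le τ (hcb (Metric.ball_subset_closedBall hτ)))
  exact key.2

end AuxStmt7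

/-- the mean age system.
Given a nonautonomous compartmental system with coefficient matrix `B` and input `s` on an
open interval `I`, and a nonnegative `C¹` age-density `p(a,t)` solving the
McKendrick–von Förster equation `∂ₜ pᵢ + ∂ₐ pᵢ = ∑ⱼ bᵢⱼ(t) pⱼ` with boundary condition
`pᵢ(0,t) = sᵢ(t)`, under the stated integrability, decay, positivity and differentiation-
under-the-integral assumptions, the pool contents `xᵢ(t) = ∫₀^∞ pᵢ(a,t) da` solve
`ẋ = B(t)x + s(t)` and the mean ages `āᵢ(t) = (∫₀^∞ a pᵢ(a,t) da)/xᵢ(t)` solve the mean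
age system `āᵢ' = 1 + (∑ⱼ (āⱼ − āᵢ) bᵢⱼ(t) xⱼ(t) − āᵢ sᵢ(t))/xᵢ(t)`. -/
theorem stmt_7 (d : ℕ) (I : Set ℝ) (hIopen : IsOpen I) (hIconn : I.OrdConnected)
    (B : ℝ → Matrix (Fin d) (Fin d) ℝ) (s : ℝ → (Fin d → ℝ))
    (hBcont : ContinuousOn B I) (hscont : ContinuousOn s I)
    (hsnn : ∀ t ∈ I, ∀ i : Fin d, 0 ≤ s t i)
    (p pt pa : ℝ → ℝ → Fin d → ℝ)
    -- `p` is continuously differentiable on `[0,∞) × I`, with partial derivatives `pa`, `pt`: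
    (hpcont : ∀ i : Fin d, ContinuousOn (fun q : ℝ × ℝ => p q.1 q.2 i) (Set.Ici 0 ×ˢ I))
    (hptcont : ∀ i : Fin d, ContinuousOn (fun q : ℝ × ℝ => pt q.1 q.2 i) (Set.Ici 0 ×ˢ I))
    (hpacont : ∀ i : Fin d, ContinuousOn (fun q : ℝ × ℝ => pa q.1 q.2 i) (Set.Ici 0 ×ˢ I))
    (hpt : ∀ a : ℝ, 0 ≤ a → ∀ t ∈ I, ∀ i : Fin d,
      HasDerivAt (fun t' => p a t' i) (pt a t i) t)
    (hpa : ∀ a : ℝ, 0 ≤ a → ∀ t ∈ I, ∀ i : Fin d,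
      HasDerivAt (fun a' => p a' t i) (pa a t i) a)
    -- nonnegativity of the density:
    (hpnn : ∀ a : ℝ, 0 ≤ a → ∀ t ∈ I, ∀ i : Fin d, 0 ≤ p a t i)
    -- the McKendrick–von Förster equation:
    (hMvF : ∀ a : ℝ, 0 ≤ a → ∀ t ∈ I, ∀ i : Fin d,
      pt a t i + pa a t i = ∑ j, B t i j * p a t j)
    -- the boundary condition:
    (hbdry : ∀ t ∈ I, ∀ i : Fin d, p 0 t i = s t i)
    -- integrability and decay assumptions:
    (hp_int : ∀ t ∈ I, ∀ i : Fin d, IntegrableOn (fun a => p a t i) (Set.Ici 0))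
    (hap_int : ∀ t ∈ I, ∀ i : Fin d, IntegrableOn (fun a => a * p a t i) (Set.Ici 0))
    (hdecay : ∀ t ∈ I, ∀ i : Fin d,
      Filter.Tendsto (fun a => a * p a t i) Filter.atTop (nhds 0))
    -- the pool contents and their positivity:
    (x : ℝ → Fin d → ℝ)
    (hxdef : ∀ t ∈ I, ∀ i : Fin d, x t i = ∫ a in Set.Ici (0 : ℝ), p a t i)
    (hxpos : ∀ t ∈ I, ∀ i : Fin d, 0 < x t i)
    -- differentiation under the integral sign:
    (hxderiv : ∀ t ∈ I, ∀ i : Fin d,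
      HasDerivAt (fun t' => x t' i) (∫ a in Set.Ici (0 : ℝ), pt a t i) t)
    (hmderiv : ∀ t ∈ I, ∀ i : Fin d,
      HasDerivAt (fun t' => ∫ a in Set.Ici (0 : ℝ), a * p a t' i)
        (∫ a in Set.Ici (0 : ℝ), a * pt a t i) t)
    -- the mean ages:
    (abar : ℝ → Fin d → ℝ)
    (habardef : ∀ t ∈ I, ∀ i : Fin d,
      abar t i = (∫ a in Set.Ici (0 : ℝ), a * p a t i) / x t i) :
    (∀ t ∈ I, ∀ i : Fin d,
      HasDerivAt (fun t' => x t' i) ((∑ j, B t i j * x t j) + s t i) t) ∧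
    (∀ t ∈ I, ∀ i : Fin d,
      HasDerivAt (fun t' => abar t' i)
        (1 + ((∑ j, (abar t j - abar t i) * (B t i j * x t j)) - abar t i * s t i)
          / x t i) t) := by
  classical
  set m : ℝ → Fin d → ℝ := fun t i => ∫ a in Set.Ici (0 : ℝ), a * p a t i with hm
  -- basic subset facts
  have huIccI : ∀ {t₁ t₂ : ℝ}, t₁ ∈ I → t₂ ∈ I → uIcc t₁ t₂ ⊆ I := by
    intro t₁ t₂ h1 h2
    rcases le_total t₁ t₂ with h | h
    · rw [uIcc_of_le h]; exact hIconn.out h1 h2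
    · rw [uIcc_of_ge h]; exact hIconn.out h2 h1
  -- slice continuity
  have sliceA : ∀ t ∈ I, ∀ i : Fin d, ContinuousOn (fun a => p a t i) (Ici 0) :=
    fun t ht i => (hpcont i).comp ((continuous_id.prodMk continuous_const).continuousOn)
      (fun a ha => ⟨ha, ht⟩)
  have sliceAa : ∀ t ∈ I, ∀ i : Fin d, ContinuousOn (fun a => pa a t i) (Ici 0) :=
    fun t ht i => (hpacont i).comp ((continuous_id.prodMk continuous_const).continuousOn)
      (fun a ha => ⟨ha, ht⟩)
  have sliceT : ∀ a : ℝ, 0 ≤ a → ∀ i : Fin d, ContinuousOn (fun τ => p a τ i) I :=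
    fun a ha i => (hpcont i).comp ((continuous_const.prodMk continuous_id).continuousOn)
      (fun τ hτ => ⟨ha, hτ⟩)
  have hBentry : ∀ i j : Fin d, ContinuousOn (fun τ => B τ i j) I :=
    fun i j => (continuous_apply_apply i j).comp_continuousOn hBcont
  have hsentry : ∀ i : Fin d, ContinuousOn (fun τ => s τ i) I :=
    fun i => (continuous_apply i).comp_continuousOn hscont
  have hxcont : ∀ i : Fin d, ContinuousOn (fun τ => x τ i) I :=
    fun i τ hτ => (hxderiv τ hτ i).continuousAt.continuousWithinAt
  have hmcont : ∀ i : Fin d, ContinuousOn (fun τ => m τ i) I :=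
    fun i τ hτ => (hmderiv τ hτ i).continuousAt.continuousWithinAt
  -- derivative of truncated zeroth moment
  have hHder : ∀ (n : ℕ) (i : Fin d), ∀ t ∈ I,
      HasDerivAt (fun τ => ∫ a in (0:ℝ)..(n:ℝ), p a τ i)
        ((∑ j, B t i j * ∫ a in (0:ℝ)..(n:ℝ), p a t j) + s t i - p (n:ℝ) t i) t := by
    intro n i t ht
    have base := param_deriv hIopen (fun a τ => p a τ i) (fun a τ => pt a τ i)
      (hpcont i) (hptcont i) (fun a ha τ hτ => hpt a ha τ hτ i) (n:ℝ) n.cast_nonneg t ht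
    have huIcc : uIcc (0:ℝ) (n:ℝ) = Icc 0 (n:ℝ) := uIcc_of_le n.cast_nonneg
    have hIcc_Ici : Icc (0:ℝ) (n:ℝ) ⊆ Ici 0 := Icc_subset_Ici_self
    have hintp : ∀ j, IntervalIntegrable (fun a => p a t j) volume 0 (n:ℝ) := fun j =>
      ((sliceA t ht j).mono (by rw [huIcc]; exact hIcc_Ici)).intervalIntegrable
    have hintpa : IntervalIntegrable (fun a => pa a t i) volume 0 (n:ℝ) :=
      ((sliceAa t ht i).mono (by rw [huIcc]; exact hIcc_Ici)).intervalIntegrable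
    have hintsum : IntervalIntegrable (fun a => ∑ j, B t i j * p a t j) volume 0 (n:ℝ) :=
      by
      have h := IntervalIntegrable.sum (μ := volume) (a := (0:ℝ)) (b := (n:ℝ)) Finset.univ
        (f := fun j a => B t i j * p a t j) (fun j _ => (hintp j).const_mul (B t i j))
      simpa [Finset.sum_fn] using h
    have h1 : (∫ a in (0:ℝ)..(n:ℝ), pt a t i)
        = ∫ a in (0:ℝ)..(n:ℝ), ((∑ j, B t i j * p a t j) - pa a t i) := by
      apply intervalIntegral.integral_congr
      intro a ha
      have ha0 : (0:ℝ) ≤ a := by rw [huIcc] at ha; exact ha.1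
      have hh := hMvF a ha0 t ht i
      show pt a t i = (∑ j, B t i j * p a t j) - pa a t i
      linarith
    have h2 : (∫ a in (0:ℝ)..(n:ℝ), ((∑ j, B t i j * p a t j) - pa a t i))
        = (∫ a in (0:ℝ)..(n:ℝ), ∑ j, B t i j * p a t j)
          - ∫ a in (0:ℝ)..(n:ℝ), pa a t i :=
      intervalIntegral.integral_sub hintsum hintpa
    have h3 : (∫ a in (0:ℝ)..(n:ℝ), ∑ j, B t i j * p a t j)
        = ∑ j, B t i j * ∫ a in (0:ℝ)..(n:ℝ), p a t j := by
      rw [intervalIntegral.integral_finset_sum (fun j _ => (hintp j).const_mul (B t i j))]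
      exact Finset.sum_congr rfl fun j _ => intervalIntegral.integral_const_mul _ _
    have h4 : (∫ a in (0:ℝ)..(n:ℝ), pa a t i) = p (n:ℝ) t i - s t i := by
      rw [intervalIntegral.integral_eq_sub_of_hasDerivAt
        (f := fun a => p a t i) (f' := fun a => pa a t i)
        (fun a ha => hpa a (by rw [huIcc] at ha; exact ha.1) t ht i) hintpa, hbdry t ht i]
    have : (∫ a in (0:ℝ)..(n:ℝ), pt a t i)
        = (∑ j, B t i j * ∫ a in (0:ℝ)..(n:ℝ), p a t j) + s t i - p (n:ℝ) t i := by
      rw [h1, h2, h3, h4]; ring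
    rwa [this] at base

  -- derivative of truncated first moment
  have hGder : ∀ (n : ℕ) (i : Fin d), ∀ t ∈ I,
      HasDerivAt (fun τ => ∫ a in (0:ℝ)..(n:ℝ), a * p a τ i)
        ((∑ j, B t i j * ∫ a in (0:ℝ)..(n:ℝ), a * p a t j)
          + (∫ a in (0:ℝ)..(n:ℝ), p a t i) - (n:ℝ) * p (n:ℝ) t i) t := by
    intro n i t ht
    have base := param_deriv hIopen (fun a τ => a * p a τ i) (fun a τ => a * pt a τ i)
      ((continuous_fst.continuousOn).mul (hpcont i))
      ((continuous_fst.continuousOn).mul (hptcont i))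
      (fun a ha τ hτ => (hpt a ha τ hτ i).const_mul a) (n:ℝ) n.cast_nonneg t ht
    have huIcc : uIcc (0:ℝ) (n:ℝ) = Icc 0 (n:ℝ) := uIcc_of_le n.cast_nonneg
    have hIcc_Ici : Icc (0:ℝ) (n:ℝ) ⊆ Ici 0 := Icc_subset_Ici_self
    have hintp : ∀ j, IntervalIntegrable (fun a => p a t j) volume 0 (n:ℝ) := fun j =>
      ((sliceA t ht j).mono (by rw [huIcc]; exact hIcc_Ici)).intervalIntegrable
    have hintap : ∀ j, IntervalIntegrable (fun a => a * p a t j) volume 0 (n:ℝ) := fun j =>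
      (((continuousOn_id).mul (sliceA t ht j)).mono (by rw [huIcc]; exact hIcc_Ici)).intervalIntegrable
    have hintapa : IntervalIntegrable (fun a => a * pa a t i) volume 0 (n:ℝ) :=
      (((continuousOn_id).mul (sliceAa t ht i)).mono (by rw [huIcc]; exact hIcc_Ici)).intervalIntegrable
    have hintsum : IntervalIntegrable (fun a => ∑ j, B t i j * (a * p a t j)) volume 0 (n:ℝ) := by
      have h := IntervalIntegrable.sum (μ := volume) (a := (0:ℝ)) (b := (n:ℝ)) Finset.univ
        (f := fun j a => B t i j * (a * p a t j)) (fun j _ => (hintap j).const_mul (B t i j))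
      simpa [Finset.sum_fn] using h
    have h1 : (∫ a in (0:ℝ)..(n:ℝ), a * pt a t i)
        = ∫ a in (0:ℝ)..(n:ℝ), ((∑ j, B t i j * (a * p a t j)) - a * pa a t i) := by
      apply intervalIntegral.integral_congr
      intro a ha
      have ha0 : (0:ℝ) ≤ a := by rw [huIcc] at ha; exact ha.1
      have hh := hMvF a ha0 t ht i
      show a * pt a t i = (∑ j, B t i j * (a * p a t j)) - a * pa a t i
      have h' : pt a t i = (∑ j, B t i j * p a t j) - pa a t i := by linarith
      rw [h', mul_sub, Finset.mul_sum]
      congr 1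
      exact Finset.sum_congr rfl fun j _ => mul_left_comm a (B t i j) (p a t j)
    have h2 : (∫ a in (0:ℝ)..(n:ℝ), ((∑ j, B t i j * (a * p a t j)) - a * pa a t i))
        = (∫ a in (0:ℝ)..(n:ℝ), ∑ j, B t i j * (a * p a t j))
          - ∫ a in (0:ℝ)..(n:ℝ), a * pa a t i :=
      intervalIntegral.integral_sub hintsum hintapa
    have h3 : (∫ a in (0:ℝ)..(n:ℝ), ∑ j, B t i j * (a * p a t j))
        = ∑ j, B t i j * ∫ a in (0:ℝ)..(n:ℝ), a * p a t j := by
      rw [intervalIntegral.integral_finset_sum (fun j _ => (hintap j).const_mul (B t i j))]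
      exact Finset.sum_congr rfl fun j _ => intervalIntegral.integral_const_mul _ _
    have h4 : (∫ a in (0:ℝ)..(n:ℝ), a * pa a t i)
        = (n:ℝ) * p (n:ℝ) t i - ∫ a in (0:ℝ)..(n:ℝ), p a t i := by
      have hder : ∀ a ∈ uIcc (0:ℝ) (n:ℝ),
          HasDerivAt (fun a' => a' * p a' t i) (1 * p a t i + a * pa a t i) a := by
        intro a ha
        exact (hasDerivAt_id a).mul (hpa a (by rw [huIcc] at ha; exact ha.1) t ht i)
      have hintc : IntervalIntegrable (fun a => 1 * p a t i + a * pa a t i) volume 0 (n:ℝ) := by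
        simpa using ((hintp i).const_mul 1).add hintapa
      have hFTC := intervalIntegral.integral_eq_sub_of_hasDerivAt hder hintc
      have hsplit : (∫ a in (0:ℝ)..(n:ℝ), (1 * p a t i + a * pa a t i))
          = (∫ a in (0:ℝ)..(n:ℝ), 1 * p a t i) + ∫ a in (0:ℝ)..(n:ℝ), a * pa a t i :=
        intervalIntegral.integral_add ((hintp i).const_mul 1) hintapa
      have hone : (∫ a in (0:ℝ)..(n:ℝ), 1 * p a t i) = ∫ a in (0:ℝ)..(n:ℝ), p a t i := by
        simp
      rw [hsplit, hone] at hFTC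
      have : (n:ℝ) * p (n:ℝ) t i - 0 * p 0 t i = (n:ℝ) * p (n:ℝ) t i := by ring
      rw [this] at hFTC
      linarith
    have : (∫ a in (0:ℝ)..(n:ℝ), a * pt a t i)
        = (∑ j, B t i j * ∫ a in (0:ℝ)..(n:ℝ), a * p a t j)
          + (∫ a in (0:ℝ)..(n:ℝ), p a t i) - (n:ℝ) * p (n:ℝ) t i := by
      rw [h1, h2, h3, h4]; ring
    rwa [this] at base

  -- continuity of truncated moments
  have hHcont : ∀ (n : ℕ) (i : Fin d), ContinuousOn (fun τ => ∫ a in (0:ℝ)..(n:ℝ), p a τ i) I :=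
    fun n i τ hτ => (hHder n i τ hτ).continuousAt.continuousWithinAt
  have hGcont : ∀ (n : ℕ) (i : Fin d),
      ContinuousOn (fun τ => ∫ a in (0:ℝ)..(n:ℝ), a * p a τ i) I :=
    fun n i τ hτ => (hGder n i τ hτ).continuousAt.continuousWithinAt
  -- limits of truncated moments
  have tendstoGen : ∀ (f : ℝ → ℝ), IntegrableOn f (Ici 0) volume → ∀ (e : ℕ → ℝ),
      Tendsto e atTop atTop →
      Tendsto (fun n : ℕ => ∫ a in (0:ℝ)..(e n), f a) atTop (𝓝 (∫ a in Ici (0:ℝ), f a)) := by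
    intro f hf e he
    rw [MeasureTheory.integral_Ici_eq_integral_Ioi]
    exact MeasureTheory.intervalIntegral_tendsto_integral_Ioi 0
      (hf.mono_set Ioi_subset_Ici_self) he
  have hcastTop : Tendsto (fun n : ℕ => (n:ℝ)) atTop atTop := tendsto_natCast_atTop_atTop
  have tendstoH : ∀ t ∈ I, ∀ j : Fin d,
      Tendsto (fun n : ℕ => ∫ a in (0:ℝ)..(n:ℝ), p a t j) atTop (𝓝 (x t j)) := by
    intro t ht j
    rw [hxdef t ht j]
    exact tendstoGen _ (hp_int t ht j) _ hcastTop
  have tendstoG : ∀ t ∈ I, ∀ j : Fin d,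
      Tendsto (fun n : ℕ => ∫ a in (0:ℝ)..(n:ℝ), a * p a t j) atTop (𝓝 (m t j)) := by
    intro t ht j
    exact tendstoGen _ (hap_int t ht j) _ hcastTop
  -- bounds for truncated moments
  have Hnn : ∀ (n : ℕ), ∀ t ∈ I, ∀ j : Fin d, 0 ≤ ∫ a in (0:ℝ)..(n:ℝ), p a t j := by
    intro n t ht j
    apply intervalIntegral.integral_nonneg n.cast_nonneg
    exact fun a ha => hpnn a ha.1 t ht j
  have Gnn : ∀ (n : ℕ), ∀ t ∈ I, ∀ j : Fin d, 0 ≤ ∫ a in (0:ℝ)..(n:ℝ), a * p a t j := by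
    intro n t ht j
    apply intervalIntegral.integral_nonneg n.cast_nonneg
    exact fun a ha => mul_nonneg ha.1 (hpnn a ha.1 t ht j)
  have Hle : ∀ (n : ℕ), ∀ t ∈ I, ∀ j : Fin d, (∫ a in (0:ℝ)..(n:ℝ), p a t j) ≤ x t j := by
    intro n t ht j
    rw [intervalIntegral.integral_of_le n.cast_nonneg, hxdef t ht j]
    refine setIntegral_mono_set (hp_int t ht j) ?_ ?_
    · exact (ae_restrict_iff' measurableSet_Ici).mpr
        (Filter.Eventually.of_forall fun a ha => hpnn a ha t ht j)
    · exact HasSubset.Subset.eventuallyLE (Ioc_subset_Icc_self.trans Icc_subset_Ici_self)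
  have Gle : ∀ (n : ℕ), ∀ t ∈ I, ∀ j : Fin d, (∫ a in (0:ℝ)..(n:ℝ), a * p a t j) ≤ m t j := by
    intro n t ht j
    show (∫ a in (0:ℝ)..(n:ℝ), a * p a t j) ≤ ∫ a in Ici (0:ℝ), a * p a t j
    rw [intervalIntegral.integral_of_le n.cast_nonneg]
    refine setIntegral_mono_set (hap_int t ht j) ?_ ?_
    · exact (ae_restrict_iff' measurableSet_Ici).mpr
        (Filter.Eventually.of_forall fun a ha => mul_nonneg ha (hpnn a ha t ht j))
    · exact HasSubset.Subset.eventuallyLE (Ioc_subset_Icc_self.trans Icc_subset_Ici_self)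
  -- integrand continuity
  have hEXcont : ∀ (n : ℕ) (i : Fin d), ContinuousOn
      (fun τ => (∑ j, B τ i j * ∫ a in (0:ℝ)..(n:ℝ), p a τ j) + s τ i) I :=
    fun n i => (continuousOn_finset_sum _ fun j _ => (hBentry i j).mul (hHcont n j)).add
      (hsentry i)
  have hEMcont : ∀ (n : ℕ) (i : Fin d), ContinuousOn
      (fun τ => (∑ j, B τ i j * ∫ a in (0:ℝ)..(n:ℝ), a * p a τ j)
        + ∫ a in (0:ℝ)..(n:ℝ), p a τ i) I :=
    fun n i => (continuousOn_finset_sum _ fun j _ => (hBentry i j).mul (hGcont n j)).add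
      (hHcont n i)
  have hpncont : ∀ (n : ℕ) (i : Fin d), ContinuousOn (fun τ => p (n:ℝ) τ i) I :=
    fun n i => sliceT (n:ℝ) n.cast_nonneg i
  -- FTC in time for the truncated moments
  have hHkey : ∀ (n : ℕ) (i : Fin d), ∀ t₁ ∈ I, ∀ t₂ ∈ I,
      (∫ a in (0:ℝ)..(n:ℝ), p a t₂ i) - (∫ a in (0:ℝ)..(n:ℝ), p a t₁ i)
        = ∫ τ in t₁..t₂,
            (((∑ j, B τ i j * ∫ a in (0:ℝ)..(n:ℝ), p a τ j) + s τ i) - p (n:ℝ) τ i) := by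
    intro n i t₁ h1 t₂ h2
    have hsub := huIccI h1 h2
    refine (intervalIntegral.integral_eq_sub_of_hasDerivAt
      (fun τ hτ => hHder n i τ (hsub hτ)) ?_).symm
    exact ((((hEXcont n i).sub (hpncont n i))).mono hsub).intervalIntegrable
  have hGkey : ∀ (n : ℕ) (i : Fin d), ∀ t₁ ∈ I, ∀ t₂ ∈ I,
      (∫ a in (0:ℝ)..(n:ℝ), a * p a t₂ i) - (∫ a in (0:ℝ)..(n:ℝ), a * p a t₁ i)
        = ∫ τ in t₁..t₂,
            (((∑ j, B τ i j * ∫ a in (0:ℝ)..(n:ℝ), a * p a τ j)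
              + ∫ a in (0:ℝ)..(n:ℝ), p a τ i) - (n:ℝ) * p (n:ℝ) τ i) := by
    intro n i t₁ h1 t₂ h2
    have hsub := huIccI h1 h2
    refine (intervalIntegral.integral_eq_sub_of_hasDerivAt
      (fun τ hτ => hGder n i τ (hsub hτ)) ?_).symm
    exact (((hEMcont n i).sub (continuousOn_const.mul (hpncont n i))).mono
      hsub).intervalIntegrable
  -- the crucial vanishing limits
  have hQ0 : ∀ (i : Fin d), ∀ t₁ ∈ I, ∀ t₂ ∈ I, t₁ ≤ t₂ →
      Tendsto (fun n : ℕ => ∫ τ in t₁..t₂, (n:ℝ) * p (n:ℝ) τ i) atTop (𝓝 0) := by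
    intro i t₁ h1 t₂ h2 h12
    have hIccI : Icc t₁ t₂ ⊆ I := hIconn.out h1 h2
    obtain ⟨K, hK⟩ := IsCompact.exists_bound_of_continuousOn isCompact_Icc
      (f := fun τ => ∑ i' : Fin d, ∑ j : Fin d, |B τ i' j|)
      (continuousOn_finset_sum _ fun i' _ => continuousOn_finset_sum _ fun j _ =>
        ((hBentry i' j).mono hIccI).abs)
    have hKnn : 0 ≤ K := le_trans (norm_nonneg _) (hK t₁ (left_mem_Icc.mpr h12))
    have hBle : ∀ τ ∈ Icc t₁ t₂, ∀ i' j : Fin d, |B τ i' j| ≤ K := by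
      intro τ hτ i' j
      have h' := hK τ hτ
      rw [Real.norm_eq_abs,
        abs_of_nonneg (Finset.sum_nonneg fun _ _ => Finset.sum_nonneg fun _ _ => abs_nonneg _)]
        at h'
      calc |B τ i' j| ≤ ∑ j' : Fin d, |B τ i' j'| :=
            Finset.single_le_sum (f := fun j' => |B τ i' j'|) (fun _ _ => abs_nonneg _)
              (Finset.mem_univ j)
        _ ≤ ∑ i'' : Fin d, ∑ j' : Fin d, |B τ i'' j'| :=
            Finset.single_le_sum (f := fun i'' => ∑ j' : Fin d, |B τ i'' j'|)
              (fun _ _ => Finset.sum_nonneg fun _ _ => abs_nonneg _) (Finset.mem_univ i')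
        _ ≤ K := h'
    set C : ℝ := Real.exp ((d : ℝ) * K * (t₂ - t₁)) with hC
    have hCpos : 0 < C := Real.exp_pos _
    have gron : ∀ n : ℕ, t₂ - t₁ + 1 ≤ (n:ℝ) → ∀ τ ∈ Icc t₁ t₂,
        p (n:ℝ) τ i ≤ C * ∑ j, p ((n:ℝ) - (τ - t₁)) t₁ j := by
      intro n hn τ hτ
      have hτI : τ ∈ I := hIccI hτ
      have hIccτ : Icc t₁ τ ⊆ I := fun σ hσ => hIccI ⟨hσ.1, le_trans hσ.2 hτ.2⟩
      have hcσ : ∀ σ ∈ Icc t₁ τ, 0 < (n:ℝ) - τ + σ := by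
        intro σ hσ
        have h1' := hσ.1; have h2' := hτ.2
        nlinarith
      have hqder : ∀ σ ∈ Icc t₁ τ, HasDerivAt (fun σ' => ∑ j, p ((n:ℝ) - τ + σ') σ' j)
          (∑ j, (pa ((n:ℝ) - τ + σ) σ j + pt ((n:ℝ) - τ + σ) σ j)) σ := by
        intro σ hσ
        exact HasDerivAt.fun_sum fun j _ => diag_deriv hIopen (fun a t => p a t j)
          (fun a t => pa a t j) (fun a t => pt a t j) (hpacont j)
          (fun a ha t ht' => hpt a ha t ht' j) (fun a ha t ht' => hpa a ha t ht' j)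
          ((n:ℝ) - τ) σ (hIccτ hσ) (hcσ σ hσ)
      have hqnn : ∀ σ ∈ Icc t₁ τ, 0 ≤ ∑ j, p ((n:ℝ) - τ + σ) σ j := fun σ hσ =>
        Finset.sum_nonneg fun j _ => hpnn _ (hcσ σ hσ).le σ (hIccτ hσ) j
      have hbound : ∀ σ ∈ Ico t₁ τ,
          ‖∑ j, (pa ((n:ℝ) - τ + σ) σ j + pt ((n:ℝ) - τ + σ) σ j)‖
            ≤ ((d:ℝ) * K) * ‖∑ j, p ((n:ℝ) - τ + σ) σ j‖ + 0 := by
        intro σ hσ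
        have hσ' : σ ∈ Icc t₁ τ := Ico_subset_Icc_self hσ
        have hσI : σ ∈ I := hIccτ hσ'
        have hσ2 : σ ∈ Icc t₁ t₂ := ⟨hσ'.1, le_trans hσ'.2 hτ.2⟩
        have hrw : (∑ j, (pa ((n:ℝ) - τ + σ) σ j + pt ((n:ℝ) - τ + σ) σ j))
            = ∑ j : Fin d, ∑ k, B σ j k * p ((n:ℝ) - τ + σ) σ k := by
          refine Finset.sum_congr rfl fun j _ => ?_
          have := hMvF ((n:ℝ) - τ + σ) (hcσ σ hσ').le σ hσI j
          linarith
        rw [hrw, Real.norm_eq_abs, Real.norm_eq_abs, abs_of_nonneg (hqnn σ hσ'), add_zero]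
        calc |∑ j : Fin d, ∑ k, B σ j k * p ((n:ℝ) - τ + σ) σ k|
            ≤ ∑ j : Fin d, |∑ k, B σ j k * p ((n:ℝ) - τ + σ) σ k| :=
              Finset.abs_sum_le_sum_abs _ _
          _ ≤ ∑ j : Fin d, ∑ k, |B σ j k * p ((n:ℝ) - τ + σ) σ k| :=
              Finset.sum_le_sum fun j _ => Finset.abs_sum_le_sum_abs _ _
          _ ≤ ∑ _j : Fin d, ∑ k, K * p ((n:ℝ) - τ + σ) σ k := by
              refine Finset.sum_le_sum fun j _ => Finset.sum_le_sum fun k _ => ?_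
              rw [abs_mul, abs_of_nonneg (hpnn _ (hcσ σ hσ').le σ hσI k)]
              exact mul_le_mul_of_nonneg_right (hBle σ hσ2 j k)
                (hpnn _ (hcσ σ hσ').le σ hσI k)
          _ = ((d:ℝ) * K) * ∑ j, p ((n:ℝ) - τ + σ) σ j := by
              rw [Finset.sum_const, Finset.card_univ, Fintype.card_fin, nsmul_eq_mul,
                ← Finset.mul_sum]
              ring
      have happ := norm_le_gronwallBound_of_norm_deriv_right_le
        (f := fun σ => ∑ j, p ((n:ℝ) - τ + σ) σ j)
        (f' := fun σ => ∑ j, (pa ((n:ℝ) - τ + σ) σ j + pt ((n:ℝ) - τ + σ) σ j))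
        (δ := ∑ j, p ((n:ℝ) - τ + t₁) t₁ j) (K := (d:ℝ)*K) (ε := 0) (a := t₁) (b := τ)
        (fun σ hσ => ((hqder σ hσ).continuousAt.continuousWithinAt))
        (fun σ hσ => (hqder σ (Ico_subset_Icc_self hσ)).hasDerivWithinAt)
        (le_of_eq (by rw [Real.norm_eq_abs, abs_of_nonneg (hqnn t₁ (left_mem_Icc.mpr hτ.1))]))
        hbound τ (right_mem_Icc.mpr hτ.1)
      rw [gronwallBound_ε0, Real.norm_eq_abs,
        abs_of_nonneg (hqnn τ (right_mem_Icc.mpr hτ.1))] at happ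
      have hτn : (n:ℝ) - τ + τ = (n:ℝ) := by ring
      have hτ1 : (n:ℝ) - τ + t₁ = (n:ℝ) - (τ - t₁) := by ring
      rw [hτn, hτ1] at happ
      have hsingle : p (n:ℝ) τ i ≤ ∑ j, p (n:ℝ) τ j :=
        Finset.single_le_sum (f := fun j => p (n:ℝ) τ j)
          (fun k _ => hpnn _ n.cast_nonneg τ hτI k) (Finset.mem_univ i)
      have hq1nn : 0 ≤ ∑ j, p ((n:ℝ) - (τ - t₁)) t₁ j := by
        rw [← hτ1]
        exact hqnn t₁ (left_mem_Icc.mpr hτ.1)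
      have hexp : Real.exp ((d:ℝ) * K * (τ - t₁)) ≤ C := by
        rw [hC]
        apply Real.exp_le_exp.mpr
        have h1' := hτ.1; have h2' := hτ.2
        have hd0 : (0:ℝ) ≤ (d:ℝ) := Nat.cast_nonneg d
        nlinarith [mul_nonneg (mul_nonneg hd0 hKnn) (sub_nonneg.mpr h2')]
      calc p (n:ℝ) τ i ≤ ∑ j, p (n:ℝ) τ j := hsingle
        _ ≤ (∑ j, p ((n:ℝ) - (τ - t₁)) t₁ j) * Real.exp ((d:ℝ)*K*(τ - t₁)) := happ
        _ ≤ (∑ j, p ((n:ℝ) - (τ - t₁)) t₁ j) * C := mul_le_mul_of_nonneg_left hexp hq1nn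
        _ = C * ∑ j, p ((n:ℝ) - (τ - t₁)) t₁ j := mul_comm _ _
    -- compare with a tail integral of the integrable first moment
    have hgcont : ContinuousOn (fun u : ℝ => 2*C*(u * ∑ j, p u t₁ j)) (Ici 0) :=
      continuousOn_const.mul ((continuousOn_id).mul
        (continuousOn_finset_sum _ fun j _ => sliceA t₁ h1 j))
    have hfinal : ∀ n : ℕ, 2*(t₂ - t₁) + 2 ≤ (n:ℝ) →
        (∫ τ in t₁..t₂, (n:ℝ) * p (n:ℝ) τ i)
          ≤ (∫ u in (0:ℝ)..(n:ℝ), 2*C*(u * ∑ j, p u t₁ j))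
            - ∫ u in (0:ℝ)..((n:ℝ) - (t₂ - t₁)), 2*C*(u * ∑ j, p u t₁ j) := by
      intro n hn
      have hn1 : t₂ - t₁ + 1 ≤ (n:ℝ) := by linarith
      have hpw : ∀ τ ∈ Icc t₁ t₂, (n:ℝ) * p (n:ℝ) τ i
          ≤ 2*C*((((n:ℝ)+t₁) - τ) * ∑ j, p (((n:ℝ)+t₁) - τ) t₁ j) := by
        intro τ hτ
        have hg := gron n hn1 τ hτ
        have hu : (n:ℝ) - (τ - t₁) = ((n:ℝ)+t₁) - τ := by ring
        rw [hu] at hg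
        have hτ2 := hτ.2
        have hunn : 0 ≤ ∑ j, p (((n:ℝ)+t₁) - τ) t₁ j := by
          refine Finset.sum_nonneg fun j _ => hpnn _ ?_ t₁ h1 j
          linarith
        have hn2u : (n:ℝ) ≤ 2*(((n:ℝ)+t₁) - τ) := by linarith
        calc (n:ℝ) * p (n:ℝ) τ i ≤ (n:ℝ) * (C * ∑ j, p (((n:ℝ)+t₁) - τ) t₁ j) :=
              mul_le_mul_of_nonneg_left hg n.cast_nonneg
          _ ≤ (2*(((n:ℝ)+t₁) - τ)) * (C * ∑ j, p (((n:ℝ)+t₁) - τ) t₁ j) :=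
              mul_le_mul_of_nonneg_right hn2u (by positivity)
          _ = 2*C*((((n:ℝ)+t₁) - τ) * ∑ j, p (((n:ℝ)+t₁) - τ) t₁ j) := by ring
      have hint1 : IntervalIntegrable (fun τ => (n:ℝ) * p (n:ℝ) τ i) volume t₁ t₂ :=
        ((continuousOn_const.mul (hpncont n i)).mono (huIccI h1 h2)).intervalIntegrable
      have hmaps : ∀ τ ∈ uIcc t₁ t₂, (((n:ℝ)+t₁) - τ) ∈ Ici (0:ℝ) := by
        intro τ hτ
        rw [uIcc_of_le h12] at hτ
        have := hτ.2
        simp only [mem_Ici]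
        linarith
      have hint2 : IntervalIntegrable
          (fun τ => 2*C*((((n:ℝ)+t₁) - τ) * ∑ j, p (((n:ℝ)+t₁) - τ) t₁ j)) volume t₁ t₂ := by
        apply ContinuousOn.intervalIntegrable
        exact hgcont.comp (Continuous.continuousOn (continuous_const.sub continuous_id)) hmaps
      have hstep1 : (∫ τ in t₁..t₂, (n:ℝ) * p (n:ℝ) τ i)
          ≤ ∫ τ in t₁..t₂, 2*C*((((n:ℝ)+t₁) - τ) * ∑ j, p (((n:ℝ)+t₁) - τ) t₁ j) :=
        intervalIntegral.integral_mono_on h12 hint1 hint2 hpw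
      have hstep2 : (∫ τ in t₁..t₂, 2*C*((((n:ℝ)+t₁) - τ) * ∑ j, p (((n:ℝ)+t₁) - τ) t₁ j))
          = ∫ u in ((n:ℝ)+t₁-t₂)..((n:ℝ)+t₁-t₁), 2*C*(u * ∑ j, p u t₁ j) :=
        intervalIntegral.integral_comp_sub_left (fun u => 2*C*(u * ∑ j, p u t₁ j)) ((n:ℝ)+t₁)
      have he1 : (n:ℝ)+t₁-t₁ = (n:ℝ) := by ring
      have he2 : (n:ℝ)+t₁-t₂ = (n:ℝ) - (t₂ - t₁) := by ring
      rw [he1, he2] at hstep2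
      rw [hstep2] at hstep1
      have hint3 : IntervalIntegrable (fun u => 2*C*(u * ∑ j, p u t₁ j)) volume
          0 ((n:ℝ) - (t₂-t₁)) := by
        apply ContinuousOn.intervalIntegrable
        apply hgcont.mono
        rw [uIcc_of_le (by linarith)]
        exact Icc_subset_Ici_self
      have hint4 : IntervalIntegrable (fun u => 2*C*(u * ∑ j, p u t₁ j)) volume
          ((n:ℝ) - (t₂-t₁)) (n:ℝ) := by
        apply ContinuousOn.intervalIntegrable
        apply hgcont.mono
        rw [uIcc_of_le (by linarith)]
        exact fun u hu => le_trans (by linarith) hu.1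
      have hsplit := intervalIntegral.integral_add_adjacent_intervals hint3 hint4
      linarith
    have hgint : IntegrableOn (fun u : ℝ => 2*C*(u * ∑ j, p u t₁ j)) (Ici 0) volume := by
      have hsum : IntegrableOn (fun u : ℝ => ∑ j, u * p u t₁ j) (Ici 0) volume :=
        MeasureTheory.integrable_finset_sum _ (fun j _ => hap_int t₁ h1 j)
      have h2' : IntegrableOn (fun u : ℝ => 2*C*(∑ j, u * p u t₁ j)) (Ici 0) volume :=
        hsum.const_mul (2*C)
      refine h2'.congr_fun (fun u _ => ?_) measurableSet_Ici
      show 2*C*(∑ j, u * p u t₁ j) = 2*C*(u * ∑ j, p u t₁ j)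
      rw [Finset.mul_sum, Finset.mul_sum, Finset.mul_sum]
    have htail1 : Tendsto (fun n : ℕ => ∫ u in (0:ℝ)..(n:ℝ), 2*C*(u * ∑ j, p u t₁ j)) atTop
        (𝓝 (∫ u in Ici (0:ℝ), 2*C*(u * ∑ j, p u t₁ j))) := tendstoGen _ hgint _ hcastTop
    have htail2 : Tendsto (fun n : ℕ =>
        ∫ u in (0:ℝ)..((n:ℝ) - (t₂-t₁)), 2*C*(u * ∑ j, p u t₁ j)) atTop
        (𝓝 (∫ u in Ici (0:ℝ), 2*C*(u * ∑ j, p u t₁ j))) := by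
      refine tendstoGen _ hgint _ ?_
      exact Filter.Tendsto.congr (fun n => by ring)
        (tendsto_atTop_add_const_right atTop (-(t₂-t₁)) hcastTop)
    have hdiff0 : Tendsto (fun n : ℕ => (∫ u in (0:ℝ)..(n:ℝ), 2*C*(u * ∑ j, p u t₁ j))
        - ∫ u in (0:ℝ)..((n:ℝ) - (t₂-t₁)), 2*C*(u * ∑ j, p u t₁ j)) atTop (𝓝 0) := by
      have := htail1.sub htail2
      simpa using this
    refine squeeze_zero' ?_ ?_ hdiff0
    · filter_upwards with n
      apply intervalIntegral.integral_nonneg h12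
      exact fun τ hτ => mul_nonneg n.cast_nonneg (hpnn _ n.cast_nonneg τ (hIccI hτ) i)
    · filter_upwards [hcastTop.eventually_ge_atTop (2*(t₂-t₁)+2)] with n hn
      exact hfinal n hn
  have hP0 : ∀ (i : Fin d), ∀ t₁ ∈ I, ∀ t₂ ∈ I, t₁ ≤ t₂ →
      Tendsto (fun n : ℕ => ∫ τ in t₁..t₂, p (n:ℝ) τ i) atTop (𝓝 0) := by
    intro i t₁ h1 t₂ h2 h12
    have hIccI : Icc t₁ t₂ ⊆ I := hIconn.out h1 h2
    refine squeeze_zero' ?_ ?_ (hQ0 i t₁ h1 t₂ h2 h12)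
    · filter_upwards with n
      apply intervalIntegral.integral_nonneg h12
      exact fun τ hτ => hpnn _ n.cast_nonneg τ (hIccI hτ) i
    · filter_upwards [hcastTop.eventually_ge_atTop 1] with n hn
      apply intervalIntegral.integral_mono_on h12
        (((hpncont n i).mono (huIccI h1 h2)).intervalIntegrable)
        (((continuousOn_const.mul (hpncont n i)).mono (huIccI h1 h2)).intervalIntegrable)
      intro τ hτ
      show p (n:ℝ) τ i ≤ (n:ℝ) * p (n:ℝ) τ i
      nlinarith [hpnn (n:ℝ) n.cast_nonneg τ (hIccI hτ) i]
  -- the two key integral identities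
  have keyX : ∀ (i : Fin d), ∀ t₁ ∈ I, ∀ t₂ ∈ I, t₁ ≤ t₂ →
      x t₂ i - x t₁ i = ∫ τ in t₁..t₂, ((∑ j, B τ i j * x τ j) + s τ i) := by
    intro i t₁ h1 t₂ h2 h12
    have hsub := huIccI h1 h2
    have huIoc : uIoc t₁ t₂ ⊆ I := fun τ hτ => hsub (uIoc_subset_uIcc hτ)
    have hsplit : ∀ n : ℕ,
        (∫ a in (0:ℝ)..(n:ℝ), p a t₂ i) - (∫ a in (0:ℝ)..(n:ℝ), p a t₁ i)
          = (∫ τ in t₁..t₂, ((∑ j, B τ i j * ∫ a in (0:ℝ)..(n:ℝ), p a τ j) + s τ i))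
            - ∫ τ in t₁..t₂, p (n:ℝ) τ i := by
      intro n
      rw [hHkey n i t₁ h1 t₂ h2]
      exact intervalIntegral.integral_sub (((hEXcont n i).mono hsub).intervalIntegrable)
        (((hpncont n i).mono hsub).intervalIntegrable)
    have hL1 : Tendsto (fun n : ℕ =>
        ∫ τ in t₁..t₂, ((∑ j, B τ i j * ∫ a in (0:ℝ)..(n:ℝ), p a τ j) + s τ i)) atTop
        (𝓝 (∫ τ in t₁..t₂, ((∑ j, B τ i j * x τ j) + s τ i))) := by
      refine intervalIntegral.tendsto_integral_filter_of_dominated_convergence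
        (bound := fun τ => (∑ j, |B τ i j| * x τ j) + s τ i) ?_ ?_ ?_ ?_
      · filter_upwards with n
        exact ((hEXcont n i).mono huIoc).aestronglyMeasurable measurableSet_uIoc
      · filter_upwards with n
        filter_upwards with τ
        intro hτ
        have hτI : τ ∈ I := huIoc hτ
        rw [Real.norm_eq_abs]
        have hb1 : |∑ j, B τ i j * ∫ a in (0:ℝ)..(n:ℝ), p a τ j|
            ≤ ∑ j, |B τ i j| * x τ j := by
          refine le_trans (Finset.abs_sum_le_sum_abs _ _) (Finset.sum_le_sum fun j _ => ?_)
          rw [abs_mul, abs_of_nonneg (Hnn n τ hτI j)]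
          exact mul_le_mul_of_nonneg_left (Hle n τ hτI j) (abs_nonneg _)
        have hb2 := abs_add_le (∑ j, B τ i j * ∫ a in (0:ℝ)..(n:ℝ), p a τ j) (s τ i)
        have hb3 : |s τ i| = s τ i := abs_of_nonneg (hsnn τ hτI i)
        linarith
      · exact (((continuousOn_finset_sum _ fun j _ => ((hBentry i j).abs.mul (hxcont j))).add
          (hsentry i)).mono hsub).intervalIntegrable
      · filter_upwards with τ
        intro hτ
        have hτI : τ ∈ I := huIoc hτ
        exact Filter.Tendsto.add_const (s τ i)
          (tendsto_finset_sum _ fun j _ => (tendstoH τ hτI j).const_mul (B τ i j))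
    have hseq : Tendsto (fun n : ℕ =>
        (∫ a in (0:ℝ)..(n:ℝ), p a t₂ i) - (∫ a in (0:ℝ)..(n:ℝ), p a t₁ i)) atTop
        (𝓝 (x t₂ i - x t₁ i)) := (tendstoH t₂ h2 i).sub (tendstoH t₁ h1 i)
    have hseq2 : Tendsto (fun n : ℕ =>
        (∫ a in (0:ℝ)..(n:ℝ), p a t₂ i) - (∫ a in (0:ℝ)..(n:ℝ), p a t₁ i)) atTop
        (𝓝 ((∫ τ in t₁..t₂, ((∑ j, B τ i j * x τ j) + s τ i)) - 0)) := by
      simp only [hsplit]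
      exact hL1.sub (hP0 i t₁ h1 t₂ h2 h12)
    have := tendsto_nhds_unique hseq hseq2
    rwa [sub_zero] at this
  have keyM : ∀ (i : Fin d), ∀ t₁ ∈ I, ∀ t₂ ∈ I, t₁ ≤ t₂ →
      m t₂ i - m t₁ i = ∫ τ in t₁..t₂, ((∑ j, B τ i j * m τ j) + x τ i) := by
    intro i t₁ h1 t₂ h2 h12
    have hsub := huIccI h1 h2
    have huIoc : uIoc t₁ t₂ ⊆ I := fun τ hτ => hsub (uIoc_subset_uIcc hτ)
    have hsplit : ∀ n : ℕ,
        (∫ a in (0:ℝ)..(n:ℝ), a * p a t₂ i) - (∫ a in (0:ℝ)..(n:ℝ), a * p a t₁ i)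
          = (∫ τ in t₁..t₂, ((∑ j, B τ i j * ∫ a in (0:ℝ)..(n:ℝ), a * p a τ j)
              + ∫ a in (0:ℝ)..(n:ℝ), p a τ i))
            - ∫ τ in t₁..t₂, (n:ℝ) * p (n:ℝ) τ i := by
      intro n
      rw [hGkey n i t₁ h1 t₂ h2]
      exact intervalIntegral.integral_sub (((hEMcont n i).mono hsub).intervalIntegrable)
        (((continuousOn_const.mul (hpncont n i)).mono hsub).intervalIntegrable)
    have hL1 : Tendsto (fun n : ℕ =>
        ∫ τ in t₁..t₂, ((∑ j, B τ i j * ∫ a in (0:ℝ)..(n:ℝ), a * p a τ j)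
          + ∫ a in (0:ℝ)..(n:ℝ), p a τ i)) atTop
        (𝓝 (∫ τ in t₁..t₂, ((∑ j, B τ i j * m τ j) + x τ i))) := by
      refine intervalIntegral.tendsto_integral_filter_of_dominated_convergence
        (bound := fun τ => (∑ j, |B τ i j| * m τ j) + x τ i) ?_ ?_ ?_ ?_
      · filter_upwards with n
        exact ((hEMcont n i).mono huIoc).aestronglyMeasurable measurableSet_uIoc
      · filter_upwards with n
        filter_upwards with τ
        intro hτ
        have hτI : τ ∈ I := huIoc hτ
        rw [Real.norm_eq_abs]
        have hb1 : |∑ j, B τ i j * ∫ a in (0:ℝ)..(n:ℝ), a * p a τ j|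
            ≤ ∑ j, |B τ i j| * m τ j := by
          refine le_trans (Finset.abs_sum_le_sum_abs _ _) (Finset.sum_le_sum fun j _ => ?_)
          rw [abs_mul, abs_of_nonneg (Gnn n τ hτI j)]
          exact mul_le_mul_of_nonneg_left (Gle n τ hτI j) (abs_nonneg _)
        have hb2 := abs_add_le (∑ j, B τ i j * ∫ a in (0:ℝ)..(n:ℝ), a * p a τ j)
          (∫ a in (0:ℝ)..(n:ℝ), p a τ i)
        have hb3 : |∫ a in (0:ℝ)..(n:ℝ), p a τ i| = ∫ a in (0:ℝ)..(n:ℝ), p a τ i :=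
          abs_of_nonneg (Hnn n τ hτI i)
        have hb4 := Hle n τ hτI i
        linarith
      · exact (((continuousOn_finset_sum _ fun j _ => ((hBentry i j).abs.mul (hmcont j))).add
          (hxcont i)).mono hsub).intervalIntegrable
      · filter_upwards with τ
        intro hτ
        have hτI : τ ∈ I := huIoc hτ
        exact Filter.Tendsto.add
          (tendsto_finset_sum _ fun j _ => (tendstoG τ hτI j).const_mul (B τ i j))
          (tendstoH τ hτI i)
    have hseq : Tendsto (fun n : ℕ =>
        (∫ a in (0:ℝ)..(n:ℝ), a * p a t₂ i) - (∫ a in (0:ℝ)..(n:ℝ), a * p a t₁ i)) atTop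
        (𝓝 (m t₂ i - m t₁ i)) := (tendstoG t₂ h2 i).sub (tendstoG t₁ h1 i)
    have hseq2 : Tendsto (fun n : ℕ =>
        (∫ a in (0:ℝ)..(n:ℝ), a * p a t₂ i) - (∫ a in (0:ℝ)..(n:ℝ), a * p a t₁ i)) atTop
        (𝓝 ((∫ τ in t₁..t₂, ((∑ j, B τ i j * m τ j) + x τ i)) - 0)) := by
      simp only [hsplit]
      exact hL1.sub (hQ0 i t₁ h1 t₂ h2 h12)
    have := tendsto_nhds_unique hseq hseq2
    rwa [sub_zero] at this
  -- from integral identity to derivative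
  have mkDeriv : ∀ (y : ℝ → Fin d → ℝ) (f : ℝ → ℝ) (i : Fin d), ContinuousOn f I →
      (∀ t₁ ∈ I, ∀ t₂ ∈ I, t₁ ≤ t₂ → y t₂ i - y t₁ i = ∫ τ in t₁..t₂, f τ) →
      ∀ t ∈ I, HasDerivAt (fun τ => y τ i) (f t) t := by
    intro y f i hfc hkey t ht
    obtain ⟨ε, hεpos, hball⟩ := Metric.isOpen_iff.mp hIopen t ht
    have hd2 : dist (t - ε/2) t < ε := by
      rw [Real.dist_eq]
      have he : t - ε/2 - t = -(ε/2) := by ring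
      rw [he, abs_neg, abs_of_pos (by positivity)]
      linarith
    have ht₁ : t - ε/2 ∈ I := hball (Metric.mem_ball.mpr hd2)
    have hF : HasDerivAt (fun τ => y (t - ε/2) i + ∫ σ in (t - ε/2)..τ, f σ) (f t) t := by
      have hi1 : IntervalIntegrable f volume (t - ε/2) t :=
        (hfc.mono (huIccI ht₁ ht)).intervalIntegrable
      have hi2 : StronglyMeasurableAtFilter f (𝓝 t) volume :=
        hfc.stronglyMeasurableAtFilter hIopen t ht
      have hi3 : ContinuousAt f t := hfc.continuousAt (hIopen.mem_nhds ht)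
      exact (intervalIntegral.integral_hasDerivAt_right hi1 hi2 hi3).const_add (y (t - ε/2) i)
    apply hF.congr_of_eventuallyEq
    filter_upwards [Metric.ball_mem_nhds t (by positivity : (0:ℝ) < ε/2)] with τ hτ
    have hτI : τ ∈ I := hball (Metric.ball_subset_ball (by linarith) hτ)
    have ht₁τ : t - ε/2 ≤ τ := by
      have h' := Metric.mem_ball.mp hτ
      rw [Real.dist_eq] at h'
      have h'' := abs_lt.mp h'
      linarith [h''.1]
    have hk := hkey (t - ε/2) ht₁ τ hτI ht₁τ
    show y τ i = y (t - ε/2) i + ∫ σ in (t - ε/2)..τ, f σ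
    linarith
  have part1 : ∀ t ∈ I, ∀ i : Fin d,
      HasDerivAt (fun t' => x t' i) ((∑ j, B t i j * x t j) + s t i) t := by
    intro t ht i
    refine mkDeriv x (fun τ => (∑ j, B τ i j * x τ j) + s τ i) i ?_ (keyX i) t ht
    exact ContinuousOn.add (continuousOn_finset_sum _ fun j _ => (hBentry i j).mul (hxcont j))
      (hsentry i)
  have part2m : ∀ t ∈ I, ∀ i : Fin d,
      HasDerivAt (fun t' => m t' i) ((∑ j, B t i j * m t j) + x t i) t := by
    intro t ht i
    refine mkDeriv m (fun τ => (∑ j, B τ i j * m τ j) + x τ i) i ?_ (keyM i) t ht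
    exact ContinuousOn.add (continuousOn_finset_sum _ fun j _ => (hBentry i j).mul (hmcont j))
      (hxcont i)
  refine ⟨part1, ?_⟩
  -- quotient rule and algebra
  intro t ht i
  have hx' := part1 t ht i
  have hm' := part2m t ht i
  have hx0 : x t i ≠ 0 := (hxpos t ht i).ne'
  have hdiv := hm'.div hx' hx0
  have hev : (fun τ => abar τ i) =ᶠ[𝓝 t] (fun τ => m τ i / x τ i) := by
    filter_upwards [hIopen.mem_nhds ht] with τ hτ
    exact habardef τ hτ i
  have hmm : ∀ j, m t j = abar t j * x t j := by
    intro j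
    rw [habardef t ht j, div_mul_cancel₀]
    exact (hxpos t ht j).ne'
  have hval : (((∑ j, B t i j * m t j) + x t i) * x t i
        - m t i * ((∑ j, B t i j * x t j) + s t i)) / (x t i)^2
      = 1 + ((∑ j, (abar t j - abar t i) * (B t i j * x t j)) - abar t i * s t i) / x t i := by
    have hsum1 : (∑ j, B t i j * m t j) = ∑ j, B t i j * (abar t j * x t j) :=
      Finset.sum_congr rfl fun j _ => by rw [hmm j]
    have hsum2 : (∑ j, (abar t j - abar t i) * (B t i j * x t j))
        = (∑ j, B t i j * (abar t j * x t j)) - abar t i * ∑ j, B t i j * x t j := by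
      rw [Finset.mul_sum, ← Finset.sum_sub_distrib]
      exact Finset.sum_congr rfl fun j _ => by ring
    rw [hsum1, hsum2, hmm i]
    field_simp
    ring
  have hfinal := hdiv.congr_of_eventuallyEq hev
  rwa [hval] at hfinal
end

section
/- Let τ ∈ {-∞} ∪ ℝ, I = (τ,∞), let B : I → ℝ^{d×d} with entries b_{ij} and s : I → [0,∞)^d be bounded continuous, and let x : I → ℝ^d be a solution of ẋ = B(t)x + s(t) whose entries are positive, bounded, and bounded away from zero. Suppose {1,…,d} is partitioned into consecutive blocks J₁,…,J_m such that B(t)_{ij} = 0 whenever i ∈ J_p, j ∈ J_q with p < q, and there exists δ > 0 such that each diagonal block of B(t) has negative diagonal entries, nonnegative within-block off-diagonal entries, and within-block row sums ≤ −δ; furthermore s_i(t) ≥ δ for all i ∈ J₁ and t ∈ I, and for every n ≥ 2 and every i ∈ J_n there exists j ∈ J₁ ∪ ⋯ ∪ J_{n-1} with b_{ij}(t) ≥ δ for all t ∈ I. Define A(t) by A(t)_{ii} = (−s_i(t) − Σ_{j≠i} b_{ij}(t)x_j(t))/x_i(t) and A(t)_{ij} = b_{ij}(t)x_j(t)/x_i(t)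 for j ≠ i. Then the mean age system is exponentially stable: there exist K̄ ≥ 1 and δ̄ ∈ (0,δ) such that every differentiable a : I → ℝ^d with a'(t) = A(t)a(t) for all t ∈ I satisfies ‖a(t)‖ ≤ K̄ e^{-δ̄(t-t₀)} ‖a(t₀)‖ for all t ≥ t₀ > τ. -/
/-- The coefficient matrix `A(t)` of the mean age system along a positive solution `x`:
`A(t)ᵢᵢ = (−sᵢ(t) − ∑_{j≠i} bᵢⱼ(t)xⱼ(t))/xᵢ(t)` and `A(t)ᵢⱼ = bᵢⱼ(t)xⱼ(t)/xᵢ(t)` for `j ≠ i`. -/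
noncomputable def meanAgeMatrix {d : ℕ} (B : ℝ → Matrix (Fin d) (Fin d) ℝ)
    (s : ℝ → (Fin d → ℝ)) (x : ℝ → Fin d → ℝ) (t : ℝ) : Matrix (Fin d) (Fin d) ℝ :=
  Matrix.of fun i j =>
    if i = j then (-s t i - ∑ k ∈ Finset.univ.erase i, B t i k * x t k) / x t i
    else B t i j * x t j / x t i

/-- Dini step: if `h` has derivative `D < r` at `x`, then just to the right of `x`,
`h z ≤ h x + r (z - x)`. -/
private lemma dini_step {h : ℝ → ℝ} {D x r : ℝ} (hd : HasDerivAt h D x) (hr : D < r) :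
    ∀ᶠ z in nhdsWithin x (Set.Ioi x), h z ≤ h x + r * (z - x) := by
  have hmono : nhdsWithin x (Set.Ioi x) ≤ nhdsWithin x {x}ᶜ :=
    nhdsWithin_mono x (fun y hy => ne_of_gt hy)
  have hs : Filter.Tendsto (slope h x) (nhdsWithin x (Set.Ioi x)) (nhds D) :=
    (hasDerivAt_iff_tendsto_slope.1 hd).mono_left hmono
  filter_upwards [hs.eventually_lt_const hr, self_mem_nhdsWithin] with z hz1 hz2
  have hzx : 0 < z - x := sub_pos.2 hz2
  rw [slope_def_field] at hz1
  have := (div_lt_iff₀ hzx).1 hz1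
  linarith

/-- Continuity step: if `h x < F` then just to the right of `x`, `h z ≤ F + r (z - x)`. -/
private lemma cont_step {h : ℝ → ℝ} {x F : ℝ} (hc : ContinuousAt h x) (hF : h x < F) (r : ℝ) :
    ∀ᶠ z in nhdsWithin x (Set.Ioi x), h z ≤ F + r * (z - x) := by
  have hA : ContinuousAt (fun z : ℝ => F + r * (z - x) - h z) x := by
    exact ((continuousAt_const.add (continuousAt_const.mul
      (continuousAt_id.sub continuousAt_const))).sub hc)
  have hval : (0 : ℝ) < F + r * (x - x) - h x := by simp; linarith
  have h2 := Filter.Eventually.filter_mono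
    (nhdsWithin_le_nhds : nhdsWithin x (Set.Ioi x) ≤ nhds x) (hA.eventually_const_lt hval)
  filter_upwards [h2] with z hz
  linarith

set_option maxHeartbeats 1000000 in
/-- exponential stability of the mean age system.
For a nonautonomous compartmental system in block lower triangular form with strictly
diagonally dominant diagonal blocks (constant `δ`), input at least `δ` into the first
block and feeding at rate at least `δ` into every later block, and a positive bounded
solution `x` bounded away from zero, the homogeneous mean age system `ȧ = A(t)a` is
exponentially stable: there exist `K̄ ≥ 1` and `δ̄ ∈ (0,δ)` such that every solution `a`
satisfies `‖a(t)‖ ≤ K̄ e^{-δ̄(t-t₀)} ‖a(t₀)‖` for all `t ≥ t₀ > τ`. -/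
theorem stmt_9 (d m : ℕ) (τ : EReal) (hτ : τ ≠ ⊤)
    (B : ℝ → Matrix (Fin d) (Fin d) ℝ) (s : ℝ → (Fin d → ℝ))
    (hBcont : ContinuousOn B {t : ℝ | τ < (t : EReal)})
    (hBbdd : ∃ C : ℝ, ∀ t : ℝ, τ < (t : EReal) → ∀ i j : Fin d, |B t i j| ≤ C)
    (hscont : ContinuousOn s {t : ℝ | τ < (t : EReal)})
    (hsbdd : ∃ C : ℝ, ∀ t : ℝ, τ < (t : EReal) → ‖s t‖ ≤ C)
    (hsnn : ∀ t : ℝ, τ < (t : EReal) → ∀ i : Fin d, 0 ≤ s t i)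
    -- `B(t)` is a compartmental matrix:
    (hBdiag : ∀ t : ℝ, τ < (t : EReal) → ∀ i : Fin d, B t i i < 0)
    (hBoff : ∀ t : ℝ, τ < (t : EReal) → ∀ i j : Fin d, i ≠ j → 0 ≤ B t i j)
    (hBcol : ∀ t : ℝ, τ < (t : EReal) → ∀ j : Fin d, ∑ i, B t i j ≤ 0)
    -- `x` is a solution with positive, bounded entries, bounded away from zero:
    (x : ℝ → Fin d → ℝ)
    (hxsol : ∀ t : ℝ, τ < (t : EReal) → HasDerivAt x ((B t).mulVec (x t) + s t) t)
    (hxbdd : ∃ C : ℝ, ∀ t : ℝ, τ < (t : EReal) → ∀ i : Fin d, x t i ≤ C)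
    (hxlow : ∃ ε : ℝ, 0 < ε ∧ ∀ t : ℝ, τ < (t : EReal) → ∀ i : Fin d, ε ≤ x t i)
    -- the block structure:
    (π : Fin d → Fin m) (hπmono : Monotone π) (hπsurj : Function.Surjective π)
    (htri : ∀ t : ℝ, τ < (t : EReal) → ∀ i j : Fin d, π i < π j → B t i j = 0)
    (δ : ℝ) (hδ : 0 < δ)
    (hoff : ∀ t : ℝ, τ < (t : EReal) → ∀ i j : Fin d, i ≠ j → π i = π j → 0 ≤ B t i j)
    (hrow : ∀ t : ℝ, τ < (t : EReal) → ∀ i : Fin d,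
      ∑ j ∈ Finset.univ.filter (fun j => π j = π i), B t i j ≤ -δ)
    -- input at least `δ` into the first block:
    (hsδ : ∀ i : Fin d, (π i : ℕ) = 0 → ∀ t : ℝ, τ < (t : EReal) → δ ≤ s t i)
    -- every pool in a later block is fed from an earlier block at rate at least `δ`:
    (hfeed : ∀ i : Fin d, (π i : ℕ) ≠ 0 →
      ∃ j : Fin d, π j < π i ∧ ∀ t : ℝ, τ < (t : EReal) → δ ≤ B t i j) :
    ∃ K δbar : ℝ, 1 ≤ K ∧ 0 < δbar ∧ δbar < δ ∧
      ∀ a : ℝ → (Fin d → ℝ),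
        (∀ t : ℝ, τ < (t : EReal) →
          HasDerivAt a ((meanAgeMatrix B s x t).mulVec (a t)) t) →
        ∀ t₀ t : ℝ, τ < (t₀ : EReal) → t₀ ≤ t →
          ‖a t‖ ≤ K * Real.exp (-δbar * (t - t₀)) * ‖a t₀‖ := by
  classical
  obtain ⟨t₁, ht₁, -⟩ := EReal.lt_iff_exists_real_btwn.1 (lt_top_iff_ne_top.2 hτ)
  rcases Nat.eq_zero_or_pos d with hd0 | hd0
  · subst hd0
    refine ⟨1, δ / 2, le_rfl, by positivity, by linarith, ?_⟩
    intro a _ t₀ t _ _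
    have hz : ∀ z : ℝ, ‖a z‖ = 0 := fun z => by
      rw [show a z = 0 from funext fun i => i.elim0, norm_zero]
    rw [hz t, hz t₀, mul_zero]
  obtain ⟨Cx, hCx⟩ := hxbdd
  obtain ⟨ε, hε, hεx⟩ := hxlow
  have hCpos : 0 < Cx :=
    lt_of_lt_of_le (lt_of_lt_of_le hε (hεx t₁ ht₁ ⟨0, hd0⟩)) (hCx t₁ ht₁ ⟨0, hd0⟩)
  set w : Fin d → ℝ := fun i => 2 ^ (π i : ℕ) with hwdef
  have hw1 : ∀ i, (1 : ℝ) ≤ w i := fun i => one_le_pow₀ one_le_two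
  have hwpos : ∀ i, (0 : ℝ) < w i := fun i => lt_of_lt_of_le zero_lt_one (hw1 i)
  have hwK : ∀ i, w i ≤ 2 ^ m := fun i => pow_le_pow_right₀ one_le_two (π i).2.le
  have hwmono : ∀ i j : Fin d, π j ≤ π i → w j ≤ w i := fun i j h =>
    pow_le_pow_right₀ one_le_two h
  have hwhalf : ∀ i j : Fin d, π j < π i → w j ≤ w i / 2 := by
    intro i j h
    have h' : (π j : ℕ) + 1 ≤ (π i : ℕ) := h
    have : w j * 2 ≤ w i := by
      rw [hwdef]
      simp only
      rw [← pow_succ]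
      exact pow_le_pow_right₀ one_le_two h'
    linarith
  set δbar : ℝ := min (min (δ / Cx) (δ * ε / (2 * Cx))) (δ / 2) with hδbardef
  have hδbarpos : 0 < δbar := lt_min (lt_min (by positivity) (by positivity)) (by positivity)
  have hδbarlt : δbar < δ := lt_of_le_of_lt (min_le_right _ _) (by linarith)
  have hδb1 : δbar * Cx ≤ δ := by
    have h : δbar ≤ δ / Cx := le_trans (min_le_left _ _) (min_le_left _ _)
    calc δbar * Cx ≤ δ / Cx * Cx := mul_le_mul_of_nonneg_right h hCpos.le
      _ = δ := div_mul_cancel₀ _ (ne_of_gt hCpos)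
  have hδb2 : δbar * Cx ≤ δ * ε / 2 := by
    have h : δbar ≤ δ * ε / (2 * Cx) := le_trans (min_le_left _ _) (min_le_right _ _)
    calc δbar * Cx ≤ δ * ε / (2 * Cx) * Cx := mul_le_mul_of_nonneg_right h hCpos.le
      _ = δ * ε / 2 := by field_simp
  -- basic facts about A = meanAgeMatrix
  have hAoffv : ∀ t : ℝ, ∀ i j : Fin d, i ≠ j →
      meanAgeMatrix B s x t i j = B t i j * x t j / x t i := by
    intro t i j hij
    simp [meanAgeMatrix, hij]
  have hAdiag : ∀ t : ℝ, ∀ i : Fin d,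
      meanAgeMatrix B s x t i i
        = (-s t i - ∑ k ∈ Finset.univ.erase i, B t i k * x t k) / x t i := by
    intro t i
    simp [meanAgeMatrix]
  have hApos : ∀ t : ℝ, τ < (t : EReal) → ∀ i j : Fin d, i ≠ j →
      0 ≤ meanAgeMatrix B s x t i j := by
    intro t ht i j hij
    rw [hAoffv t i j hij]
    have h1 := hBoff t ht i j hij
    have h2 : (0:ℝ) < x t j := lt_of_lt_of_le hε (hεx t ht j)
    have h3 : (0:ℝ) < x t i := lt_of_lt_of_le hε (hεx t ht i)
    positivity
  -- the weighted row inequality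
  have hrowkey : ∀ t : ℝ, τ < (t : EReal) → ∀ i : Fin d,
      meanAgeMatrix B s x t i i * w i
        + ∑ j ∈ Finset.univ.erase i, meanAgeMatrix B s x t i j * w j ≤ -(δbar * w i) := by
    intro t ht i
    have hxi : (0:ℝ) < x t i := lt_of_lt_of_le hε (hεx t ht i)
    have hXC : x t i ≤ Cx := hCx t ht i
    have hLHS : meanAgeMatrix B s x t i i * w i
        + ∑ j ∈ Finset.univ.erase i, meanAgeMatrix B s x t i j * w j
        = ((-s t i - ∑ k ∈ Finset.univ.erase i, B t i k * x t k) * w i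
            + ∑ j ∈ Finset.univ.erase i, B t i j * x t j * w j) / x t i := by
      rw [hAdiag t i, div_mul_eq_mul_div, add_div]
      congr 1
      rw [Finset.sum_div]
      refine Finset.sum_congr rfl fun j hj => ?_
      rw [hAoffv t i j (Finset.mem_erase.1 hj).1.symm, div_mul_eq_mul_div]
    rw [hLHS, div_le_iff₀ hxi]
    set T : ℝ := ∑ j ∈ Finset.univ.erase i, B t i j * x t j * (w j - w i) with hTdef
    have hN : (-s t i - ∑ k ∈ Finset.univ.erase i, B t i k * x t k) * w i
        + ∑ j ∈ Finset.univ.erase i, B t i j * x t j * w j = -(s t i * w i) + T := by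
      rw [hTdef]
      rw [show (∑ j ∈ Finset.univ.erase i, B t i j * x t j * (w j - w i))
          = ∑ j ∈ Finset.univ.erase i, (B t i j * x t j * w j - B t i j * x t j * w i) from
        Finset.sum_congr rfl fun j _ => by ring]
      rw [Finset.sum_sub_distrib, ← Finset.sum_mul]
      ring
    rw [hN]
    by_cases hi0 : (π i : ℕ) = 0
    · have hT0 : T = 0 := by
        refine Finset.sum_eq_zero fun j hj => ?_
        by_cases hpj : π j = π i
        · have : w j = w i := by rw [hwdef]; simp only; rw [hpj]
          rw [this, sub_self, mul_zero]
        · have hle : π i ≤ π j := by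
            rw [Fin.le_def, hi0]; exact Nat.zero_le _
          have hlt : π i < π j := lt_of_le_of_ne hle (fun h => hpj h.symm)
          rw [htri t ht i j hlt, zero_mul, zero_mul]
      rw [hT0]
      have h1 : δ ≤ s t i := hsδ i hi0 t ht
      have h2 : δbar * x t i ≤ δ :=
        le_trans (mul_le_mul_of_nonneg_left hXC hδbarpos.le) hδb1
      nlinarith [mul_le_mul_of_nonneg_right h2 (hwpos i).le,
        mul_le_mul_of_nonneg_right h1 (hwpos i).le]
    · obtain ⟨j₀, hj₀, hfδ⟩ := hfeed i hi0
      have hji : j₀ ≠ i := fun h => absurd hj₀ (by rw [h]; exact lt_irrefl _)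
      have hj₀mem : j₀ ∈ Finset.univ.erase i := Finset.mem_erase.2 ⟨hji, Finset.mem_univ _⟩
      have hterm : ∀ j ∈ Finset.univ.erase i, B t i j * x t j * (w j - w i) ≤ 0 := by
        intro j hj
        by_cases hlt : π i < π j
        · rw [htri t ht i j hlt, zero_mul, zero_mul]
        · have hle : π j ≤ π i := not_lt.1 hlt
          have h1 : 0 ≤ B t i j * x t j :=
            mul_nonneg (hBoff t ht i j (Finset.mem_erase.1 hj).1.symm)
              (le_trans hε.le (hεx t ht j))
          have h2 : w j - w i ≤ 0 := sub_nonpos.2 (hwmono i j hle)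
          exact mul_nonpos_of_nonneg_of_nonpos h1 h2
      have hTj₀ : B t i j₀ * x t j₀ * (w j₀ - w i) ≤ -(δ * ε * w i / 2) := by
        have hb : δ ≤ B t i j₀ := hfδ t ht
        have hx0 : ε ≤ x t j₀ := hεx t ht j₀
        have hwj : w j₀ - w i ≤ -(w i / 2) := by
          have := hwhalf i j₀ hj₀; linarith
        have hbx : δ * ε ≤ B t i j₀ * x t j₀ :=
          mul_le_mul hb hx0 hε.le (le_trans hδ.le hb)
        nlinarith [mul_le_mul_of_nonpos_right hbx (by linarith [hwpos i] : w j₀ - w i ≤ 0),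
          mul_le_mul_of_nonneg_left hwj (mul_nonneg hδ.le hε.le)]
      have hT : T ≤ -(δ * ε * w i / 2) := by
        rw [hTdef, ← Finset.add_sum_erase _ _ hj₀mem]
        have hrest : ∑ j ∈ (Finset.univ.erase i).erase j₀, B t i j * x t j * (w j - w i) ≤ 0 :=
          Finset.sum_nonpos fun j hj => hterm j (Finset.mem_of_mem_erase hj)
        linarith
      have hs0 : 0 ≤ s t i := hsnn t ht i
      have h2 : δbar * x t i ≤ δ * ε / 2 :=
        le_trans (mul_le_mul_of_nonneg_left hXC hδbarpos.le) hδb2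
      nlinarith [mul_le_mul_of_nonneg_right h2 (hwpos i).le, mul_nonneg hs0 (hwpos i).le]
  -- key vector inequality
  have hkey : ∀ t : ℝ, τ < (t : EReal) → ∀ (u : Fin d → ℝ) (V : ℝ), 0 ≤ V →
      (∀ j, |u j| ≤ V) → ∀ k, u k = V →
      ∑ j, meanAgeMatrix B s x t k j * (w j * u j) ≤ -(δbar * V * w k) := by
    intro t ht u V hV hu k huk
    rw [← Finset.add_sum_erase _ (fun j => meanAgeMatrix B s x t k j * (w j * u j))
      (Finset.mem_univ k), huk]
    have hb : ∑ j ∈ Finset.univ.erase k, meanAgeMatrix B s x t k j * (w j * u j)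
        ≤ ∑ j ∈ Finset.univ.erase k, meanAgeMatrix B s x t k j * (w j * V) := by
      refine Finset.sum_le_sum fun j hj => ?_
      have hA := hApos t ht k j (Finset.mem_erase.1 hj).1.symm
      have huj : u j ≤ V := le_trans (le_abs_self _) (hu j)
      exact mul_le_mul_of_nonneg_left (mul_le_mul_of_nonneg_left huj (hwpos j).le) hA
    calc meanAgeMatrix B s x t k k * (w k * V)
          + ∑ j ∈ Finset.univ.erase k, meanAgeMatrix B s x t k j * (w j * u j)
        ≤ meanAgeMatrix B s x t k k * (w k * V)
          + ∑ j ∈ Finset.univ.erase k, meanAgeMatrix B s x t k j * (w j * V) := by linarith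
      _ = (meanAgeMatrix B s x t k k * w k
          + ∑ j ∈ Finset.univ.erase k, meanAgeMatrix B s x t k j * w j) * V := by
          rw [add_mul, Finset.sum_mul]
          congr 1
          · ring
          · exact Finset.sum_congr rfl fun j _ => by ring
      _ ≤ -(δbar * w k) * V := mul_le_mul_of_nonneg_right (hrowkey t ht k) hV
      _ = -(δbar * V * w k) := by ring
  -- conclusion
  refine ⟨2 ^ m, δbar, one_le_pow₀ one_le_two, hδbarpos, hδbarlt, ?_⟩
  intro a ha t₀ t ht₀ ht₀t
  set g : ℝ → Fin d → ℝ := fun z k => a z k / w k with hgdef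
  have hmem : ∀ z : ℝ, t₀ ≤ z → τ < (z : EReal) := fun z hz =>
    lt_of_lt_of_le ht₀ (EReal.coe_le_coe_iff.2 hz)
  have hgd : ∀ z : ℝ, τ < (z : EReal) → ∀ k, HasDerivAt (fun y => g y k)
      ((meanAgeMatrix B s x z).mulVec (a z) k / w k) z := fun z hz k =>
    (hasDerivAt_pi.1 (ha z hz) k).div_const _
  have haz : ∀ z : ℝ, ∀ j, a z j = w j * g z j := fun z j => by
    rw [hgdef]
    have hwj := (hwpos j).ne'
    field_simp
  have hmv : ∀ z : ℝ, (meanAgeMatrix B s x z).mulVec (a z)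
      = fun k => ∑ j, meanAgeMatrix B s x z k j * (w j * g z j) := by
    intro z
    funext k
    rw [Matrix.mulVec, dotProduct]
    exact Finset.sum_congr rfl fun j _ => by rw [haz z j]
  set f : ℝ → ℝ := fun z => ‖g z‖ with hfdef
  have hfc : ContinuousOn f (Set.Icc t₀ t) := by
    intro z hz
    have hz' := hmem z hz.1
    exact ((continuousAt_pi.2 fun k => (hgd z hz' k).continuousAt).norm).continuousWithinAt
  have hlim : ∀ z ∈ Set.Ico t₀ t, ∀ r, -δbar * f z < r →
      ∃ᶠ y in nhdsWithin z (Set.Ioi z), (y - z)⁻¹ * (f y - f z) < r := by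
    intro z hz r hr
    have hz' : τ < (z : EReal) := hmem z hz.1
    have hF0 : 0 ≤ f z := norm_nonneg _
    set r' : ℝ := (-δbar * f z + r) / 2 with hr'def
    have hr'1 : -δbar * f z < r' := by rw [hr'def]; linarith
    have hr'2 : r' < r := by rw [hr'def]; linarith
    have habs : ∀ j, |g z j| ≤ f z := fun j => by
      have := norm_le_pi_norm (g z) j
      rwa [Real.norm_eq_abs] at this
    have hcomp : ∀ k : Fin d,
        (∀ᶠ y in nhdsWithin z (Set.Ioi z), g y k ≤ f z + r' * (y - z)) ∧
        (∀ᶠ y in nhdsWithin z (Set.Ioi z), -g y k ≤ f z + r' * (y - z)) := by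
      intro k
      have hDk := hgd z hz' k
      constructor
      · by_cases hk : g z k = f z
        · have hkk := hkey z hz' (g z) (f z) hF0 habs k hk
          have hD : (meanAgeMatrix B s x z).mulVec (a z) k / w k ≤ -(δbar * f z) := by
            rw [div_le_iff₀ (hwpos k), hmv z]
            calc ∑ j, meanAgeMatrix B s x z k j * (w j * g z j)
                ≤ -(δbar * f z * w k) := hkk
              _ = -(δbar * f z) * w k := by ring
          have hstep := dini_step (r := r') hDk (lt_of_le_of_lt hD (by linarith))
          filter_upwards [hstep] with y hy
          rw [hk] at hy
          exact hy
        · have hlt : g z k < f z :=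
            lt_of_le_of_ne (le_trans (le_abs_self _) (habs k)) hk
          exact cont_step hDk.continuousAt hlt r'
      · by_cases hk : -g z k = f z
        · have hkk := hkey z hz' (fun j => -g z j) (f z) hF0
            (fun j => by rw [abs_neg]; exact habs j) k hk
          have hD : -((meanAgeMatrix B s x z).mulVec (a z) k / w k) ≤ -(δbar * f z) := by
            rw [← neg_div, div_le_iff₀ (hwpos k), hmv z]
            calc -(∑ j, meanAgeMatrix B s x z k j * (w j * g z j))
                = ∑ j, meanAgeMatrix B s x z k j * (w j * -g z j) := by
                  rw [← Finset.sum_neg_distrib]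
                  exact Finset.sum_congr rfl fun j _ => by ring
              _ ≤ -(δbar * f z * w k) := hkk
              _ = -(δbar * f z) * w k := by ring
          have hstep := dini_step (r := r') hDk.neg (lt_of_le_of_lt hD (by linarith))
          filter_upwards [hstep] with y hy
          simp only [Pi.neg_apply] at hy
          rw [hk] at hy
          exact hy
        · have hlt : -g z k < f z :=
            lt_of_le_of_ne (le_trans (neg_le_abs _) (habs k)) hk
          exact cont_step hDk.continuousAt.neg hlt r'
    have hall : ∀ᶠ y in nhdsWithin z (Set.Ioi z), ∀ k, |g y k| ≤ f z + r' * (y - z) := by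
      rw [Filter.eventually_all]
      intro k
      filter_upwards [(hcomp k).1, (hcomp k).2] with y h1 h2
      exact abs_le.2 ⟨by linarith, h1⟩
    have hsmall : ∀ᶠ y in nhdsWithin z (Set.Ioi z), y - z < 1 / δbar := by
      have ht : Filter.Tendsto (fun y : ℝ => y - z) (nhds z) (nhds 0) := by
        simpa using (continuous_sub_right z).tendsto z
      exact Filter.Eventually.filter_mono
        (nhdsWithin_le_nhds : nhdsWithin z (Set.Ioi z) ≤ nhds z)
        (ht.eventually_lt_const (by positivity))
    apply Filter.Eventually.frequently
    filter_upwards [hall, hsmall, self_mem_nhdsWithin] with y hy hysmall hyz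
    have hyz' : 0 < y - z := sub_pos.2 hyz
    have h1 : (y - z) * δbar < 1 := (lt_div_iff₀ hδbarpos).1 hysmall
    have hbnn : 0 ≤ f z + r' * (y - z) := by
      nlinarith [mul_le_mul_of_nonneg_right hr'1.le hyz'.le,
        mul_nonneg hF0 (by linarith : (0:ℝ) ≤ 1 - (y - z) * δbar)]
    have hfy : f y ≤ f z + r' * (y - z) := by
      refine (pi_norm_le_iff_of_nonneg hbnn).2 fun k => ?_
      rw [Real.norm_eq_abs]
      exact hy k
    rw [inv_mul_eq_div, div_lt_iff₀ hyz']
    nlinarith [mul_lt_mul_of_pos_right hr'2 hyz']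
  have H := le_gronwallBound_of_liminf_deriv_right_le hfc hlim le_rfl
    (fun z _ => le_of_eq (add_zero (-δbar * f z)).symm) t (Set.right_mem_Icc.2 ht₀t)
  rw [gronwallBound_ε0] at H
  have h1 : f t₀ ≤ ‖a t₀‖ := by
    refine (pi_norm_le_iff_of_nonneg (norm_nonneg _)).2 fun k => ?_
    have hgk : g t₀ k = a t₀ k / w k := rfl
    rw [Real.norm_eq_abs, hgk, abs_div, abs_of_pos (hwpos k)]
    calc |a t₀ k| / w k ≤ |a t₀ k| := div_le_self (abs_nonneg _) (hw1 k)
      _ ≤ ‖a t₀‖ := by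
          have := norm_le_pi_norm (a t₀) k
          rwa [Real.norm_eq_abs] at this
  have h2 : ‖a t‖ ≤ 2 ^ m * f t := by
    refine (pi_norm_le_iff_of_nonneg (by positivity)).2 fun k => ?_
    rw [Real.norm_eq_abs, haz t k, abs_mul, abs_of_pos (hwpos k)]
    have hgk : |g t k| ≤ f t := by
      have := norm_le_pi_norm (g t) k
      rwa [Real.norm_eq_abs] at this
    exact mul_le_mul (hwK k) hgk (abs_nonneg _) (by positivity)
  calc ‖a t‖ ≤ 2 ^ m * f t := h2
    _ ≤ 2 ^ m * (f t₀ * Real.exp (-δbar * (t - t₀))) :=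
        mul_le_mul_of_nonneg_left H (by positivity)
    _ ≤ 2 ^ m * (‖a t₀‖ * Real.exp (-δbar * (t - t₀))) :=
        mul_le_mul_of_nonneg_left
          (mul_le_mul_of_nonneg_right h1 (Real.exp_nonneg _)) (by positivity)
    _ = 2 ^ m * Real.exp (-δbar * (t - t₀)) * ‖a t₀‖ := by ring
end

section
/- Let B ∈ ℝ^{d×d} be an invertible matrix with entries b_{ij}, let 0 ≠ s ∈ ℝ^d with s ≥ 0 componentwise and Σ_i s_i > 0, and suppose x* := −B⁻¹s has all entries positive. Let X* := diag(x*₁,…,x*_d), ā* := −(X*)⁻¹ B⁻¹ X* (1,…,1)ᵀ, and β := s / (Σ_{i=1}^{d} s_i). If Σ_{i=1}^{d} x*_i Σ_{j=1}^{d} b_{ji} ≠ 0, then the transit time of the equilibrium solution, R := (Σ_{i=1}^{d} ā*_i x*_i Σ_{j=1}^{d} b_{ji}) / (Σ_{i=1}^{d} x*_i Σ_{j=1}^{d} b_{ji}), satisfies R = −(1,…,1) B⁻¹ β. -/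
open Matrix


/-- autonomous transit time formula.
For an invertible `B`, `0 ≠ s ≥ 0` with `∑ sᵢ > 0`, positive equilibrium `x* = −B⁻¹s`,
equilibrium mean ages `ā* = −(X*)⁻¹B⁻¹X*(1,…,1)ᵀ` and input fractions `β = s/∑ sᵢ`, if the
denominator `∑ᵢ x*ᵢ ∑ⱼ bⱼᵢ` is nonzero, then the transit time
`R = (∑ᵢ ā*ᵢ x*ᵢ ∑ⱼ bⱼᵢ)/(∑ᵢ x*ᵢ ∑ⱼ bⱼᵢ)` equals `−(1,…,1)B⁻¹β`. -/
theorem stmt_11 (d : ℕ) (B : Matrix (Fin d) (Fin d) ℝ) (hB : IsUnit B.det)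
    (s : Fin d → ℝ) (hs : ∀ i, 0 ≤ s i) (hsne : s ≠ 0)
    (hssum : 0 < ∑ i, s i)
    (xstar : Fin d → ℝ) (hxstar : xstar = -(B⁻¹.mulVec s))
    (hxpos : ∀ i, 0 < xstar i)
    (Xstar : Matrix (Fin d) (Fin d) ℝ) (hXstar : Xstar = Matrix.diagonal xstar)
    (abarstar : Fin d → ℝ)
    (habar : abarstar = -((Xstar⁻¹ * B⁻¹ * Xstar).mulVec 1))
    (β : Fin d → ℝ) (hβ : ∀ i, β i = s i / ∑ j, s j)
    (hden : (∑ i, xstar i * ∑ j, B j i) ≠ 0) :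
    (∑ i, abarstar i * xstar i * ∑ j, B j i) / (∑ i, xstar i * ∑ j, B j i)
      = -∑ i, B⁻¹.mulVec β i := by
  have hσ : (∑ i, s i) ≠ 0 := ne_of_gt hssum
  have hBB : B * B⁻¹ = 1 := Matrix.mul_nonsing_inv B hB
  -- key identity: ∑ᵢ (B⁻¹ v)ᵢ (∑ⱼ bⱼᵢ) = ∑ⱼ vⱼ
  have key : ∀ (v : Fin d → ℝ),
      ∑ i, (B⁻¹.mulVec v) i * (∑ j, B j i) = ∑ j, v j := by
    intro v
    have h1 : (∑ i, (B⁻¹.mulVec v) i * (∑ j, B j i))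
        = (B⁻¹.mulVec v) ⬝ᵥ (Bᵀ.mulVec 1) := by
      simp [dotProduct, Matrix.mulVec, Matrix.transpose_apply]
    rw [h1, Matrix.dotProduct_mulVec, Matrix.vecMul_transpose,
      Matrix.mulVec_mulVec, hBB, Matrix.one_mulVec]
    simp [dotProduct]
  -- entries of Xstar⁻¹ B⁻¹ Xstar
  have hxinv : ∀ i, xstar i ≠ 0 := fun i => ne_of_gt (hxpos i)
  have hXinv : Xstar⁻¹ = Matrix.diagonal fun i => (xstar i)⁻¹ := by
    rw [hXstar]
    apply Matrix.inv_eq_right_inv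
    rw [Matrix.diagonal_mul_diagonal]
    have : (fun i => xstar i * (xstar i)⁻¹) = fun _ : Fin d => (1 : ℝ) := by
      funext i; exact mul_inv_cancel₀ (hxinv i)
    rw [this, Matrix.diagonal_one]
  have hent : ∀ i k, (Xstar⁻¹ * B⁻¹ * Xstar) i k
      = (xstar i)⁻¹ * B⁻¹ i k * xstar k := by
    intro i k
    rw [hXinv, hXstar, Matrix.mul_diagonal, Matrix.diagonal_mul]
  have habarx : ∀ i, abarstar i * xstar i = -(B⁻¹.mulVec xstar) i := by
    intro i
    have hR : (B⁻¹.mulVec xstar) i = ∑ k, B⁻¹ i k * xstar k := rfl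
    rw [habar, hR]
    simp only [Pi.neg_apply, Matrix.mulVec, dotProduct, Pi.one_apply, mul_one]
    rw [Finset.sum_congr rfl fun k _ => hent i k]
    have hmul : (∑ k, (xstar i)⁻¹ * B⁻¹ i k * xstar k)
        = (xstar i)⁻¹ * ∑ k, B⁻¹ i k * xstar k := by
      rw [Finset.mul_sum]
      exact Finset.sum_congr rfl fun k _ => by ring
    rw [hmul, neg_mul, mul_comm ((xstar i)⁻¹) _, mul_assoc,
      inv_mul_cancel₀ (hxinv i), mul_one]
  -- numerator
  have hnum : (∑ i, abarstar i * xstar i * ∑ j, B j i) = -∑ j, xstar j := by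
    calc ∑ i, abarstar i * xstar i * ∑ j, B j i
        = ∑ i, (-(B⁻¹.mulVec xstar) i) * ∑ j, B j i :=
          Finset.sum_congr rfl fun i _ => by rw [habarx i]
      _ = -∑ i, (B⁻¹.mulVec xstar) i * ∑ j, B j i := by
          rw [← Finset.sum_neg_distrib]
          exact Finset.sum_congr rfl fun i _ => by ring
      _ = -∑ j, xstar j := by rw [key]
  -- denominator
  have hxe : xstar = B⁻¹.mulVec (-s) := by
    rw [hxstar]
    funext i
    simp [Matrix.mulVec, dotProduct, Finset.sum_neg_distrib]
  have hden' : (∑ i, xstar i * ∑ j, B j i) = -∑ j, s j := by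
    calc ∑ i, xstar i * ∑ j, B j i
        = ∑ i, (B⁻¹.mulVec (-s)) i * ∑ j, B j i := by rw [← hxe]
      _ = ∑ j, (-s) j := key _
      _ = -∑ j, s j := by simp
  -- RHS
  have hrhs : -∑ i, B⁻¹.mulVec β i = (∑ j, xstar j) / (∑ j, s j) := by
    have hb : ∀ i, B⁻¹.mulVec β i = -xstar i / (∑ j, s j) := by
      intro i
      rw [hxstar]
      simp only [Matrix.mulVec, dotProduct, Pi.neg_apply, neg_neg]
      rw [Finset.sum_div]
      exact Finset.sum_congr rfl fun k _ => by rw [hβ k]; ring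
    rw [Finset.sum_congr rfl fun i _ => hb i, ← Finset.sum_div,
      Finset.sum_neg_distrib]
    field_simp
  rw [hnum, hden', hrhs, neg_div_neg_eq]
end
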